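/- arXiv:1407.6584 — 6 statements merged into one kernel-verified Lean document; each statement's English description precedes it below -/
import Mathlib

section
/- For all integers 1 ≤ l ≤ n, with b(n,l) := e^{−n} Σ_{p=0}^∞ (n^p/p!) · C(min(n,p), l) / C(n, l) (where C(a,b) denotes the binomial coefficient) and with the falling factorial n_{[l]} := n(n−1)···(n−l+1), the following exact identity holds: 1 − b(n,l) = e^{−n} Σ_{p=n−l+1}^{n} n^p/p! + (1 − n^l/n_{[l]}) · e^{−n} Σ_{p=0}^{n−l} n^p/p!. -/
open Finset

/-- **Exact de-Poissonization identity.** For integers `1 ≤ l ≤ n`, with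
`b(n,l) = e^{-n} ∑_{p} (n^p/p!) C(min(n,p),l)/C(n,l)` and the falling factorial
`n_[l] = n (n-1) ⋯ (n-l+1)`, one has
`1 - b(n,l) = e^{-n} ∑_{p=n-l+1}^n n^p/p! + (1 - n^l/n_[l]) e^{-n} ∑_{p=0}^{n-l} n^p/p!`. -/
theorem one_sub_b_eq (n l : ℕ) (hl : 1 ≤ l) (hln : l ≤ n) :
    1 - Real.exp (-n) * ∑' p : ℕ, (n : ℝ) ^ p / p.factorial *
        ((Nat.choose (min n p) l : ℝ) / (Nat.choose n l : ℝ))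
    = Real.exp (-n) * ∑ p ∈ Finset.Icc (n - l + 1) n, (n : ℝ) ^ p / p.factorial
      + (1 - (n : ℝ) ^ l / (Nat.descFactorial n l : ℝ)) *
        (Real.exp (-n) * ∑ p ∈ Finset.range (n - l + 1), (n : ℝ) ^ p / p.factorial) := by
  set E := Real.exp (-(n:ℝ)) with hE
  set A : ℝ := (n : ℝ) ^ l / (Nat.descFactorial n l : ℝ) with hA
  set f : ℕ → ℝ := fun p => (n : ℝ) ^ p / p.factorial with hf
  set g : ℕ → ℝ := fun p => (n : ℝ) ^ p / p.factorial *
      ((Nat.choose (min n p) l : ℝ) / (Nat.choose n l : ℝ)) with hg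
  have hcpos : (0:ℝ) < (Nat.choose n l : ℝ) := by
    exact_mod_cast Nat.choose_pos hln
  have hdpos : (0:ℝ) < (Nat.descFactorial n l : ℝ) := by
    have : n.descFactorial l ≠ 0 := by
      simp only [ne_eq, Nat.descFactorial_eq_zero_iff_lt]; omega
    exact_mod_cast Nat.pos_of_ne_zero this
  have hfnn : ∀ p, 0 ≤ f p := fun p => by positivity
  have hsf : Summable f := Real.summable_pow_div_factorial (n : ℝ)
  have hgle : ∀ p, g p ≤ f p := by
    intro p
    have h1 : (Nat.choose (min n p) l : ℝ) ≤ (Nat.choose n l : ℝ) := by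
      exact_mod_cast Nat.choose_le_choose l (min_le_left n p)
    have : (Nat.choose (min n p) l : ℝ) / (Nat.choose n l : ℝ) ≤ 1 :=
      (div_le_one hcpos).2 h1
    calc g p ≤ f p * 1 := by
          apply mul_le_mul_of_nonneg_left this (hfnn p)
      _ = f p := mul_one _
  have hgnn : ∀ p, 0 ≤ g p := fun p => by positivity
  have hsg : Summable g := Summable.of_nonneg_of_le hgnn hgle hsf
  have htsum : ∑' p, f p = Real.exp (n : ℝ) := by
    rw [Real.exp_eq_exp_ℝ, NormedSpace.exp_eq_tsum_div]
  have hone : 1 = E * ∑' p, f p := by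
    rw [htsum, hE, ← Real.exp_add]; simp
  have hL : 1 - E * ∑' p, g p = E * ((∑' p, f p) - ∑' p, g p) := by
    rw [mul_sub, ← hone]
  rw [hL, ← Summable.tsum_sub hsf hsg]
  -- the tsum is a finite sum
  have hvanish : ∀ p ∉ Finset.range n, f p - g p = 0 := by
    intro p hp
    have hnp : n ≤ p := by simpa using hp
    have : min n p = n := min_eq_left hnp
    simp only [hg, hf, this]
    rw [div_self (ne_of_gt hcpos), mul_one, sub_self]
  rw [tsum_eq_sum hvanish]
  -- evaluate the finite sum
  have hmain : ∑ p ∈ Finset.range n, (f p - g p)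
      = ∑ p ∈ Finset.range (n+1), f p - A * ∑ p ∈ Finset.range (n - l + 1), f p := by
    rw [Finset.sum_sub_distrib]
    have hsg' : ∑ p ∈ Finset.range n, g p = A * ∑ p ∈ Finset.range (n - l), f p := by
      have hmin : ∀ p ∈ Finset.range n, g p
          = (n : ℝ) ^ p / p.factorial * ((Nat.choose p l : ℝ) / (Nat.choose n l : ℝ)) := by
        intro p hp
        have : min n p = p := min_eq_right (le_of_lt (Finset.mem_range.1 hp))
        simp [hg, this]
      rw [Finset.sum_congr rfl hmin]
      conv_lhs => rw [Finset.range_eq_Ico]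
      rw [ ← Finset.sum_Ico_consecutive _ (Nat.zero_le l) hln]
      have hzero : ∑ p ∈ Finset.Ico 0 l, (n : ℝ) ^ p / p.factorial *
          ((Nat.choose p l : ℝ) / (Nat.choose n l : ℝ)) = 0 := by
        apply Finset.sum_eq_zero
        intro p hp
        have : p < l := (Finset.mem_Ico.1 hp).2
        simp [Nat.choose_eq_zero_of_lt this]
      rw [hzero, zero_add, Finset.sum_Ico_eq_sum_range]
      rw [Finset.mul_sum]
      apply Finset.sum_congr rfl
      intro q _
      -- key arithmetic identity
      have hd : (Nat.descFactorial n l : ℝ) = (Nat.factorial l : ℝ) * (Nat.choose n l : ℝ) := by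
        exact_mod_cast Nat.descFactorial_eq_factorial_mul_choose n l
      have hc : ((l + q).factorial : ℝ)
          = (Nat.choose (l + q) l : ℝ) * (Nat.factorial l : ℝ) * (Nat.factorial q : ℝ) := by
        have := Nat.choose_mul_factorial_mul_factorial (Nat.le_add_right l q)
        have h2 : l + q - l = q := by omega
        rw [h2] at this
        exact_mod_cast this.symm
      have hlf : (0:ℝ) < (Nat.factorial l : ℝ) := by exact_mod_cast Nat.factorial_pos l
      have hqf : (0:ℝ) < (Nat.factorial q : ℝ) := by exact_mod_cast Nat.factorial_pos q
      have hcq : (0:ℝ) < (Nat.choose (l+q) l : ℝ) := by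
        exact_mod_cast Nat.choose_pos (Nat.le_add_right l q)
      simp only [hf]
      rw [hA, hd, hc, pow_add]
      field_simp
    rw [hsg']
    rw [Finset.sum_range_succ, Finset.sum_range_succ]
    have hkey : f n = A * f (n - l) := by
      have hd : (Nat.descFactorial n l : ℝ) = (Nat.factorial l : ℝ) * (Nat.choose n l : ℝ) := by
        exact_mod_cast Nat.descFactorial_eq_factorial_mul_choose n l
      have hfac : (Nat.factorial n : ℝ)
          = (Nat.choose n l : ℝ) * (Nat.factorial l : ℝ) * (Nat.factorial (n - l) : ℝ) := by
        exact_mod_cast (Nat.choose_mul_factorial_mul_factorial hln).symm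
      have hpow : (n:ℝ) ^ n = (n:ℝ) ^ l * (n:ℝ) ^ (n - l) := by
        rw [← pow_add]; congr 1; omega
      have hlf : (0:ℝ) < (Nat.factorial l : ℝ) := by exact_mod_cast Nat.factorial_pos l
      have hnlf : (0:ℝ) < (Nat.factorial (n-l) : ℝ) := by exact_mod_cast Nat.factorial_pos (n-l)
      simp only [hf]
      rw [hA, div_mul_div_comm, ← hpow, hfac, hd]
      ring
    rw [hkey]
    ring
  rw [hmain]
  -- final rearrangement
  have hsplit : ∑ p ∈ Finset.range (n+1), f p
      = ∑ p ∈ Finset.range (n - l + 1), f p + ∑ p ∈ Finset.Icc (n - l + 1) n, f p := by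
    rw [Finset.range_eq_Ico, ← Finset.Ico_add_one_right_eq_Icc]
    rw [Finset.range_eq_Ico]
    exact (Finset.sum_Ico_consecutive f (Nat.zero_le (n - l + 1)) (by omega : n - l + 1 ≤ n + 1)).symm
  rw [hsplit]
  ring
end

section
/- Fix an integer l ≥ 1 and for n ≥ l set b(n,l) := e^{−n} Σ_{p=0}^∞ (n^p/p!) · C(min(n,p), l) / C(n, l), where C(a,b) denotes the binomial coefficient. Then 1 − b(n,l) = O(n^{−1/2}) as n → ∞; that is, there exist C > 0 and n_0 ≥ l such that |1 − b(n,l)| ≤ C n^{−1/2} for all n ≥ n_0. -/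
open Finset

private lemma choose_sum_aux (l p : ℕ) (hl : 1 ≤ l) (m : ℕ) :
    Nat.choose (p + m) l = Nat.choose p l + ∑ i ∈ range m, Nat.choose (p + i) (l - 1) := by
  induction m with
  | zero => simp
  | succ m ih =>
    obtain ⟨k, rfl⟩ : ∃ k, l = k + 1 := ⟨l - 1, by omega⟩
    simp only [Nat.add_sub_cancel] at ih ⊢
    rw [Finset.sum_range_succ, show p + (m + 1) = (p + m) + 1 from rfl,
      Nat.choose_succ_succ', ih]
    omega

private lemma choose_le_aux (l n p : ℕ) (hl : 1 ≤ l) (hp : p ≤ n) :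
    Nat.choose n l ≤ Nat.choose p l + (n - p) * Nat.choose (n - 1) (l - 1) := by
  obtain ⟨m, rfl⟩ := Nat.exists_eq_add_of_le hp
  rw [choose_sum_aux l p hl m]
  have hsum : ∑ i ∈ range m, Nat.choose (p + i) (l - 1)
      ≤ m * Nat.choose (p + m - 1) (l - 1) := by
    calc ∑ i ∈ range m, Nat.choose (p + i) (l - 1)
        ≤ ∑ _i ∈ range m, Nat.choose (p + m - 1) (l - 1) := by
          apply Finset.sum_le_sum
          intro i hi
          exact Nat.choose_le_choose _ (by have := Finset.mem_range.1 hi; omega)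
      _ = m * Nat.choose (p + m - 1) (l - 1) := by
          rw [Finset.sum_const, Finset.card_range, smul_eq_mul]
  simp only [Nat.add_sub_cancel_left]
  omega

private lemma tele_sum (c : ℝ) (m : ℕ) :
    ∑ p ∈ Finset.range m, ((c : ℝ) - p) * c ^ p / p.factorial
      = m * c ^ m / m.factorial := by
  induction m with
  | zero => simp
  | succ m ih =>
    rw [Finset.sum_range_succ, ih]
    have hm : (0:ℝ) < m.factorial := by exact_mod_cast m.factorial_pos
    rw [Nat.factorial_succ]
    push_cast
    field_simp
    ring

private lemma stirling_bound (n : ℕ) (hn : 1 ≤ n) :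
    Real.exp (-n) * (n : ℝ) ^ n / n.factorial ≤ 1 / Real.sqrt n := by
  have hπ : (1 : ℝ) ≤ Real.sqrt Real.pi := by
    rw [show (1:ℝ) = Real.sqrt 1 by simp]
    exact Real.sqrt_le_sqrt (by linarith [Real.pi_gt_three])
  have hst : Real.sqrt Real.pi ≤ Stirling.stirlingSeq n := by
    refine le_of_tendsto Stirling.tendsto_stirlingSeq_sqrt_pi ?_
    rw [Filter.eventually_atTop]
    refine ⟨n, fun k hk => ?_⟩
    have h1 : k - 1 + 1 = k := by omega
    have h2 : n - 1 + 1 = n := by omega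
    have := Stirling.stirlingSeq'_antitone (show n - 1 ≤ k - 1 by omega)
    simpa [Function.comp, h1, h2] using this
  have h1 : (1 : ℝ) ≤ Stirling.stirlingSeq n := le_trans hπ hst
  have hnn : (0:ℝ) < n := by exact_mod_cast hn
  have hden : (0:ℝ) < Real.sqrt (2 * n) * ((n : ℝ) / Real.exp 1) ^ n := by
    positivity
  rw [Stirling.stirlingSeq, le_div_iff₀ hden, one_mul] at h1
  have hfac : (0:ℝ) < n.factorial := by exact_mod_cast n.factorial_pos
  have hpow : ((n : ℝ) / Real.exp 1) ^ n = Real.exp (-n) * (n:ℝ) ^ n := by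
    have he : Real.exp 1 ^ n = Real.exp n := by rw [← Real.exp_nat_mul, mul_one]
    rw [div_pow, he, Real.exp_neg, div_eq_mul_inv, mul_comm]
  have hsq : Real.sqrt n ≤ Real.sqrt (2 * n) := Real.sqrt_le_sqrt (by linarith)
  have hsqpos : (0:ℝ) < Real.sqrt n := Real.sqrt_pos.2 hnn
  have key : Real.sqrt n * (Real.exp (-n) * (n:ℝ) ^ n) ≤ n.factorial := by
    calc Real.sqrt n * (Real.exp (-n) * (n:ℝ) ^ n)
        ≤ Real.sqrt (2 * n) * (Real.exp (-n) * (n:ℝ) ^ n) := by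
          apply mul_le_mul_of_nonneg_right hsq
          positivity
      _ = Real.sqrt (2 * n) * ((n : ℝ) / Real.exp 1) ^ n := by rw [hpow]
      _ ≤ n.factorial := h1
  rw [div_le_div_iff₀ hfac hsqpos, one_mul, mul_comm]
  exact key

/-- **Rate of convergence of `b(n,l)` to 1.** For a fixed `l ≥ 1`, with
`b(n,l) = e^{-n} ∑_{p} (n^p/p!) C(min(n,p),l)/C(n,l)`, one has
`1 - b(n,l) = O(n^{-1/2})` as `n → ∞`. -/
theorem one_sub_b_isBigO (l : ℕ) (hl : 1 ≤ l) :
    ∃ C > (0 : ℝ), ∃ n₀ : ℕ, l ≤ n₀ ∧ ∀ n ≥ n₀,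
      |1 - Real.exp (-n) * ∑' p : ℕ, (n : ℝ) ^ p / p.factorial *
          ((Nat.choose (min n p) l : ℝ) / (Nat.choose n l : ℝ))|
        ≤ C * (n : ℝ) ^ (-(1 : ℝ) / 2) := by
  refine ⟨l, by exact_mod_cast hl, l, le_refl l, ?_⟩
  intro n hn
  have hn1 : 1 ≤ n := le_trans hl hn
  have hnn : (0:ℝ) < n := by exact_mod_cast hn1
  have hcn : (0:ℝ) < Nat.choose n l := by exact_mod_cast Nat.choose_pos hn
  set f : ℕ → ℝ := fun p => (n : ℝ) ^ p / p.factorial with hf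
  set r : ℕ → ℝ := fun p => (Nat.choose (min n p) l : ℝ) / (Nat.choose n l : ℝ) with hr
  have hf0 : ∀ p, 0 ≤ f p := fun p => by positivity
  have hr0 : ∀ p, 0 ≤ r p := fun p => by positivity
  have hr1 : ∀ p, r p ≤ 1 := by
    intro p
    rw [hr, div_le_one hcn]
    exact_mod_cast Nat.choose_le_choose l (min_le_left n p)
  have hfs : Summable f := Real.summable_pow_div_factorial n
  have hgs : Summable (fun p => f p * r p) := by
    apply Summable.of_nonneg_of_le (fun p => mul_nonneg (hf0 p) (hr0 p)) _ hfs
    intro p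
    calc f p * r p ≤ f p * 1 := mul_le_mul_of_nonneg_left (hr1 p) (hf0 p)
      _ = f p := mul_one _
  have hexp : Real.exp n = ∑' p, f p := by
    rw [Real.exp_eq_exp_ℝ, NormedSpace.exp_eq_tsum_div]
  have hrn : ∀ p, n ≤ p → r p = 1 := by
    intro p hp
    rw [hr]
    simp only [min_eq_left hp]
    exact div_self hcn.ne'
  -- rewrite 1 - b as exp(-n) * finite sum
  have hone : (1:ℝ) = Real.exp (-n) * ∑' p, f p := by
    rw [← hexp, Real.exp_neg, inv_mul_cancel₀ (Real.exp_pos _).ne']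
  have hsplit : 1 - Real.exp (-n) * ∑' p, f p * r p
      = Real.exp (-n) * ∑' p, f p * (1 - r p) := by
    nth_rewrite 1 [hone]
    rw [← mul_sub]
    congr 1
    rw [← Summable.tsum_sub hfs hgs]
    congr 1
    funext p
    ring
  have hfin : ∑' p, f p * (1 - r p) = ∑ p ∈ Finset.range n, f p * (1 - r p) := by
    apply tsum_eq_sum
    intro p hp
    have : n ≤ p := by
      by_contra h
      exact hp (Finset.mem_range.2 (by omega))
    rw [hrn p this]
    ring
  -- nonnegativity
  have hterm0 : ∀ p, 0 ≤ f p * (1 - r p) := by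
    intro p
    exact mul_nonneg (hf0 p) (by linarith [hr1 p])
  -- key pointwise bound
  have hkey : ∀ p ∈ Finset.range n, f p * (1 - r p) ≤ (l : ℝ) / n * (((n:ℝ) - p) * (n:ℝ) ^ p / p.factorial) := by
    intro p hp
    have hpn : p < n := Finset.mem_range.1 hp
    have hmin : min n p = p := min_eq_right hpn.le
    have hA : (Nat.choose n l : ℝ) - Nat.choose p l
        ≤ ((n:ℝ) - p) * (Nat.choose (n - 1) (l - 1) : ℝ) := by
      have h := choose_le_aux l n p hl hpn.le
      have hsub : ((n - p : ℕ) : ℝ) = (n:ℝ) - p := by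
        rw [Nat.cast_sub hpn.le]
      have : (Nat.choose n l : ℝ) ≤ (Nat.choose p l : ℝ)
          + ((n - p : ℕ) : ℝ) * (Nat.choose (n - 1) (l - 1) : ℝ) := by exact_mod_cast h
      rw [hsub] at this
      linarith
    have hB : (n:ℝ) * (Nat.choose (n - 1) (l - 1) : ℝ) = (l : ℝ) * (Nat.choose n l : ℝ) := by
      have h := Nat.add_one_mul_choose_eq (n - 1) (l - 1)
      have h1 : n - 1 + 1 = n := by omega
      have h2 : l - 1 + 1 = l := by omega
      rw [h1, h2] at h
      have := congrArg (fun x : ℕ => (x : ℝ)) h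
      push_cast at this
      linarith
    have h1r : 1 - r p ≤ ((n:ℝ) - p) * l / n := by
      rw [hr]
      simp only [hmin]
      rw [sub_div' hcn.ne', div_le_div_iff₀ hcn hnn, one_mul]
      calc ((Nat.choose n l : ℝ) - Nat.choose p l) * n
          ≤ ((n:ℝ) - p) * (Nat.choose (n - 1) (l - 1) : ℝ) * n := by
            apply mul_le_mul_of_nonneg_right hA hnn.le
        _ = ((n:ℝ) - p) * ((n:ℝ) * (Nat.choose (n - 1) (l - 1) : ℝ)) := by ring
        _ = ((n:ℝ) - p) * ((l:ℝ) * (Nat.choose n l : ℝ)) := by rw [hB]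
        _ = ((n:ℝ) - p) * l * Nat.choose n l := by ring
    calc f p * (1 - r p) ≤ f p * (((n:ℝ) - p) * l / n) :=
          mul_le_mul_of_nonneg_left h1r (hf0 p)
      _ = (l : ℝ) / n * (((n:ℝ) - p) * (n:ℝ) ^ p / p.factorial) := by
          rw [hf]; field_simp
  -- sum bound
  have hsum : ∑ p ∈ Finset.range n, f p * (1 - r p) ≤ (l:ℝ) * (n:ℝ) ^ n / n.factorial := by
    calc ∑ p ∈ Finset.range n, f p * (1 - r p)
        ≤ ∑ p ∈ Finset.range n, (l : ℝ) / n * (((n:ℝ) - p) * (n:ℝ) ^ p / p.factorial) :=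
          Finset.sum_le_sum hkey
      _ = (l : ℝ) / n * ∑ p ∈ Finset.range n, ((n:ℝ) - p) * (n:ℝ) ^ p / p.factorial := by
          rw [Finset.mul_sum]
      _ = (l : ℝ) / n * ((n:ℝ) * (n:ℝ) ^ n / n.factorial) := by rw [tele_sum (n:ℝ) n]
      _ = (l:ℝ) * (n:ℝ) ^ n / n.factorial := by field_simp
  -- assemble
  rw [hsplit, hfin]
  have hpos : 0 ≤ Real.exp (-n) * ∑ p ∈ Finset.range n, f p * (1 - r p) := by
    apply mul_nonneg (Real.exp_pos _).le
    exact Finset.sum_nonneg (fun p _ => hterm0 p)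
  rw [abs_of_nonneg hpos]
  have hrpow : ((n:ℝ)) ^ (-(1:ℝ)/2) = 1 / Real.sqrt n := by
    rw [neg_div, Real.rpow_neg (Nat.cast_nonneg n), Real.sqrt_eq_rpow, one_div]
    norm_num
  rw [hrpow]
  have hst := stirling_bound n hn1
  calc Real.exp (-n) * ∑ p ∈ Finset.range n, f p * (1 - r p)
      ≤ Real.exp (-n) * ((l:ℝ) * (n:ℝ) ^ n / n.factorial) := by
        apply mul_le_mul_of_nonneg_left hsum (Real.exp_pos _).le
    _ = (l:ℝ) * (Real.exp (-n) * (n:ℝ) ^ n / n.factorial) := by ring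
    _ ≤ (l:ℝ) * (1 / Real.sqrt n) := by
        apply mul_le_mul_of_nonneg_left hst
        exact_mod_cast Nat.zero_le l
end

section
/- Let q ≥ 2 be an integer, B > 1 a real number, and let b : ℝ → ℝ be a continuous function, not identically zero, whose support is contained in [B^{−1}, B]. Set η_q = (q−1)/2, ω_q = 2π^{(q+1)/2}/Γ((q+1)/2), and for each integer j ≥ 1 define γ_{j,q} := (ω_q B^{qj})^{−1} Σ_{ℓ=1}^∞ b^4(ℓ/B^j) · ((ℓ+η_q)/(η_q ω_q)) · C(ℓ+q−2, ℓ), where C(a,b) is the binomial coefficient (the sum is finite since b is supported in [B^{−1}, B]). Then there exist constants 0 < c_1 ≤ c_2 (depending on q, B, b) such that γ_{j,q} ≤ c_2 for every j ≥ 1, and c_1 ≤ γ_{j,q} for all sufficiently large j. -/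
/-- The surface measure `ω_q` of the `q`-dimensional unit sphere. -/
noncomputable def omegaQ (q : ℕ) : ℝ :=
  2 * Real.pi ^ (((q : ℝ) + 1) / 2) / Real.Gamma (((q : ℝ) + 1) / 2)

/-- `η_q = (q-1)/2`. -/
noncomputable def etaQ (q : ℕ) : ℝ := ((q : ℝ) - 1) / 2

/-- The normalized variance constant
`γ_{j,q} = (ω_q B^{qj})⁻¹ ∑_{ℓ=1}^∞ b^4(ℓ/B^j) ((ℓ+η_q)/(η_q ω_q)) C(ℓ+q-2, ℓ)`. -/
noncomputable def gammaJQ (q : ℕ) (B : ℝ) (b : ℝ → ℝ) (j : ℕ) : ℝ :=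
  (omegaQ q * B ^ (q * j))⁻¹ *
    ∑' ℓ : ℕ, (b (((ℓ : ℝ) + 1) / B ^ j)) ^ 4 *
      ((((ℓ : ℝ) + 1) + etaQ q) / (etaQ q * omegaQ q)) *
      (Nat.choose (ℓ + 1 + q - 2) (ℓ + 1) : ℝ)

lemma omegaQ_pos (q : ℕ) : 0 < omegaQ q := by
  have h : (0:ℝ) < ((q : ℝ) + 1) / 2 := by positivity
  have hG := Real.Gamma_pos_of_pos h
  have hπ : (0:ℝ) < Real.pi ^ (((q : ℝ) + 1) / 2) :=
    Real.rpow_pos_of_pos Real.pi_pos _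
  unfold omegaQ
  positivity

lemma etaQ_pos {q : ℕ} (hq : 2 ≤ q) : 0 < etaQ q := by
  unfold etaQ
  have : (2:ℝ) ≤ q := by exact_mod_cast hq
  linarith

set_option maxHeartbeats 1000000 in
/-- **Two-sided bounds on the variance constants `γ_{j,q}`.** There exist constants
`0 < c₁ ≤ c₂` with `γ_{j,q} ≤ c₂` for every `j ≥ 1`, and `c₁ ≤ γ_{j,q}` for all
sufficiently large `j`. -/
theorem gammaJQ_bounds (q : ℕ) (hq : 2 ≤ q) (B : ℝ) (hB : 1 < B)
    (b : ℝ → ℝ) (hb : Continuous b) (hbne : ∃ x, b x ≠ 0)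
    (hsupp : Function.support b ⊆ Set.Icc B⁻¹ B) :
    ∃ c₁ c₂ : ℝ, 0 < c₁ ∧ c₁ ≤ c₂ ∧
      (∀ j : ℕ, 1 ≤ j → gammaJQ q B b j ≤ c₂) ∧
      (∃ J : ℕ, ∀ j ≥ J, c₁ ≤ gammaJQ q B b j) := by
  obtain ⟨r, rfl⟩ : ∃ r, q = r + 2 := ⟨q - 2, by omega⟩
  have hB0 : (0:ℝ) < B := by linarith
  have hη : 0 < etaQ (r + 2) := etaQ_pos hq
  have hω : 0 < omegaQ (r + 2) := omegaQ_pos (r + 2)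
  set η := etaQ (r + 2) with hηdef
  set ω := omegaQ (r + 2) with hωdef
  -- the summand
  set f : ℕ → ℕ → ℝ := fun j ℓ =>
    (b (((ℓ : ℝ) + 1) / B ^ j)) ^ 4 *
      ((((ℓ : ℝ) + 1) + η) / (η * ω)) *
      (Nat.choose (ℓ + 1 + (r + 2) - 2) (ℓ + 1) : ℝ) with hfdef
  have hgamma : ∀ j, gammaJQ (r + 2) B b j
      = (ω * B ^ ((r + 2) * j))⁻¹ * ∑' ℓ, f j ℓ := fun j => rfl
  -- binomial rewriting
  have hidx : ∀ ℓ : ℕ, ℓ + 1 + (r + 2) - 2 = ℓ + 1 + r := fun ℓ => by omega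
  have hchoose_symm : ∀ ℓ : ℕ,
      Nat.choose (ℓ + 1 + r) (ℓ + 1) = Nat.choose (ℓ + 1 + r) r := by
    intro ℓ
    have h := Nat.choose_symm (n := ℓ + 1 + r) (k := ℓ + 1) (by omega)
    have h2 : ℓ + 1 + r - (ℓ + 1) = r := by omega
    rw [h2] at h
    exact h.symm
  -- nonnegativity of the summand
  have hfnn : ∀ j ℓ, 0 ≤ f j ℓ := by
    intro j ℓ
    have h1 : (0:ℝ) ≤ b (((ℓ : ℝ) + 1) / B ^ j) ^ 4 := by positivity
    have h2 : (0:ℝ) ≤ (((ℓ : ℝ) + 1) + η) / (η * ω) := by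
      apply div_nonneg _ (by positivity)
      have : (0:ℝ) ≤ (ℓ : ℝ) := Nat.cast_nonneg ℓ
      linarith
    have h3 : (0:ℝ) ≤ (Nat.choose (ℓ + 1 + (r + 2) - 2) (ℓ + 1) : ℝ) := Nat.cast_nonneg _
    exact mul_nonneg (mul_nonneg h1 h2) h3
  -- vanishing of b above B
  have hbzero : ∀ x : ℝ, B < x → b x = 0 := by
    intro x hx
    by_contra h
    exact absurd (hsupp h).2 (not_le.2 hx)
  -- vanishing of the summand for large ℓ
  have hfz : ∀ (j ℓ : ℕ), B ^ (j + 1) ≤ (ℓ : ℝ) → f j ℓ = 0 := by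
    intro j ℓ h
    have hBj : (0:ℝ) < B ^ j := pow_pos hB0 j
    have hx : B < ((ℓ : ℝ) + 1) / B ^ j := by
      rw [lt_div_iff₀ hBj]
      have he : B * B ^ j = B ^ (j + 1) := by ring
      linarith [he]
    have hb0 : b (((ℓ : ℝ) + 1) / B ^ j) = 0 := hbzero _ hx
    simp only [hfdef, hb0]
    ring
  have hNf : ∀ j, ∀ ℓ ∉ Finset.range ⌈B ^ (j + 1)⌉₊, f j ℓ = 0 := by
    intro j ℓ hℓ
    apply hfz
    have h1 : ⌈B ^ (j + 1)⌉₊ ≤ ℓ := by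
      by_contra h
      exact hℓ (Finset.mem_range.2 (by omega))
    calc B ^ (j + 1) ≤ (⌈B ^ (j + 1)⌉₊ : ℝ) := Nat.le_ceil _
      _ ≤ (ℓ : ℝ) := by exact_mod_cast h1
  have hsumm : ∀ j, Summable (f j) := fun j => summable_of_ne_finset_zero (hNf j)
  have htsum : ∀ j, ∑' ℓ, f j ℓ = ∑ ℓ ∈ Finset.range ⌈B ^ (j + 1)⌉₊, f j ℓ :=
    fun j => tsum_eq_sum (hNf j)
  -- uniform bound on b^4
  have hIcc : (Set.Icc B⁻¹ B).Nonempty :=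
    ⟨B, le_of_lt (by calc B⁻¹ < 1 := inv_lt_one_of_one_lt₀ hB
                    _ < B := hB), le_rfl⟩
  obtain ⟨x₁, -, hx₁⟩ := (isCompact_Icc (a := B⁻¹) (b := B)).exists_isMaxOn hIcc
    ((hb.pow 4).continuousOn)
  set M := b x₁ ^ 4 with hMdef
  have hM0 : 0 ≤ M := by positivity
  have hMb : ∀ x : ℝ, b x ^ 4 ≤ M := by
    intro x
    by_cases hx : x ∈ Set.Icc B⁻¹ B
    · exact hx₁ hx
    · have hbx : b x = 0 := by
        by_contra h
        exact hx (hsupp h)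
      rw [hbx]
      simpa using hM0
  ---------------------------------------------------------------
  -- LOWER BOUND setup
  obtain ⟨x₀, hx₀⟩ := hbne
  have hx₀Icc : x₀ ∈ Set.Icc B⁻¹ B := hsupp hx₀
  have hx₀pos : 0 < x₀ := lt_of_lt_of_le (inv_pos.2 hB0) hx₀Icc.1
  have hbx₀ : 0 < b x₀ ^ 4 := by positivity
  set δ := b x₀ ^ 4 / 2 with hδdef
  have hδ : 0 < δ := by positivity
  have hUopen : IsOpen {x : ℝ | δ < b x ^ 4} := isOpen_lt continuous_const (hb.pow 4)
  have hx₀U : x₀ ∈ {x : ℝ | δ < b x ^ 4} := by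
    simp only [Set.mem_setOf_eq, hδdef]
    linarith
  obtain ⟨ε, hε, hball⟩ := Metric.isOpen_iff.1 hUopen x₀ hx₀U
  set ε' := ε / 2 with hε'def
  have hε' : 0 < ε' := by positivity
  have hδb : ∀ x ∈ Set.Icc x₀ (x₀ + ε'), δ ≤ b x ^ 4 := by
    intro x hx
    have : x ∈ Metric.ball x₀ ε := by
      rw [Metric.mem_ball, Real.dist_eq, abs_lt]
      constructor <;> [linarith [hx.1]; linarith [hx.2]]
    exact le_of_lt (hball this)
  -- the constants
  have hrfac : (0:ℝ) < (Nat.factorial r : ℝ) := by exact_mod_cast r.factorial_pos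
  set c₁ := ε' * δ * x₀ ^ (r + 1) / (4 * η * ω ^ 2 * (Nat.factorial r : ℝ)) with hc₁def
  have hc₁ : 0 < c₁ := by positivity
  set c₂' := 2 * M * (2 + η) * ((2:ℝ) + r) ^ r * B ^ (r + 2) / (η * ω ^ 2) with hc₂'def
  have hc₂' : 0 ≤ c₂' := by positivity
  refine ⟨c₁, max c₂' c₁, hc₁, le_max_right _ _, ?_, ?_⟩
  ---------------------------------------------------------------
  -- UPPER BOUND
  · intro j hj
    refine le_trans ?_ (le_max_left _ _)
    set N := ⌈B ^ (j + 1)⌉₊ with hNdef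
    set P := B ^ (j + 1) with hPdef
    have hP0 : 0 < P := pow_pos hB0 _
    have hP1 : 1 ≤ P := one_le_pow₀ hB.le
    have hN2P : (N : ℝ) ≤ 2 * P := by
      have := Nat.ceil_lt_add_one hP0.le
      linarith
    -- per-term bound
    have hterm : ∀ ℓ ∈ Finset.range N,
        f j ℓ ≤ M * ((2 + η) * P / (η * ω)) * (((2:ℝ) + r) * P) ^ r := by
      intro ℓ hℓ
      have hℓN : ℓ < N := Finset.mem_range.1 hℓ
      have hℓP : (ℓ : ℝ) + 1 ≤ 2 * P := by
        have : (ℓ : ℝ) + 1 ≤ (N : ℝ) := by exact_mod_cast Nat.succ_le_of_lt hℓN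
        linarith
      have h1 : b (((ℓ : ℝ) + 1) / B ^ j) ^ 4 ≤ M := hMb _
      have h2 : (((ℓ : ℝ) + 1) + η) / (η * ω) ≤ (2 + η) * P / (η * ω) := by
        apply div_le_div_of_nonneg_right ?_ (by positivity) |>.trans_eq rfl
        · nlinarith
      have h3 : (Nat.choose (ℓ + 1 + (r + 2) - 2) (ℓ + 1) : ℝ) ≤ (((2:ℝ) + r) * P) ^ r := by
        rw [hidx ℓ, hchoose_symm ℓ]
        have hc : (Nat.choose (ℓ + 1 + r) r : ℝ) ≤ ((ℓ + 1 + r : ℕ) : ℝ) ^ r := by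
          exact_mod_cast Nat.choose_le_pow (ℓ + 1 + r) r
        refine hc.trans ?_
        apply pow_le_pow_left₀ (by positivity)
        push_cast
        nlinarith [Nat.cast_nonneg (α := ℝ) r]
      calc f j ℓ = (b (((ℓ : ℝ) + 1) / B ^ j)) ^ 4 *
            ((((ℓ : ℝ) + 1) + η) / (η * ω)) *
            (Nat.choose (ℓ + 1 + (r + 2) - 2) (ℓ + 1) : ℝ) := rfl
        _ ≤ M * ((2 + η) * P / (η * ω)) * (((2:ℝ) + r) * P) ^ r := by
            have hnn2 : (0:ℝ) ≤ (((ℓ : ℝ) + 1) + η) / (η * ω) := by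
              apply div_nonneg _ (by positivity)
              have : (0:ℝ) ≤ (ℓ : ℝ) := Nat.cast_nonneg ℓ
              linarith
            have hnn3 : (0:ℝ) ≤ (Nat.choose (ℓ + 1 + (r + 2) - 2) (ℓ + 1) : ℝ) :=
              Nat.cast_nonneg _
            have hnnM : (0:ℝ) ≤ M * ((2 + η) * P / (η * ω)) := by positivity
            exact mul_le_mul (mul_le_mul h1 h2 hnn2 hM0) h3 hnn3 hnnM
    -- sum bound
    have hsumle : ∑' ℓ, f j ℓ
        ≤ 2 * P * (M * ((2 + η) * P / (η * ω)) * (((2:ℝ) + r) * P) ^ r) := by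
      rw [htsum j]
      calc ∑ ℓ ∈ Finset.range N, f j ℓ
          ≤ (N : ℝ) * (M * ((2 + η) * P / (η * ω)) * (((2:ℝ) + r) * P) ^ r) := by
            have h := Finset.sum_le_card_nsmul (Finset.range N) (f j) _ hterm
            simpa [Finset.card_range, nsmul_eq_mul] using h
        _ ≤ 2 * P * (M * ((2 + η) * P / (η * ω)) * (((2:ℝ) + r) * P) ^ r) := by
            apply mul_le_mul_of_nonneg_right hN2P (by positivity)
    rw [hgamma j]
    have hinv : (0:ℝ) < (ω * B ^ ((r + 2) * j))⁻¹ := by positivity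
    calc (ω * B ^ ((r + 2) * j))⁻¹ * ∑' ℓ, f j ℓ
        ≤ (ω * B ^ ((r + 2) * j))⁻¹ *
          (2 * P * (M * ((2 + η) * P / (η * ω)) * (((2:ℝ) + r) * P) ^ r)) :=
          mul_le_mul_of_nonneg_left hsumle hinv.le
      _ = c₂' := by
          rw [hc₂'def, hPdef, mul_pow]
          have hBrj : (0:ℝ) < B ^ ((r + 2) * j) := pow_pos hB0 _
          field_simp
          ring
  ---------------------------------------------------------------
  -- LOWER BOUND
  · obtain ⟨J, hJ⟩ := pow_unbounded_of_one_lt (4 / ε') hB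
    refine ⟨J, fun j hjJ => ?_⟩
    set P := B ^ j with hPdef
    have hP0 : 0 < P := pow_pos hB0 _
    have hP1 : 1 ≤ P := one_le_pow₀ hB.le
    have hP4 : 4 ≤ ε' * P := by
      have h1 : (4 / ε') < B ^ J := hJ
      have h2 : B ^ J ≤ P := pow_le_pow_right₀ hB.le hjJ
      have := (div_lt_iff₀ hε').1 (lt_of_lt_of_le h1 h2)
      linarith
    set m₁ := ⌈x₀ * P⌉₊ with hm₁def
    set m₂ := ⌊(x₀ + ε') * P⌋₊ with hm₂def
    have hx₀P : 0 < x₀ * P := by positivity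
    have hm₁ge : x₀ * P ≤ (m₁ : ℝ) := Nat.le_ceil _
    have hm₁lt : (m₁ : ℝ) < x₀ * P + 1 := Nat.ceil_lt_add_one hx₀P.le
    have hm₂le : (m₂ : ℝ) ≤ (x₀ + ε') * P := Nat.floor_le (by positivity)
    have hm₂gt : (x₀ + ε') * P - 1 < (m₂ : ℝ) := by
      have := Nat.lt_floor_add_one ((x₀ + ε') * P)
      linarith
    have hm₁pos : 1 ≤ m₁ := Nat.ceil_pos.2 hx₀P
    have hm₁₂R : (m₁ : ℝ) + 2 ≤ (m₂ : ℝ) := by nlinarith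
    have hm₁₂ : m₁ ≤ m₂ := by exact_mod_cast le_of_lt (by
      have : (m₁ : ℝ) < (m₂ : ℝ) := by linarith
      exact_mod_cast Nat.cast_lt.1 this)
    set S := Finset.Icc (m₁ - 1) (m₂ - 1) with hSdef
    -- membership facts
    have hmem : ∀ ℓ ∈ S, x₀ * P ≤ (ℓ : ℝ) + 1 ∧ (ℓ : ℝ) + 1 ≤ (x₀ + ε') * P := by
      intro ℓ hℓ
      rw [hSdef, Finset.mem_Icc] at hℓ
      have h1 : m₁ ≤ ℓ + 1 := by omega
      have h2 : ℓ + 1 ≤ m₂ := by omega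
      constructor
      · calc x₀ * P ≤ (m₁ : ℝ) := hm₁ge
          _ ≤ (ℓ : ℝ) + 1 := by exact_mod_cast h1
      · calc (ℓ : ℝ) + 1 ≤ (m₂ : ℝ) := by exact_mod_cast h2
          _ ≤ (x₀ + ε') * P := hm₂le
    -- per-term lower bound
    set t := δ * (x₀ * P / (η * ω)) * ((x₀ * P) ^ r / (Nat.factorial r : ℝ)) with htdef
    have ht0 : 0 ≤ t := by positivity
    have hterm : ∀ ℓ ∈ S, t ≤ f j ℓ := by
      intro ℓ hℓ
      obtain ⟨hmem1, hmem2⟩ := hmem ℓ hℓ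
      have hxin : ((ℓ : ℝ) + 1) / B ^ j ∈ Set.Icc x₀ (x₀ + ε') := by
        rw [← hPdef]
        constructor
        · rw [le_div_iff₀ hP0]; linarith
        · rw [div_le_iff₀ hP0]; linarith
      have h1 : δ ≤ b (((ℓ : ℝ) + 1) / B ^ j) ^ 4 := hδb _ hxin
      have h2 : x₀ * P / (η * ω) ≤ (((ℓ : ℝ) + 1) + η) / (η * ω) := by
        apply div_le_div_of_nonneg_right ?_ (by positivity) |>.trans_eq rfl
        linarith
      have h3 : (x₀ * P) ^ r / (Nat.factorial r : ℝ) ≤ (Nat.choose (ℓ + 1 + (r + 2) - 2) (ℓ + 1) : ℝ) := by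
        rw [hidx ℓ, hchoose_symm ℓ]
        have hple : (x₀ * P) ^ r ≤ ((ℓ : ℝ) + 1) ^ r := pow_le_pow_left₀ hx₀P.le hmem1 r
        have hpow : ((ℓ : ℝ) + 1) ^ r ≤ ((ℓ + 1 + r + 1 - r : ℕ) : ℝ) ^ r := by
          have : (ℓ + 1 + r + 1 - r : ℕ) = ℓ + 2 := by omega
          rw [this]
          push_cast
          apply pow_le_pow_left₀ (by positivity)
          linarith
        have hlow := Nat.pow_le_choose (α := ℝ) r (ℓ + 1 + r)
        calc (x₀ * P) ^ r / (Nat.factorial r : ℝ) ≤ ((ℓ : ℝ) + 1) ^ r / (Nat.factorial r : ℝ) := by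
              apply div_le_div_of_nonneg_right hple hrfac.le |>.trans_eq rfl
          _ ≤ ((ℓ + 1 + r + 1 - r : ℕ) : ℝ) ^ r / (Nat.factorial r : ℝ) := by
              apply div_le_div_of_nonneg_right hpow hrfac.le |>.trans_eq rfl
          _ ≤ (Nat.choose (ℓ + 1 + r) r : ℝ) := by exact_mod_cast hlow
      have hnn1 : (0:ℝ) ≤ δ := hδ.le
      have hnn2 : (0:ℝ) ≤ x₀ * P / (η * ω) := by positivity
      have h12 : δ * (x₀ * P / (η * ω))
          ≤ b (((ℓ : ℝ) + 1) / B ^ j) ^ 4 * ((((ℓ : ℝ) + 1) + η) / (η * ω)) := by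
        apply mul_le_mul h1 h2 hnn2 (by positivity)
      calc t = δ * (x₀ * P / (η * ω)) * ((x₀ * P) ^ r / (Nat.factorial r : ℝ)) := rfl
        _ ≤ (b (((ℓ : ℝ) + 1) / B ^ j)) ^ 4 * ((((ℓ : ℝ) + 1) + η) / (η * ω)) *
            (Nat.choose (ℓ + 1 + (r + 2) - 2) (ℓ + 1) : ℝ) := by
            apply mul_le_mul h12 h3 (by positivity) ?_
            have : (0:ℝ) ≤ (((ℓ : ℝ) + 1) + η) / (η * ω) := by
              apply div_nonneg _ (by positivity)
              have : (0:ℝ) ≤ (ℓ : ℝ) := Nat.cast_nonneg ℓ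
              linarith
            positivity
        _ = f j ℓ := rfl
    -- cardinality bound
    have hcard : (ε' * P / 4) ≤ (S.card : ℝ) := by
      have hScard : S.card = m₂ - m₁ + 1 := by
        rw [hSdef, Nat.card_Icc]
        omega
      have hcast : (S.card : ℝ) = (m₂ : ℝ) - (m₁ : ℝ) + 1 := by
        rw [hScard]
        have : m₂ - m₁ + 1 = m₂ + 1 - m₁ := by omega
        rw [this]
        push_cast [Nat.cast_sub (by omega : m₁ ≤ m₂ + 1)]
        ring
      rw [hcast]
      nlinarith
    -- sum bound
    have hsumge : (ε' * P / 4) * t ≤ ∑' ℓ, f j ℓ := by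
      calc (ε' * P / 4) * t ≤ (S.card : ℝ) * t := mul_le_mul_of_nonneg_right hcard ht0
        _ = ∑ _ℓ ∈ S, t := by rw [Finset.sum_const, nsmul_eq_mul]
        _ ≤ ∑ ℓ ∈ S, f j ℓ := Finset.sum_le_sum hterm
        _ ≤ ∑' ℓ, f j ℓ := Summable.sum_le_tsum S (fun ℓ _ => hfnn j ℓ) (hsumm j)
    rw [hgamma j]
    have hinv : (0:ℝ) < (ω * B ^ ((r + 2) * j))⁻¹ := by positivity
    calc c₁ = (ω * B ^ ((r + 2) * j))⁻¹ * ((ε' * P / 4) * t) := by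
          rw [hc₁def, htdef, hPdef]
          have hBrj : (0:ℝ) < B ^ ((r + 2) * j) := pow_pos hB0 _
          field_simp
          ring
      _ ≤ (ω * B ^ ((r + 2) * j))⁻¹ * ∑' ℓ, f j ℓ :=
          mul_le_mul_of_nonneg_left hsumge hinv.le
end

section
/- Let q ≥ 2 be an integer, let S^q denote the unit sphere in ℝ^{q+1} equipped with its surface measure dz and geodesic distance d(z_1, z_2) = arccos⟨z_1, z_2⟩, and let f : S^q → ℝ be a measurable density with 0 ≤ f(z) ≤ M for all z. Fix B > 1, an integer j ≥ 0, real numbers κ > 0 and τ ≥ 2, integers n_1, n_2 ≥ 2, and points ξ_1, ξ_2 ∈ S^q. Suppose ψ_1, ψ_2 : S^q → ℝ are measurable functions satisfying the localization bounds |ψ_i(z)| ≤ κ B^{qj/2} / (1 + B^{qj/2} d(z, ξ_i))^τ for i = 1, 2 and all z ∈ S^q. Then there exists a constant C > 0, depending only on q, τ, κ, M, n_1, n_2 (not on j, ξ_1, ξ_2), such that ∫_{S^q} |ψ_1(z)|^{n_1} |ψ_2(z)|^{n_2} f(z) dz ≤ C · B^{((n_1+n_2)/2 − 1) q j} · (1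 + B^{qj/2} d(ξ_1, ξ_2))^{−min(n_1, n_2) τ}. -/
open MeasureTheory
open scoped RealInnerProductSpace ENNReal NNReal


section LocAux

lemma loc_cos_lip (a b : ℝ) : |Real.cos a - Real.cos b| ≤ |a - b| := by
  rw [Real.cos_sub_cos]
  have h1 : |Real.sin ((a + b) / 2)| ≤ 1 :=
    abs_le.mpr ⟨Real.neg_one_le_sin _, Real.sin_le_one _⟩
  have h2 : |Real.sin ((a - b) / 2)| ≤ |(a - b) / 2| := Real.abs_sin_le_abs
  have h3 : |(a - b) / 2| = |a - b| / 2 := by rw [abs_div, abs_two]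
  rw [abs_mul, abs_mul, abs_neg, abs_two]
  nlinarith [abs_nonneg (Real.sin ((a + b) / 2)), abs_nonneg (Real.sin ((a - b) / 2)),
    abs_nonneg (a - b)]

noncomputable def sinc' (t : ℝ) : ℝ := ∫ u in (0:ℝ)..1, Real.cos (t * u)

lemma sinc'_intble (t : ℝ) :
    IntervalIntegrable (fun u => Real.cos (t * u)) MeasureTheory.volume 0 1 :=
  (Real.continuous_cos.comp (continuous_const.mul continuous_id)).intervalIntegrable 0 1

lemma mul_sinc' (t : ℝ) : t * sinc' t = Real.sin t := by
  rcases eq_or_ne t 0 with rfl | ht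
  · simp
  · unfold sinc'
    rw [intervalIntegral.integral_comp_mul_left (f := Real.cos) ht]
    simp only [mul_zero, mul_one, integral_cos, Real.sin_zero, sub_zero, smul_eq_mul]
    field_simp

lemma sinc'_lip (a b : ℝ) : |sinc' a - sinc' b| ≤ |a - b| := by
  unfold sinc'
  rw [← intervalIntegral.integral_sub (sinc'_intble a) (sinc'_intble b)]
  have := intervalIntegral.norm_integral_le_of_norm_le_const
    (a := (0:ℝ)) (b := 1) (C := |a - b|)
    (f := fun u => Real.cos (a * u) - Real.cos (b * u)) ?_
  · simpa using this
  · intro u hu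
    rw [Set.uIoc_of_le (by norm_num : (0:ℝ) ≤ 1)] at hu
    have h1 : |Real.cos (a * u) - Real.cos (b * u)| ≤ |a * u - b * u| := loc_cos_lip _ _
    have h2 : |a * u - b * u| = |a - b| * |u| := by rw [← sub_mul, abs_mul]
    have h3 : |u| ≤ 1 := by rw [abs_of_pos hu.1]; exact hu.2
    have := abs_nonneg (a - b)
    simp only [Real.norm_eq_abs]
    nlinarith

lemma abs_sinc'_le_one' (t : ℝ) : |sinc' t| ≤ 1 := by
  unfold sinc'
  have := intervalIntegral.norm_integral_le_of_norm_le_const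
    (a := (0:ℝ)) (b := 1) (C := 1) (f := fun u => Real.cos (t * u))
    (fun u _ => by simpa [Real.norm_eq_abs] using Real.abs_cos_le_one (t * u))
  simpa using this

end LocAux


lemma loc_arccos_triangle {F : Type*} [NormedAddCommGroup F] [InnerProductSpace ℝ F]
    (x y z : F) (hx : ‖x‖ = 1) (hy : ‖y‖ = 1) (hz : ‖z‖ = 1) :
    Real.arccos ⟪x, z⟫ ≤ Real.arccos ⟪x, y⟫ + Real.arccos ⟪y, z⟫ := by
  set a := Real.arccos ⟪x, y⟫ with ha
  set b := Real.arccos ⟪y, z⟫ with hb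
  have hxy : |⟪x, y⟫| ≤ 1 := by simpa [hx, hy] using abs_real_inner_le_norm x y
  have hyz : |⟪y, z⟫| ≤ 1 := by simpa [hy, hz] using abs_real_inner_le_norm y z
  have hxz : |⟪x, z⟫| ≤ 1 := by simpa [hx, hz] using abs_real_inner_le_norm x z
  have hca : Real.cos a = ⟪x, y⟫ := Real.cos_arccos (abs_le.mp hxy).1 (abs_le.mp hxy).2
  have hcb : Real.cos b = ⟪y, z⟫ := Real.cos_arccos (abs_le.mp hyz).1 (abs_le.mp hyz).2
  have hyy : ⟪y, y⟫ = (1:ℝ) := by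
    rw [real_inner_self_eq_norm_sq, hy]; norm_num
  have hxx : ⟪x, x⟫ = (1:ℝ) := by
    rw [real_inner_self_eq_norm_sq, hx]; norm_num
  have hzz : ⟪z, z⟫ = (1:ℝ) := by
    rw [real_inner_self_eq_norm_sq, hz]; norm_num
  set wx := x - ⟪x, y⟫ • y with hwx
  set wz := z - ⟪y, z⟫ • y with hwz
  have hyx : ⟪y, x⟫ = ⟪x, y⟫ := real_inner_comm x y
  have hzy : ⟪z, y⟫ = ⟪y, z⟫ := real_inner_comm y z
  have hzx : ⟪z, x⟫ = ⟪x, z⟫ := real_inner_comm x z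
  have key : ⟪x, z⟫ = ⟪wx, wz⟫ + ⟪x, y⟫ * ⟪y, z⟫ := by
    simp only [hwx, hwz, inner_sub_left, inner_sub_right, real_inner_smul_left,
      real_inner_smul_right, hyy, hyx, hzy, hzx]
    ring
  have hwx2 : ‖wx‖ ^ 2 = 1 - ⟪x, y⟫ ^ 2 := by
    rw [← real_inner_self_eq_norm_sq]
    simp only [hwx, inner_sub_left, inner_sub_right, real_inner_smul_left,
      real_inner_smul_right, hyy, hyx, hxx]
    ring
  have hwz2 : ‖wz‖ ^ 2 = 1 - ⟪y, z⟫ ^ 2 := by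
    rw [← real_inner_self_eq_norm_sq]
    simp only [hwz, inner_sub_left, inner_sub_right, real_inner_smul_left,
      real_inner_smul_right, hyy, hzy, hzz]
    ring
  have hnwx : ‖wx‖ = Real.sin a := by
    rw [ha, Real.sin_arccos, ← hwx2, Real.sqrt_sq (norm_nonneg _)]
  have hnwz : ‖wz‖ = Real.sin b := by
    rw [hb, Real.sin_arccos, ← hwz2, Real.sqrt_sq (norm_nonneg _)]
  have hinner : -(‖wx‖ * ‖wz‖) ≤ ⟪wx, wz⟫ :=
    (abs_le.mp (abs_real_inner_le_norm wx wz)).1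
  have hge : Real.cos (a + b) ≤ ⟪x, z⟫ := by
    rw [Real.cos_add, key, ← hca, ← hcb]
    rw [hnwx, hnwz] at hinner
    linarith
  rcases le_or_gt (a + b) Real.pi with h | h
  · have h0 : 0 ≤ a + b := add_nonneg (Real.arccos_nonneg _) (Real.arccos_nonneg _)
    calc Real.arccos ⟪x, z⟫ ≤ Real.arccos (Real.cos (a + b)) := by
          apply Real.strictAntiOn_arccos.antitoneOn
            ⟨Real.neg_one_le_cos _, Real.cos_le_one _⟩
            ⟨(abs_le.mp hxz).1, (abs_le.mp hxz).2⟩ hge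
      _ = a + b := Real.arccos_cos h0 h
  · exact le_trans (Real.arccos_le_pi _) h.le

lemma loc_tsum_inv_sq_le : ∑' k : ℕ, ENNReal.ofReal ((((k:ℝ) + 1) ^ 2)⁻¹) ≤ 2 := by
  have hind : ∀ N : ℕ, ∑ k ∈ Finset.range (N + 1), (((k:ℝ) + 1) ^ 2)⁻¹ ≤ 2 - ((N:ℝ) + 1)⁻¹ := by
    intro N
    induction N with
    | zero => norm_num
    | succ n ih =>
      rw [Finset.sum_range_succ]
      have hn0 : (0:ℝ) < (n:ℝ) + 1 := by positivity
      have hn1 : (0:ℝ) < (n:ℝ) + 2 := by positivity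
      have hkey : (((n:ℝ) + 1 + 1) ^ 2)⁻¹ ≤ ((n:ℝ) + 1)⁻¹ - ((n:ℝ) + 1 + 1)⁻¹ := by
        have h : ((n:ℝ) + 1)⁻¹ - ((n:ℝ) + 1 + 1)⁻¹ = (((n:ℝ) + 1) * ((n:ℝ) + 1 + 1))⁻¹ := by
          field_simp
          ring
        rw [h]
        apply inv_anti₀ (by positivity)
        nlinarith
      push_cast
      linarith
  have hpart : ∀ N : ℕ, ∑ k ∈ Finset.range N, (((k:ℝ) + 1) ^ 2)⁻¹ ≤ 2 := by
    intro N
    cases N with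
    | zero => simp
    | succ n =>
      refine le_trans (hind n) ?_
      have : (0:ℝ) ≤ ((n:ℝ) + 1)⁻¹ := by positivity
      linarith
  rw [ENNReal.tsum_eq_iSup_sum]
  apply iSup_le
  intro s
  obtain ⟨N, hN⟩ := Finset.exists_nat_subset_range s
  calc ∑ k ∈ s, ENNReal.ofReal ((((k:ℝ) + 1) ^ 2)⁻¹)
      ≤ ∑ k ∈ Finset.range N, ENNReal.ofReal ((((k:ℝ) + 1) ^ 2)⁻¹) :=
        Finset.sum_le_sum_of_subset hN
    _ = ENNReal.ofReal (∑ k ∈ Finset.range N, (((k:ℝ) + 1) ^ 2)⁻¹) :=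
        (ENNReal.ofReal_sum_of_nonneg (fun i _ => by positivity)).symm
    _ ≤ ENNReal.ofReal 2 := ENNReal.ofReal_le_ofReal (hpart N)
    _ = 2 := by norm_num


section Cap

variable {q : ℕ}

noncomputable def sphExp (ξ : EuclideanSpace ℝ (Fin (q + 1)))
    (T : EuclideanSpace ℝ (Fin q) →ₗᵢ[ℝ] EuclideanSpace ℝ (Fin (q + 1)))
    (v : EuclideanSpace ℝ (Fin q)) : EuclideanSpace ℝ (Fin (q + 1)) :=
  Real.cos ‖v‖ • ξ + sinc' ‖v‖ • T v

lemma sphExp_lipschitz {ξ : EuclideanSpace ℝ (Fin (q + 1))} (hξ : ‖ξ‖ = 1)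
    (T : EuclideanSpace ℝ (Fin q) →ₗᵢ[ℝ] EuclideanSpace ℝ (Fin (q + 1))) :
    LipschitzOnWith 6 (sphExp ξ T) (Metric.closedBall 0 Real.pi) := by
  rw [lipschitzOnWith_iff_dist_le_mul]
  intro v hv w hw
  have hwπ : ‖w‖ ≤ Real.pi := by
    rwa [Metric.mem_closedBall, dist_zero_right] at hw
  have hstep : dist (sphExp ξ T v) (sphExp ξ T w) ≤
      |Real.cos ‖v‖ - Real.cos ‖w‖| * ‖ξ‖ +
        (|sinc' ‖v‖| * ‖T v - T w‖ + |sinc' ‖v‖ - sinc' ‖w‖| * ‖T w‖) := by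
    rw [dist_eq_norm]
    have hrw : sphExp ξ T v - sphExp ξ T w =
        (Real.cos ‖v‖ - Real.cos ‖w‖) • ξ +
          (sinc' ‖v‖ • (T v - T w) + (sinc' ‖v‖ - sinc' ‖w‖) • T w) := by
      unfold sphExp; module
    rw [hrw]
    refine le_trans (norm_add_le _ _) ?_
    gcongr
    · rw [norm_smul, Real.norm_eq_abs]
    · refine le_trans (norm_add_le _ _) ?_
      gcongr <;> rw [norm_smul, Real.norm_eq_abs]
  have h1 : |Real.cos ‖v‖ - Real.cos ‖w‖| ≤ ‖v - w‖ :=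
    le_trans (loc_cos_lip _ _) (abs_norm_sub_norm_le v w)
  have h2 : |sinc' ‖v‖ - sinc' ‖w‖| ≤ ‖v - w‖ :=
    le_trans (sinc'_lip _ _) (abs_norm_sub_norm_le v w)
  have h3 : ‖T v - T w‖ = ‖v - w‖ := by
    rw [← map_sub, T.norm_map]
  have h4 : ‖T w‖ = ‖w‖ := T.norm_map w
  have h5 : |sinc' ‖v‖| ≤ 1 := abs_sinc'_le_one' _
  have hπ : Real.pi ≤ 4 := Real.pi_le_four
  have h6 : dist v w = ‖v - w‖ := dist_eq_norm v w
  have hnn : (0:ℝ) ≤ ‖v - w‖ := norm_nonneg _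
  have habs : (0:ℝ) ≤ |sinc' ‖v‖ - sinc' ‖w‖| := abs_nonneg _
  have habs2 : (0:ℝ) ≤ |Real.cos ‖v‖ - Real.cos ‖w‖| := abs_nonneg _
  have hwnn : (0:ℝ) ≤ ‖w‖ := norm_nonneg _
  calc dist (sphExp ξ T v) (sphExp ξ T w) ≤ _ := hstep
    _ ≤ ‖v - w‖ * 1 + (1 * ‖v - w‖ + ‖v - w‖ * Real.pi) := by
        rw [hξ, h3, h4]
        gcongr
    _ ≤ 6 * dist v w := by
        rw [h6]; nlinarith



lemma sphExp_surj (hq1 : 1 ≤ q) {ξ z : EuclideanSpace ℝ (Fin (q + 1))}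
    (hξ : ‖ξ‖ = 1) (hz : ‖z‖ = 1)
    (T : EuclideanSpace ℝ (Fin q) →ₗᵢ[ℝ] EuclideanSpace ℝ (Fin (q + 1)))
    (hT : ∀ v, ⟪ξ, T v⟫ = 0) (hTs : ∀ w, ⟪ξ, w⟫ = 0 → ∃ v, T v = w) :
    ∃ v, ‖v‖ = Real.arccos ⟪z, ξ⟫ ∧ sphExp ξ T v = z := by
  set c : ℝ := ⟪z, ξ⟫ with hcdef
  have hc : |c| ≤ 1 := by simpa [hz, hξ] using abs_real_inner_le_norm z ξ
  have hcos : Real.cos (Real.arccos c) = c := Real.cos_arccos (abs_le.mp hc).1 (abs_le.mp hc).2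
  have hξz : ⟪ξ, z⟫ = c := real_inner_comm z ξ
  have hξξ : ⟪ξ, ξ⟫ = (1:ℝ) := by rw [real_inner_self_eq_norm_sq, hξ]; norm_num
  have hzz : ⟪z, z⟫ = (1:ℝ) := by rw [real_inner_self_eq_norm_sq, hz]; norm_num
  have hzξ : ⟪z, ξ⟫ = c := rfl
  set w : EuclideanSpace ℝ (Fin (q + 1)) := z - c • ξ with hwdef
  have hworth : ⟪ξ, w⟫ = 0 := by
    simp only [hwdef, inner_sub_right, real_inner_smul_right, hξz, hξξ]
    ring
  have hw2 : ‖w‖ ^ 2 = 1 - c ^ 2 := by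
    rw [← real_inner_self_eq_norm_sq]
    simp only [hwdef, inner_sub_left, inner_sub_right, real_inner_smul_left,
      real_inner_smul_right, hξz, hzξ, hξξ, hzz]
    ring
  have hsin : Real.sin (Real.arccos c) = ‖w‖ := by
    rw [Real.sin_arccos, ← hw2, Real.sqrt_sq (norm_nonneg _)]
  rcases eq_or_ne w 0 with hw0 | hw0
  · have hc2 : c ^ 2 = 1 := by
      have : ‖w‖ ^ 2 = 0 := by rw [hw0]; simp
      rw [hw2] at this; linarith
    have habs : |c| = 1 := by
      rw [← Real.sqrt_one, ← hc2, Real.sqrt_sq_eq_abs]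
    rcases abs_eq (by norm_num : (0:ℝ) ≤ 1) |>.mp habs with hc1 | hcm1
    · -- c = 1, z = ξ
      have hzξ' : z = ξ := by
        have := hw0
        rw [hwdef, hc1, one_smul, sub_eq_zero] at this
        exact this
      refine ⟨0, ?_, ?_⟩
      · rw [hc1]
        simp [Real.arccos_one]
      · unfold sphExp
        simp [hzξ']
    · -- c = -1, z = -ξ
      have hzξ' : z = -ξ := by
        have := hw0
        rw [hwdef, hcm1, sub_eq_zero] at this
        rw [this]; simp
      obtain ⟨i⟩ : Nonempty (Fin q) := ⟨⟨0, hq1⟩⟩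
      set u : EuclideanSpace ℝ (Fin q) := EuclideanSpace.single i (1:ℝ) with hu
      have hun : ‖u‖ = 1 := by simp [hu, EuclideanSpace.norm_single]
      refine ⟨Real.pi • u, ?_, ?_⟩
      · rw [norm_smul, Real.norm_eq_abs, abs_of_nonneg Real.pi_nonneg, hun, mul_one,
          hcm1, Real.arccos_neg_one]
      · have hnv : ‖Real.pi • u‖ = Real.pi := by
          rw [norm_smul, Real.norm_eq_abs, abs_of_nonneg Real.pi_nonneg, hun, mul_one]
        have hsincπ : sinc' Real.pi = 0 := by
          have h := mul_sinc' Real.pi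
          rw [Real.sin_pi] at h
          exact (mul_eq_zero.mp h).resolve_left Real.pi_ne_zero
        unfold sphExp
        rw [hnv, Real.cos_pi, hsincπ, zero_smul, add_zero, hzξ']
        module
  · -- generic case
    have hwn : (0:ℝ) < ‖w‖ := norm_pos_iff.mpr hw0
    obtain ⟨v₀, hv₀⟩ := hTs w hworth
    set θ : ℝ := Real.arccos c with hθ
    have hθ0 : 0 ≤ θ := Real.arccos_nonneg _
    have hv₀n : ‖v₀‖ = ‖w‖ := by rw [← hv₀, T.norm_map]
    have hvn : ‖(θ / ‖w‖) • v₀‖ = θ := by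
      rw [norm_smul, Real.norm_eq_abs, abs_of_nonneg (by positivity), hv₀n]
      field_simp
    refine ⟨(θ / ‖w‖) • v₀, hvn, ?_⟩
    unfold sphExp
    rw [hvn, hcos, T.map_smul, hv₀]
    have hcoef : sinc' θ • ((θ / ‖w‖) • w) = w := by
      rw [smul_smul]
      have h1 : sinc' θ * (θ / ‖w‖) = 1 := by
        have h := mul_sinc' θ
        rw [hsin] at h
        field_simp
        linarith [h]
      rw [h1, one_smul]
    rw [hcoef, hwdef]
    module

open FiniteDimensional in
lemma loc_cap_bound {q : ℕ} (hq1 : 1 ≤ q) :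
    ∃ c : ℝ≥0∞, c ≠ ⊤ ∧ ∀ ξ : EuclideanSpace ℝ (Fin (q + 1)), ‖ξ‖ = 1 → ∀ r : ℝ, 0 ≤ r →
      μH[(q:ℝ)] {z : EuclideanSpace ℝ (Fin (q + 1)) | ‖z‖ = 1 ∧ Real.arccos ⟪z, ξ⟫ ≤ r}
        ≤ c * ENNReal.ofReal ((min r Real.pi) ^ q) := by
  classical
  set K : ℝ≥0 := (Fintype.card (Fin q) : ℝ≥0) ^ (1 / (2:ℝ≥0∞)).toReal with hK
  refine ⟨((6:ℝ≥0):ℝ≥0∞) ^ (q:ℝ) * (K:ℝ≥0∞) ^ (q:ℝ) * ENNReal.ofReal ((2:ℝ) ^ q), ?_, ?_⟩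
  · apply ENNReal.mul_ne_top
    apply ENNReal.mul_ne_top
    · exact ENNReal.rpow_ne_top_of_nonneg (by positivity) (by norm_num)
    · exact ENNReal.rpow_ne_top_of_nonneg (by positivity) ENNReal.coe_ne_top
    · exact ENNReal.ofReal_ne_top
  · intro ξ hξ r hr
    set V := (ℝ ∙ ξ)ᗮ with hV
    have hξ0 : ξ ≠ 0 := by
      intro h; rw [h, norm_zero] at hξ; norm_num at hξ
    have hrank : Module.finrank ℝ V = q := by
      have h1 := Submodule.finrank_add_finrank_orthogonal (K := ℝ ∙ ξ) (𝕜 := ℝ)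
      rw [finrank_span_singleton hξ0, finrank_euclideanSpace_fin] at h1
      rw [← hV] at h1
      omega
    set b : OrthonormalBasis (Fin q) ℝ V :=
      (stdOrthonormalBasis ℝ V).reindex (finCongr hrank) with hb
    set T : EuclideanSpace ℝ (Fin q) →ₗᵢ[ℝ] EuclideanSpace ℝ (Fin (q + 1)) :=
      V.subtypeₗᵢ.comp b.repr.symm.toLinearIsometry with hT
    have hTmem : ∀ v, (T v : EuclideanSpace ℝ (Fin (q + 1))) ∈ V := fun v =>
      (b.repr.symm v).2
    have hTorth : ∀ v, ⟪ξ, T v⟫ = 0 := fun v =>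
      Submodule.mem_orthogonal_singleton_iff_inner_right.mp (hTmem v)
    have hTs : ∀ w, ⟪ξ, w⟫ = 0 → ∃ v, T v = w := by
      intro w hw
      refine ⟨b.repr ⟨w, Submodule.mem_orthogonal_singleton_iff_inner_right.mpr hw⟩, ?_⟩
      simp [hT]
    set ρ : ℝ := min r Real.pi with hρ
    have hρ0 : 0 ≤ ρ := le_min hr Real.pi_nonneg
    have hsub : {z : EuclideanSpace ℝ (Fin (q + 1)) | ‖z‖ = 1 ∧ Real.arccos ⟪z, ξ⟫ ≤ r}
        ⊆ sphExp ξ T '' (Metric.closedBall 0 ρ) := by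
      rintro z ⟨hz1, hz2⟩
      obtain ⟨v, hv1, hv2⟩ := sphExp_surj hq1 hξ hz1 T hTorth hTs
      exact ⟨v, by
        rw [Metric.mem_closedBall, dist_zero_right, hv1]
        exact le_min hz2 (Real.arccos_le_pi _), hv2⟩
    have hq0 : (0:ℝ) ≤ (q:ℝ) := by positivity
    -- step 1 : Lipschitz image
    have step1 : μH[(q:ℝ)] {z : EuclideanSpace ℝ (Fin (q + 1)) | ‖z‖ = 1 ∧ Real.arccos ⟪z, ξ⟫ ≤ r}
        ≤ ((6:ℝ≥0):ℝ≥0∞) ^ (q:ℝ) * μH[(q:ℝ)] (Metric.closedBall (0 : EuclideanSpace ℝ (Fin q)) ρ) := by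
      refine le_trans (measure_mono hsub) ?_
      exact ((sphExp_lipschitz hξ T).mono
        (Metric.closedBall_subset_closedBall (min_le_right r Real.pi))).hausdorffMeasure_image_le hq0
    -- step 2 : compare Euclidean ball with sup-norm ball
    have hlip1 := PiLp.lipschitzWith_ofLp 2 (fun _ : Fin q => ℝ)
    have halip := PiLp.antilipschitzWith_ofLp 2 (fun _ : Fin q => ℝ)
    have hsymm : LipschitzWith K (⇑(WithLp.equiv 2 (Fin q → ℝ)).symm) :=
      halip.to_rightInverse (fun x => (WithLp.equiv 2 (Fin q → ℝ)).apply_symm_apply x)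
    have step2 : μH[(q:ℝ)] (Metric.closedBall (0 : EuclideanSpace ℝ (Fin q)) ρ)
        ≤ (K:ℝ≥0∞) ^ (q:ℝ) * μH[(q:ℝ)] (Metric.closedBall (0 : Fin q → ℝ) ρ) := by
      have himg : Metric.closedBall (0 : EuclideanSpace ℝ (Fin q)) ρ ⊆
          (⇑(WithLp.equiv 2 (Fin q → ℝ)).symm) '' (Metric.closedBall (0 : Fin q → ℝ) ρ) := by
        intro x hx
        refine ⟨WithLp.equiv 2 (Fin q → ℝ) x, ?_, (WithLp.equiv 2 (Fin q → ℝ)).symm_apply_apply x⟩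
        rw [Metric.mem_closedBall] at hx ⊢
        have h0 : WithLp.equiv 2 (Fin q → ℝ) (0 : EuclideanSpace ℝ (Fin q)) = 0 := rfl
        calc dist (WithLp.equiv 2 (Fin q → ℝ) x) (0 : Fin q → ℝ)
            = dist (WithLp.equiv 2 (Fin q → ℝ) x) (WithLp.equiv 2 (Fin q → ℝ) 0) := by rw [h0]
          _ ≤ 1 * dist x 0 := hlip1.dist_le_mul x 0
          _ ≤ ρ := by rw [one_mul]; exact hx
      exact le_trans (measure_mono himg) (hsymm.hausdorffMeasure_image_le hq0 _)
    -- step 3 : pi measure computation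
    have step3 : μH[(q:ℝ)] (Metric.closedBall (0 : Fin q → ℝ) ρ) = ENNReal.ofReal ((2 * ρ) ^ q) := by
      have hpi : (μH[(q:ℝ)] : Measure (Fin q → ℝ)) = volume := by
        have := MeasureTheory.hausdorffMeasure_pi_real (ι := Fin q)
        simpa using this
      rw [hpi, Real.volume_pi_closedBall _ hρ0, Fintype.card_fin]
    calc μH[(q:ℝ)] {z : EuclideanSpace ℝ (Fin (q + 1)) | ‖z‖ = 1 ∧ Real.arccos ⟪z, ξ⟫ ≤ r}
        ≤ ((6:ℝ≥0):ℝ≥0∞) ^ (q:ℝ) * μH[(q:ℝ)] (Metric.closedBall (0 : EuclideanSpace ℝ (Fin q)) ρ) := step1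
      _ ≤ ((6:ℝ≥0):ℝ≥0∞) ^ (q:ℝ) * ((K:ℝ≥0∞) ^ (q:ℝ) * μH[(q:ℝ)] (Metric.closedBall (0 : Fin q → ℝ) ρ)) :=
          mul_le_mul_right step2 _
      _ = ((6:ℝ≥0):ℝ≥0∞) ^ (q:ℝ) * ((K:ℝ≥0∞) ^ (q:ℝ) * ENNReal.ofReal ((2 * ρ) ^ q)) := by rw [step3]
      _ = ((6:ℝ≥0):ℝ≥0∞) ^ (q:ℝ) * (K:ℝ≥0∞) ^ (q:ℝ) * ENNReal.ofReal ((2:ℝ) ^ q) * ENNReal.ofReal (ρ ^ q) := by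
          rw [mul_pow, ENNReal.ofReal_mul (by positivity)]
          ring

lemma loc_ann_bound {q : ℕ} (hq : 2 ≤ q) :
    ∃ c : ℝ≥0∞, c ≠ ⊤ ∧ ∀ ξ : EuclideanSpace ℝ (Fin (q + 1)), ‖ξ‖ = 1 → ∀ δ : ℝ, 0 < δ →
      ∫⁻ z in Metric.sphere (0 : EuclideanSpace ℝ (Fin (q + 1))) 1,
          ENNReal.ofReal (((1 + δ * Real.arccos ⟪z, ξ⟫) ^ 4)⁻¹) ∂(μH[(q:ℝ)])
        ≤ c * ENNReal.ofReal ((δ⁻¹) ^ 2) := by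
  obtain ⟨c₀, hc₀, hcap⟩ := loc_cap_bound (q := q) (by omega)
  refine ⟨c₀ * ENNReal.ofReal (Real.pi ^ (q - 2)) * 2, ?_, ?_⟩
  · exact ENNReal.mul_ne_top (ENNReal.mul_ne_top hc₀ ENNReal.ofReal_ne_top) (by norm_num)
  intro ξ hξ δ hδ0
  set Ssp := Metric.sphere (0 : EuclideanSpace ℝ (Fin (q + 1))) 1 with hSsp
  set g : EuclideanSpace ℝ (Fin (q + 1)) → ℝ≥0∞ :=
    fun z => ENNReal.ofReal (((1 + δ * Real.arccos ⟪z, ξ⟫) ^ 4)⁻¹) with hg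
  set θf : EuclideanSpace ℝ (Fin (q + 1)) → ℝ := fun z => Real.arccos ⟪z, ξ⟫ with hθf
  have hθcont : Continuous θf :=
    Real.continuous_arccos.comp (continuous_id.inner continuous_const)
  set T : ℕ → Set (EuclideanSpace ℝ (Fin (q + 1))) :=
    fun k => Ssp ∩ θf ⁻¹' (Set.Ico ((k:ℝ) / δ) (((k:ℝ) + 1) / δ)) with hTdef
  have hTmeas : ∀ k, MeasurableSet (T k) := fun k =>
    (Metric.isClosed_sphere.measurableSet).inter (hθcont.measurable measurableSet_Ico)
  have hdisj : Pairwise (Function.onFun Disjoint T) := by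
    intro k l hkl
    rw [Function.onFun]
    apply Set.disjoint_left.mpr
    rintro z ⟨-, hz1⟩ ⟨-, hz2⟩
    rw [Set.mem_preimage, Set.mem_Ico] at hz1 hz2
    have h1 : (k:ℝ) < (l:ℝ) + 1 := by
      have := lt_of_le_of_lt hz1.1 hz2.2
      rwa [div_lt_div_iff_of_pos_right hδ0] at this
    have h2 : (l:ℝ) < (k:ℝ) + 1 := by
      have := lt_of_le_of_lt hz2.1 hz1.2
      rwa [div_lt_div_iff_of_pos_right hδ0] at this
    have h1' : k < l + 1 := by exact_mod_cast h1
    have h2' : l < k + 1 := by exact_mod_cast h2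
    exact hkl (by omega)
  have hcover : Ssp = ⋃ k, T k := by
    ext z
    constructor
    · intro hz
      have hθ0 : 0 ≤ θf z := Real.arccos_nonneg _
      refine Set.mem_iUnion.mpr ⟨⌊δ * θf z⌋₊, hz, ?_⟩
      rw [Set.mem_preimage, Set.mem_Ico]
      constructor
      · rw [div_le_iff₀ hδ0, mul_comm]
        exact Nat.floor_le (by positivity)
      · rw [lt_div_iff₀ hδ0, mul_comm]
        exact Nat.lt_floor_add_one _
    · rintro hz
      obtain ⟨k, hk⟩ := Set.mem_iUnion.mp hz
      exact hk.1
  have hterm : ∀ k : ℕ, ∫⁻ z in T k, g z ∂(μH[(q:ℝ)]) ≤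
      (c₀ * ENNReal.ofReal (Real.pi ^ (q - 2) * (δ⁻¹) ^ 2)) *
        ENNReal.ofReal ((((k:ℝ) + 1) ^ 2)⁻¹) := by
    intro k
    have h1 : ∫⁻ z in T k, g z ∂(μH[(q:ℝ)]) ≤
        ∫⁻ _ in T k, ENNReal.ofReal (((1 + (k:ℝ)) ^ 4)⁻¹) ∂(μH[(q:ℝ)]) := by
      apply setLIntegral_mono' (hTmeas k)
      intro z hz
      apply ENNReal.ofReal_le_ofReal
      have hθ : (k:ℝ) / δ ≤ θf z := hz.2.1
      have hθ0 : 0 ≤ θf z := Real.arccos_nonneg _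
      have hk' : (k:ℝ) ≤ δ * θf z := by
        rw [div_le_iff₀ hδ0, mul_comm] at hθ
        exact hθ
      have h1k : 1 + (k:ℝ) ≤ 1 + δ * θf z := by linarith
      have hbase : (0:ℝ) < 1 + (k:ℝ) := by positivity
      exact inv_anti₀ (by positivity) (pow_le_pow_left₀ (by positivity) h1k 4)
    rw [setLIntegral_const] at h1
    have h2 : μH[(q:ℝ)] (T k) ≤ c₀ * ENNReal.ofReal ((min (((k:ℝ) + 1) / δ) Real.pi) ^ q) := by
      refine le_trans (measure_mono ?_) (hcap ξ hξ (((k:ℝ) + 1) / δ) (by positivity))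
      rintro z ⟨hz1, hz2⟩
      rw [Set.mem_preimage, Set.mem_Ico] at hz2
      exact ⟨mem_sphere_zero_iff_norm.mp hz1, le_of_lt hz2.2⟩
    have hmin0 : 0 ≤ min (((k:ℝ) + 1) / δ) Real.pi := le_min (by positivity) Real.pi_nonneg
    have hminq : (min (((k:ℝ) + 1) / δ) Real.pi) ^ q ≤
        (((k:ℝ) + 1) / δ) ^ 2 * Real.pi ^ (q - 2) := by
      have hsplit : (min (((k:ℝ) + 1) / δ) Real.pi) ^ q =
          (min (((k:ℝ) + 1) / δ) Real.pi) ^ 2 * (min (((k:ℝ) + 1) / δ) Real.pi) ^ (q - 2) := by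
        rw [← pow_add]
        congr 1
        omega
      rw [hsplit]
      apply mul_le_mul
      · exact pow_le_pow_left₀ hmin0 (min_le_left _ _) 2
      · exact pow_le_pow_left₀ hmin0 (min_le_right _ _) (q - 2)
      · positivity
      · positivity
    have hkey : (((1:ℝ) + (k:ℝ)) ^ 4)⁻¹ * ((((k:ℝ) + 1) / δ) ^ 2 * Real.pi ^ (q - 2)) =
        Real.pi ^ (q - 2) * (δ⁻¹) ^ 2 * ((((k:ℝ) + 1) ^ 2)⁻¹) := by
      have hk0 : (0:ℝ) < (k:ℝ) + 1 := by positivity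
      field_simp
      ring
    calc ∫⁻ z in T k, g z ∂(μH[(q:ℝ)])
        ≤ ENNReal.ofReal (((1 + (k:ℝ)) ^ 4)⁻¹) * μH[(q:ℝ)] (T k) := h1
      _ ≤ ENNReal.ofReal (((1 + (k:ℝ)) ^ 4)⁻¹) *
            (c₀ * ENNReal.ofReal ((min (((k:ℝ) + 1) / δ) Real.pi) ^ q)) := mul_le_mul_right h2 _
      _ = c₀ * (ENNReal.ofReal (((1 + (k:ℝ)) ^ 4)⁻¹) *
            ENNReal.ofReal ((min (((k:ℝ) + 1) / δ) Real.pi) ^ q)) := by ring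
      _ = c₀ * ENNReal.ofReal ((((1:ℝ) + (k:ℝ)) ^ 4)⁻¹ * (min (((k:ℝ) + 1) / δ) Real.pi) ^ q) := by
          rw [ENNReal.ofReal_mul (by positivity)]
      _ ≤ c₀ * ENNReal.ofReal (Real.pi ^ (q - 2) * (δ⁻¹) ^ 2 * ((((k:ℝ) + 1) ^ 2)⁻¹)) := by
          apply mul_le_mul_right
          apply ENNReal.ofReal_le_ofReal
          rw [← hkey]
          apply mul_le_mul_of_nonneg_left hminq (by positivity)
      _ = (c₀ * ENNReal.ofReal (Real.pi ^ (q - 2) * (δ⁻¹) ^ 2)) *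
            ENNReal.ofReal ((((k:ℝ) + 1) ^ 2)⁻¹) := by
          rw [ENNReal.ofReal_mul (by positivity), mul_assoc]
  calc ∫⁻ z in Ssp, g z ∂(μH[(q:ℝ)])
      = ∑' k, ∫⁻ z in T k, g z ∂(μH[(q:ℝ)]) := by
        rw [hcover]  -- replaces Ssp in the domain
        exact lintegral_iUnion hTmeas hdisj _
    _ ≤ ∑' k : ℕ, (c₀ * ENNReal.ofReal (Real.pi ^ (q - 2) * (δ⁻¹) ^ 2)) *
          ENNReal.ofReal ((((k:ℝ) + 1) ^ 2)⁻¹) := ENNReal.tsum_le_tsum hterm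
    _ = (c₀ * ENNReal.ofReal (Real.pi ^ (q - 2) * (δ⁻¹) ^ 2)) *
          ∑' k : ℕ, ENNReal.ofReal ((((k:ℝ) + 1) ^ 2)⁻¹) := ENNReal.tsum_mul_left
    _ ≤ (c₀ * ENNReal.ofReal (Real.pi ^ (q - 2) * (δ⁻¹) ^ 2)) * 2 :=
        mul_le_mul_right loc_tsum_inv_sq_le _
    _ = c₀ * ENNReal.ofReal (Real.pi ^ (q - 2)) * 2 * ENNReal.ofReal ((δ⁻¹) ^ 2) := by
        rw [ENNReal.ofReal_mul (by positivity)]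
        ring

set_option maxHeartbeats 1000000 in
/-- **Integral bound for products of localized functions on the sphere.**
If `ψ₁, ψ₂` satisfy needlet-type localization bounds at scale `j` around `ξ₁, ξ₂` on the
unit sphere `S^q ⊆ ℝ^{q+1}` (with geodesic distance `d(z,w) = arccos ⟪z,w⟫` and surface
measure `μH[q]`), and `0 ≤ f ≤ M`, then
`∫ |ψ₁|^{n₁} |ψ₂|^{n₂} f ≤ C B^{((n₁+n₂)/2-1) q j} (1 + B^{qj/2} d(ξ₁,ξ₂))^{-min(n₁,n₂) τ}`,
with `C` independent of `j`, `ξ₁`, `ξ₂`. -/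
theorem localized_product_integral_bound
    (q : ℕ) (hq : 2 ≤ q) (B τ κ M : ℝ) (hB : 1 < B) (hτ : 2 ≤ τ) (hκ : 0 < κ)
    (n₁ n₂ : ℕ) (hn₁ : 2 ≤ n₁) (hn₂ : 2 ≤ n₂) :
    ∃ C > (0 : ℝ), ∀ (j : ℕ) (ξ₁ ξ₂ : EuclideanSpace ℝ (Fin (q + 1))),
      ξ₁ ∈ Metric.sphere (0 : EuclideanSpace ℝ (Fin (q + 1))) 1 →
      ξ₂ ∈ Metric.sphere (0 : EuclideanSpace ℝ (Fin (q + 1))) 1 →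
      ∀ ψ₁ ψ₂ f : EuclideanSpace ℝ (Fin (q + 1)) → ℝ,
      Measurable ψ₁ → Measurable ψ₂ → Measurable f →
      (∀ z ∈ Metric.sphere (0 : EuclideanSpace ℝ (Fin (q + 1))) 1,
        0 ≤ f z ∧ f z ≤ M) →
      (∀ z ∈ Metric.sphere (0 : EuclideanSpace ℝ (Fin (q + 1))) 1,
        |ψ₁ z| ≤ κ * B ^ ((q : ℝ) * j / 2) /
          (1 + B ^ ((q : ℝ) * j / 2) * Real.arccos ⟪z, ξ₁⟫) ^ τ) →
      (∀ z ∈ Metric.sphere (0 : EuclideanSpace ℝ (Fin (q + 1))) 1,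
        |ψ₂ z| ≤ κ * B ^ ((q : ℝ) * j / 2) /
          (1 + B ^ ((q : ℝ) * j / 2) * Real.arccos ⟪z, ξ₂⟫) ^ τ) →
      ∫ z in (Metric.sphere (0 : EuclideanSpace ℝ (Fin (q + 1))) 1 : Set _),
          |ψ₁ z| ^ n₁ * |ψ₂ z| ^ n₂ * f z ∂(μH[(q : ℝ)])
        ≤ C * B ^ ((((n₁ : ℝ) + (n₂ : ℝ)) / 2 - 1) * q * j) *
          (1 + B ^ ((q : ℝ) * j / 2) * Real.arccos ⟪ξ₁, ξ₂⟫) ^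
            (-(min n₁ n₂ : ℝ) * τ) := by
  obtain ⟨c', hc'top, hJ⟩ := loc_ann_bound (q := q) hq
  have h2c : (2 : ℝ≥0∞) * c' ≠ ⊤ := ENNReal.mul_ne_top (by norm_num) hc'top
  set r : ℝ := ((2 : ℝ≥0∞) * c').toReal with hr
  have hrnn : 0 ≤ r := ENNReal.toReal_nonneg
  set m : ℕ := min n₁ n₂ with hm
  set n : ℕ := n₁ + n₂ with hn
  set M' : ℝ := max M 0 with hM'
  have hM'0 : 0 ≤ M' := le_max_right M 0
  have hτ0 : (0:ℝ) < τ := by linarith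
  refine ⟨(M' + 1) * κ ^ n * 2 ^ ((m:ℝ) * τ) * (r + 1), by positivity, ?_⟩
  intro j ξ₁ ξ₂ hξ₁ hξ₂ ψ₁ ψ₂ f hψ₁m hψ₂m hfm hf h₁ h₂
  have hξ₁n : ‖ξ₁‖ = 1 := mem_sphere_zero_iff_norm.mp hξ₁
  have hξ₂n : ‖ξ₂‖ = 1 := mem_sphere_zero_iff_norm.mp hξ₂
  set S := (Metric.sphere (0 : EuclideanSpace ℝ (Fin (q + 1))) 1 : Set _) with hS
  have hSmeas : MeasurableSet S := Metric.isClosed_sphere.measurableSet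
  set δ : ℝ := B ^ ((q : ℝ) * j / 2) with hδdef
  have hB0 : (0:ℝ) < B := lt_trans one_pos hB
  have hδ1 : 1 ≤ δ := Real.one_le_rpow hB.le (by positivity)
  have hδ0 : (0:ℝ) < δ := lt_of_lt_of_le one_pos hδ1
  set dd : ℝ := Real.arccos ⟪ξ₁, ξ₂⟫ with hdd
  have hdd0 : 0 ≤ dd := Real.arccos_nonneg _
  set D₁ : EuclideanSpace ℝ (Fin (q + 1)) → ℝ := fun z => 1 + δ * Real.arccos ⟪z, ξ₁⟫ with hD₁
  set D₂ : EuclideanSpace ℝ (Fin (q + 1)) → ℝ := fun z => 1 + δ * Real.arccos ⟪z, ξ₂⟫ with hD₂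
  have hD₁one : ∀ z, 1 ≤ D₁ z := fun z => by
    have h := Real.arccos_nonneg ⟪z, ξ₁⟫
    have h2 := mul_nonneg hδ0.le h
    simp only [hD₁]; linarith
  have hD₂one : ∀ z, 1 ≤ D₂ z := fun z => by
    have h := Real.arccos_nonneg ⟪z, ξ₂⟫
    have h2 := mul_nonneg hδ0.le h
    simp only [hD₂]; linarith
  have hdpos : (0:ℝ) < 1 + δ * dd := by nlinarith
  set A : ℝ := M' * κ ^ n * δ ^ n * 2 ^ ((m:ℝ) * τ) * (1 + δ * dd) ^ (-((m:ℝ) * τ)) with hA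
  have hAnn : 0 ≤ A := by positivity
  have hmτ : (0:ℝ) ≤ (m:ℝ) * τ := by positivity
  have hhalf : (0:ℝ) < (1 + δ * dd) / 2 := by linarith
  -- generic core bound
  have core : ∀ (DD EE : ℝ), 1 ≤ DD → 1 ≤ EE → ∀ (nn ee : ℕ), m ≤ nn → 2 ≤ ee →
      (1 + δ * dd) / 2 ≤ DD →
      (DD ^ ((nn:ℝ) * τ))⁻¹ * (EE ^ ((ee:ℝ) * τ))⁻¹ ≤
        2 ^ ((m:ℝ) * τ) * (1 + δ * dd) ^ (-((m:ℝ) * τ)) * (EE ^ 4)⁻¹ := by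
    intro DD EE hDD hEE nn ee hmnn hee hDdd
    have hDDpos : (0:ℝ) < DD := by linarith
    have hEEpos : (0:ℝ) < EE := by linarith
    have e1 : DD ^ ((m:ℝ) * τ) ≤ DD ^ ((nn:ℝ) * τ) := by
      apply Real.rpow_le_rpow_of_exponent_le hDD
      apply mul_le_mul_of_nonneg_right _ hτ0.le
      exact_mod_cast hmnn
    have e2 : ((1 + δ * dd) / 2) ^ ((m:ℝ) * τ) ≤ DD ^ ((m:ℝ) * τ) :=
      Real.rpow_le_rpow hhalf.le hDdd hmτ
    have e4 : (DD ^ ((nn:ℝ) * τ))⁻¹ ≤ (((1 + δ * dd) / 2) ^ ((m:ℝ) * τ))⁻¹ :=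
      inv_anti₀ (Real.rpow_pos_of_pos hhalf _) (le_trans e2 e1)
    have e5 : (((1 + δ * dd) / 2) ^ ((m:ℝ) * τ))⁻¹ =
        2 ^ ((m:ℝ) * τ) * (1 + δ * dd) ^ (-((m:ℝ) * τ)) := by
      rw [Real.div_rpow (by linarith) (by norm_num), Real.rpow_neg (by linarith)]
      have h2p : (0:ℝ) < (2:ℝ) ^ ((m:ℝ) * τ) := Real.rpow_pos_of_pos two_pos _
      field_simp
    have e6 : (EE ^ ((ee:ℝ) * τ))⁻¹ ≤ (EE ^ 4)⁻¹ := by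
      have h4 : EE ^ ((4:ℕ):ℝ) ≤ EE ^ ((ee:ℝ) * τ) := by
        apply Real.rpow_le_rpow_of_exponent_le hEE
        have hee' : (2:ℝ) ≤ (ee:ℝ) := by exact_mod_cast hee
        push_cast
        nlinarith
      rw [Real.rpow_natCast] at h4
      exact inv_anti₀ (by positivity) h4
    calc (DD ^ ((nn:ℝ) * τ))⁻¹ * (EE ^ ((ee:ℝ) * τ))⁻¹
        ≤ (2 ^ ((m:ℝ) * τ) * (1 + δ * dd) ^ (-((m:ℝ) * τ))) * (EE ^ 4)⁻¹ := by
          apply mul_le_mul (le_trans e4 (le_of_eq e5)) e6 (by positivity) (by positivity)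
      _ = 2 ^ ((m:ℝ) * τ) * (1 + δ * dd) ^ (-((m:ℝ) * τ)) * (EE ^ 4)⁻¹ := by ring
  -- pointwise bound
  have hptwise : ∀ z ∈ S, |ψ₁ z| ^ n₁ * |ψ₂ z| ^ n₂ * f z ≤
      A * (((D₁ z) ^ 4)⁻¹ + ((D₂ z) ^ 4)⁻¹) := by
    intro z hz
    have hzn : ‖z‖ = 1 := mem_sphere_zero_iff_norm.mp hz
    obtain ⟨hf0, hfM⟩ := hf z hz
    have hb₁ := h₁ z hz
    have hb₂ := h₂ z hz
    have hD₁z := hD₁one z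
    have hD₂z := hD₂one z
    have hD₁pos : (0:ℝ) < D₁ z := by linarith
    have hD₂pos : (0:ℝ) < D₂ z := by linarith
    have hP₁pos : (0:ℝ) < (D₁ z) ^ τ := Real.rpow_pos_of_pos hD₁pos τ
    have hP₂pos : (0:ℝ) < (D₂ z) ^ τ := Real.rpow_pos_of_pos hD₂pos τ
    have s1 : |ψ₁ z| ^ n₁ * |ψ₂ z| ^ n₂ * f z ≤
        (κ * δ / (D₁ z) ^ τ) ^ n₁ * (κ * δ / (D₂ z) ^ τ) ^ n₂ * M' := by
      have e1 : |ψ₁ z| ^ n₁ ≤ (κ * δ / (D₁ z) ^ τ) ^ n₁ :=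
        pow_le_pow_left₀ (abs_nonneg _) hb₁ n₁
      have e2 : |ψ₂ z| ^ n₂ ≤ (κ * δ / (D₂ z) ^ τ) ^ n₂ :=
        pow_le_pow_left₀ (abs_nonneg _) hb₂ n₂
      have e3 : f z ≤ M' := le_trans hfM (le_max_left M 0)
      apply mul_le_mul _ e3 hf0 (by positivity)
      apply mul_le_mul e1 e2 (by positivity) (by positivity)
    have hnat₁ : ((D₁ z) ^ τ) ^ (n₁:ℕ) = (D₁ z) ^ ((n₁:ℝ) * τ) := by
      rw [← Real.rpow_natCast ((D₁ z) ^ τ) n₁, ← Real.rpow_mul hD₁pos.le, mul_comm]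
    have hnat₂ : ((D₂ z) ^ τ) ^ (n₂:ℕ) = (D₂ z) ^ ((n₂:ℝ) * τ) := by
      rw [← Real.rpow_natCast ((D₂ z) ^ τ) n₂, ← Real.rpow_mul hD₂pos.le, mul_comm]
    have hQ₁pos : (0:ℝ) < (D₁ z) ^ ((n₁:ℝ) * τ) := Real.rpow_pos_of_pos hD₁pos _
    have hQ₂pos : (0:ℝ) < (D₂ z) ^ ((n₂:ℝ) * τ) := Real.rpow_pos_of_pos hD₂pos _
    have s2 : (κ * δ / (D₁ z) ^ τ) ^ n₁ * (κ * δ / (D₂ z) ^ τ) ^ n₂ =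
        κ ^ n * δ ^ n * (((D₁ z) ^ ((n₁:ℝ) * τ))⁻¹ * ((D₂ z) ^ ((n₂:ℝ) * τ))⁻¹) := by
      rw [div_pow, div_pow, mul_pow, mul_pow, hnat₁, hnat₂, hn, pow_add, pow_add]
      field_simp
    have htri : dd ≤ Real.arccos ⟪z, ξ₁⟫ + Real.arccos ⟪z, ξ₂⟫ := by
      have h := loc_arccos_triangle ξ₁ z ξ₂ hξ₁n hzn hξ₂n
      rwa [← real_inner_comm ξ₁ z, ← hdd] at h
    have s3 : ((D₁ z) ^ ((n₁:ℝ) * τ))⁻¹ * ((D₂ z) ^ ((n₂:ℝ) * τ))⁻¹ ≤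
        2 ^ ((m:ℝ) * τ) * (1 + δ * dd) ^ (-((m:ℝ) * τ)) * (((D₁ z) ^ 4)⁻¹ + ((D₂ z) ^ 4)⁻¹) := by
      have hposK : (0:ℝ) ≤ 2 ^ ((m:ℝ) * τ) * (1 + δ * dd) ^ (-((m:ℝ) * τ)) := by positivity
      rcases le_or_gt (dd / 2) (Real.arccos ⟪z, ξ₁⟫) with hcase | hcase
      · have hDdd : (1 + δ * dd) / 2 ≤ D₁ z := by
          have h3 : δ * (dd / 2) ≤ δ * Real.arccos ⟪z, ξ₁⟫ :=
            mul_le_mul_of_nonneg_left hcase hδ0.le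
          simp only [hD₁]; linarith
        have hc := core (D₁ z) (D₂ z) hD₁z hD₂z n₁ n₂ (min_le_left _ _) hn₂ hDdd
        calc ((D₁ z) ^ ((n₁:ℝ) * τ))⁻¹ * ((D₂ z) ^ ((n₂:ℝ) * τ))⁻¹
            ≤ 2 ^ ((m:ℝ) * τ) * (1 + δ * dd) ^ (-((m:ℝ) * τ)) * (((D₂ z) ^ 4)⁻¹) := hc
          _ ≤ _ := by
              apply mul_le_mul_of_nonneg_left _ hposK
              have : (0:ℝ) ≤ ((D₁ z) ^ 4)⁻¹ := by positivity
              linarith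
      · have hcase2 : dd / 2 ≤ Real.arccos ⟪z, ξ₂⟫ := by linarith
        have hDdd : (1 + δ * dd) / 2 ≤ D₂ z := by
          have h3 : δ * (dd / 2) ≤ δ * Real.arccos ⟪z, ξ₂⟫ :=
            mul_le_mul_of_nonneg_left hcase2 hδ0.le
          simp only [hD₂]; linarith
        have hc := core (D₂ z) (D₁ z) hD₂z hD₁z n₂ n₁ (min_le_right _ _) hn₁ hDdd
        calc ((D₁ z) ^ ((n₁:ℝ) * τ))⁻¹ * ((D₂ z) ^ ((n₂:ℝ) * τ))⁻¹
            = ((D₂ z) ^ ((n₂:ℝ) * τ))⁻¹ * ((D₁ z) ^ ((n₁:ℝ) * τ))⁻¹ := by ring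
          _ ≤ 2 ^ ((m:ℝ) * τ) * (1 + δ * dd) ^ (-((m:ℝ) * τ)) * (((D₁ z) ^ 4)⁻¹) := hc
          _ ≤ _ := by
              apply mul_le_mul_of_nonneg_left _ hposK
              have : (0:ℝ) ≤ ((D₂ z) ^ 4)⁻¹ := by positivity
              linarith
    calc |ψ₁ z| ^ n₁ * |ψ₂ z| ^ n₂ * f z
        ≤ (κ * δ / (D₁ z) ^ τ) ^ n₁ * (κ * δ / (D₂ z) ^ τ) ^ n₂ * M' := s1
      _ = M' * (κ ^ n * δ ^ n * (((D₁ z) ^ ((n₁:ℝ) * τ))⁻¹ * ((D₂ z) ^ ((n₂:ℝ) * τ))⁻¹)) := by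
          rw [s2]; ring
      _ ≤ M' * (κ ^ n * δ ^ n * (2 ^ ((m:ℝ) * τ) * (1 + δ * dd) ^ (-((m:ℝ) * τ)) *
            (((D₁ z) ^ 4)⁻¹ + ((D₂ z) ^ 4)⁻¹))) := by
          apply mul_le_mul_of_nonneg_left _ hM'0
          apply mul_le_mul_of_nonneg_left s3 (by positivity)
      _ = A * (((D₁ z) ^ 4)⁻¹ + ((D₂ z) ^ 4)⁻¹) := by rw [hA]; ring
  -- measurability
  have hFmeas : Measurable (fun z => |ψ₁ z| ^ n₁ * |ψ₂ z| ^ n₂ * f z) :=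
    ((hψ₁m.abs.pow_const n₁).mul (hψ₂m.abs.pow_const n₂)).mul hfm
  have hFnn : 0 ≤ᵐ[μH[(q:ℝ)].restrict S] (fun z => |ψ₁ z| ^ n₁ * |ψ₂ z| ^ n₂ * f z) := by
    apply ae_restrict_of_forall_mem hSmeas
    intro z hz
    exact mul_nonneg (by positivity) (hf z hz).1
  have hD₁cont : Continuous D₁ := continuous_const.add (continuous_const.mul
    (Real.continuous_arccos.comp (continuous_id.inner continuous_const)))
  have hD₂cont : Continuous D₂ := continuous_const.add (continuous_const.mul
    (Real.continuous_arccos.comp (continuous_id.inner continuous_const)))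
  have hg₁meas : Measurable (fun z => ENNReal.ofReal (((D₁ z) ^ 4)⁻¹)) := by
    apply ENNReal.measurable_ofReal.comp
    apply Continuous.measurable
    apply Continuous.inv₀ (hD₁cont.pow 4)
    intro z
    have := hD₁one z
    exact pow_ne_zero 4 (ne_of_gt (by linarith))
  have hg₂meas : Measurable (fun z => ENNReal.ofReal (((D₂ z) ^ 4)⁻¹)) := by
    apply ENNReal.measurable_ofReal.comp
    apply Continuous.measurable
    apply Continuous.inv₀ (hD₂cont.pow 4)
    intro z
    have := hD₂one z
    exact pow_ne_zero 4 (ne_of_gt (by linarith))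
  rw [integral_eq_lintegral_of_nonneg_ae hFnn hFmeas.aestronglyMeasurable]
  have hBX : (0:ℝ) < B ^ ((((n₁ : ℝ) + (n₂ : ℝ)) / 2 - 1) * q * j) := Real.rpow_pos_of_pos hB0 _
  have hPd : (0:ℝ) < (1 + δ * dd) ^ (-(min n₁ n₂ : ℝ) * τ) := Real.rpow_pos_of_pos hdpos _
  apply ENNReal.toReal_le_of_le_ofReal
    (mul_nonneg (mul_nonneg (by positivity) hBX.le) hPd.le)
  -- final real inequality
  have hpow : δ ^ n * (δ⁻¹) ^ 2 = B ^ ((((n₁ : ℝ) + (n₂ : ℝ)) / 2 - 1) * q * j) := by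
    have h1 : δ ^ n = B ^ (((q : ℝ) * j / 2) * n) := by
      rw [hδdef, ← Real.rpow_natCast (B ^ ((q : ℝ) * j / 2)) n, ← Real.rpow_mul hB0.le]
    have h2 : (δ⁻¹) ^ 2 = B ^ (-(((q : ℝ) * j / 2) * 2)) := by
      rw [hδdef, ← Real.rpow_neg hB0.le, ← Real.rpow_natCast (B ^ (-((q : ℝ) * j / 2))) 2,
        ← Real.rpow_mul hB0.le]
      congr 1
      push_cast
      ring
    rw [h1, h2, ← Real.rpow_add hB0]
    congr 1
    rw [hn]
    push_cast
    ring
  have hexp : (-(min n₁ n₂ : ℝ)) * τ = -((m:ℝ) * τ) := by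
    rw [hm]
    push_cast
    ring
  have hfinal : A * (r * (δ⁻¹) ^ 2) ≤
      (M' + 1) * κ ^ n * 2 ^ ((m:ℝ) * τ) * (r + 1) *
        B ^ ((((n₁ : ℝ) + (n₂ : ℝ)) / 2 - 1) * q * j) *
        (1 + δ * dd) ^ (-(min n₁ n₂ : ℝ) * τ) := by
    have h2m : (0:ℝ) < 2 ^ ((m:ℝ) * τ) := Real.rpow_pos_of_pos two_pos _
    have hκn : (0:ℝ) < κ ^ n := by positivity
    have hPd' : (0:ℝ) < (1 + δ * dd) ^ (-((m:ℝ) * τ)) := Real.rpow_pos_of_pos hdpos _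
    have hcoef : M' * κ ^ n * 2 ^ ((m:ℝ) * τ) * r ≤
        (M' + 1) * κ ^ n * 2 ^ ((m:ℝ) * τ) * (r + 1) := by
      nlinarith [mul_pos hκn h2m, mul_nonneg (mul_nonneg hM'0 hκn.le) h2m.le,
        mul_nonneg hrnn (mul_pos hκn h2m).le]
    calc A * (r * (δ⁻¹) ^ 2)
        = (M' * κ ^ n * 2 ^ ((m:ℝ) * τ) * r) * (δ ^ n * (δ⁻¹) ^ 2) *
            (1 + δ * dd) ^ (-((m:ℝ) * τ)) := by rw [hA]; ring
      _ = (M' * κ ^ n * 2 ^ ((m:ℝ) * τ) * r) *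
            B ^ ((((n₁ : ℝ) + (n₂ : ℝ)) / 2 - 1) * q * j) *
            (1 + δ * dd) ^ (-((m:ℝ) * τ)) := by rw [hpow]
      _ ≤ ((M' + 1) * κ ^ n * 2 ^ ((m:ℝ) * τ) * (r + 1)) *
            B ^ ((((n₁ : ℝ) + (n₂ : ℝ)) / 2 - 1) * q * j) *
            (1 + δ * dd) ^ (-((m:ℝ) * τ)) := by
          apply mul_le_mul_of_nonneg_right _ hPd'.le
          exact mul_le_mul_of_nonneg_right hcoef hBX.le
      _ = _ := by rw [← hexp]
  calc ∫⁻ z in S, ENNReal.ofReal (|ψ₁ z| ^ n₁ * |ψ₂ z| ^ n₂ * f z) ∂(μH[(q:ℝ)])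
      ≤ ∫⁻ z in S, (ENNReal.ofReal A * (ENNReal.ofReal (((D₁ z) ^ 4)⁻¹) +
          ENNReal.ofReal (((D₂ z) ^ 4)⁻¹))) ∂(μH[(q:ℝ)]) := by
        apply setLIntegral_mono' hSmeas
        intro z hz
        have h1 : (0:ℝ) ≤ ((D₁ z) ^ 4)⁻¹ := by
          have := hD₁one z; positivity
        have h2 : (0:ℝ) ≤ ((D₂ z) ^ 4)⁻¹ := by
          have := hD₂one z; positivity
        rw [← ENNReal.ofReal_add h1 h2, ← ENNReal.ofReal_mul hAnn]
        exact ENNReal.ofReal_le_ofReal (hptwise z hz)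
    _ = ENNReal.ofReal A * ((∫⁻ z in S, ENNReal.ofReal (((D₁ z) ^ 4)⁻¹) ∂(μH[(q:ℝ)])) +
          ∫⁻ z in S, ENNReal.ofReal (((D₂ z) ^ 4)⁻¹) ∂(μH[(q:ℝ)])) := by
        rw [lintegral_const_mul _ (f := fun z => ENNReal.ofReal (((D₁ z) ^ 4)⁻¹) + ENNReal.ofReal (((D₂ z) ^ 4)⁻¹)) (hg₁meas.add hg₂meas), lintegral_add_left hg₁meas]
    _ ≤ ENNReal.ofReal A * (c' * ENNReal.ofReal ((δ⁻¹) ^ 2) + c' * ENNReal.ofReal ((δ⁻¹) ^ 2)) := by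
        apply mul_le_mul_right
        exact add_le_add (hJ ξ₁ hξ₁n δ hδ0) (hJ ξ₂ hξ₂n δ hδ0)
    _ = ENNReal.ofReal A * (((2:ℝ≥0∞) * c') * ENNReal.ofReal ((δ⁻¹) ^ 2)) := by ring
    _ = ENNReal.ofReal A * (ENNReal.ofReal r * ENNReal.ofReal ((δ⁻¹) ^ 2)) := by
        rw [hr, ENNReal.ofReal_toReal h2c]
    _ = ENNReal.ofReal (A * (r * (δ⁻¹) ^ 2)) := by
        rw [ENNReal.ofReal_mul hAnn, ENNReal.ofReal_mul hrnn]
    _ ≤ ENNReal.ofReal ((M' + 1) * κ ^ n * 2 ^ ((m:ℝ) * τ) * (r + 1) *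
          B ^ ((((n₁ : ℝ) + (n₂ : ℝ)) / 2 - 1) * q * j) *
          (1 + δ * dd) ^ (-(min n₁ n₂ : ℝ) * τ)) := ENNReal.ofReal_le_ofReal hfinal
end Cap
end

section
/- Let q ≥ 2 be an integer, let S^q denote the unit sphere in ℝ^{q+1} equipped with its surface measure dz and geodesic distance d(z_1, z_2) = arccos⟨z_1, z_2⟩. Fix B > 1, an integer j ≥ 0, real numbers κ > 0 and τ > 2, and an integer n ≥ 1. Suppose g : S^q × S^q → ℝ is a measurable kernel satisfying |g(z_1, z_2)| ≤ κ B^{qj/2} / (1 + B^{qj/2} d(z_1, z_2))^τ for all z_1, z_2 ∈ S^q. Then there exists a constant C > 0, depending only on q, τ, κ, n (not on j), such that ∫_{S^q} ∫_{S^q} |g(z_1, z_2)|^n dz_1 dz_2 ≤ C · B^{qj(n/2 − 1)}. -/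
open MeasureTheory
open scoped RealInnerProductSpace

open Metric Module Set
open scoped ENNReal NNReal
set_option maxHeartbeats 2000000

private lemma sqrt_lip_aux {u u' : ℝ} (hu0 : 0 ≤ u) (hle : u ≤ u') (hu' : u' ≤ 1/2) :
    Real.sqrt (1 - u^2) - Real.sqrt (1 - u'^2) ≤ u' - u ∧
    0 ≤ Real.sqrt (1 - u^2) - Real.sqrt (1 - u'^2) := by
  set A := Real.sqrt (1 - u^2) with hA
  set B := Real.sqrt (1 - u'^2) with hB
  have h1 : A ^ 2 = 1 - u^2 := Real.sq_sqrt (by nlinarith)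
  have h2 : B ^ 2 = 1 - u'^2 := Real.sq_sqrt (by nlinarith)
  have hB0 : 0 ≤ B := Real.sqrt_nonneg _
  have hA0 : 0 ≤ A := Real.sqrt_nonneg _
  have hAB : B ≤ A := by nlinarith
  have h3 : (1:ℝ)/2 ≤ B := by
    rw [hB, show (1:ℝ)/2 = Real.sqrt ((1/2)^2) by rw [Real.sqrt_sq]; norm_num]
    exact Real.sqrt_le_sqrt (by nlinarith)
  refine ⟨?_, by linarith⟩
  have key : (A - B) * (A + B) = (u' + u) * (u' - u) := by nlinarith
  nlinarith [mul_le_mul_of_nonneg_left (show A + B ≥ 1 by linarith) (show 0 ≤ A - B by linarith)]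

lemma sqrt_lip {u u' : ℝ} (hu0 : 0 ≤ u) (hu : u ≤ 1/2) (hu0' : 0 ≤ u') (hu' : u' ≤ 1/2) :
    |Real.sqrt (1 - u^2) - Real.sqrt (1 - u'^2)| ≤ |u - u'| := by
  rcases le_total u u' with h | h
  · obtain ⟨h1, h2⟩ := sqrt_lip_aux hu0 h hu'
    rw [abs_of_nonneg h2, abs_sub_comm, abs_of_nonneg (by linarith)]
    exact h1
  · obtain ⟨h1, h2⟩ := sqrt_lip_aux hu0' h hu
    rw [abs_sub_comm, abs_of_nonneg h2, abs_of_nonneg (by linarith)]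
    exact h1

private lemma min_lip (a b : ℝ) : |min a (1/2) - min b (1/2)| ≤ |a - b| := by
  rw [abs_le]
  constructor <;> rw [min_def, min_def] <;> split_ifs <;>
    rcases abs_cases (a - b) with hc | hc <;> linarith [hc.1, hc.2]

private lemma cap_bound (q : ℕ) (hq : 2 ≤ q) :
    ∃ c : ℝ, 0 < c ∧ ∀ v : EuclideanSpace ℝ (Fin (q+1)), ‖v‖ = 1 →
      ∀ t : ℝ, 0 < t → t ≤ 1/2 →
      μH[(q:ℝ)] (sphere (0 : EuclideanSpace ℝ (Fin (q+1))) 1 ∩ closedBall v t)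
        ≤ ENNReal.ofReal (c * t ^ q) := by
  classical
  have hfr : finrank ℝ (EuclideanSpace ℝ (Fin q)) = q := finrank_euclideanSpace_fin
  have hHaar : (μH[(q:ℝ)] : Measure (EuclideanSpace ℝ (Fin q))).IsAddHaarMeasure := by
    rw [show ((q:ℝ)) = ((finrank ℝ (EuclideanSpace ℝ (Fin q)) : ℕ) : ℝ) by rw [hfr]]
    exact isAddHaarMeasure_hausdorffMeasure
  haveI := hHaar
  set m := μH[(q:ℝ)] (ball (0 : EuclideanSpace ℝ (Fin q)) 1) with hm_def
  have hm : m < ∞ := lt_of_le_of_lt (measure_mono ball_subset_closedBall)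
    ((isCompact_closedBall _ _).measure_lt_top)
  have ballq : ∀ t : ℝ, 0 ≤ t →
      μH[(q:ℝ)] (closedBall (0 : EuclideanSpace ℝ (Fin q)) t) = ENNReal.ofReal (t^q) * m := by
    intro t ht
    rw [Measure.addHaar_closedBall _ _ ht, hfr]
  refine ⟨2^q * (m.toReal + 1), by positivity, ?_⟩
  intro v hv t ht ht2
  have hv0 : v ≠ 0 := by intro h; rw [h, norm_zero] at hv; norm_num at hv
  haveI : Fact (finrank ℝ (EuclideanSpace ℝ (Fin (q+1))) = q + 1) := ⟨finrank_euclideanSpace_fin⟩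
  set e : (ℝ ∙ v)ᗮ ≃ₗᵢ[ℝ] EuclideanSpace ℝ (Fin q) :=
    (OrthonormalBasis.fromOrthogonalSpanSingleton (𝕜 := ℝ) q hv0).repr with he
  set ψ : ℝ → ℝ := fun u => Real.sqrt (1 - (min u (1/2))^2) with hψdef
  set h : EuclideanSpace ℝ (Fin q) → EuclideanSpace ℝ (Fin (q+1)) :=
    fun x => ψ ‖x‖ • v + ((e.symm x : (ℝ ∙ v)ᗮ) : EuclideanSpace ℝ (Fin (q+1))) with hh
  -- h is 2-Lipschitz
  have hlip : LipschitzWith 2 h := by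
    apply LipschitzWith.of_dist_le_mul
    intro x y
    have hsub : h x - h y = (ψ ‖x‖ - ψ ‖y‖) • v +
        (((e.symm x - e.symm y : (ℝ ∙ v)ᗮ) : EuclideanSpace ℝ (Fin (q+1)))) := by
      simp only [hh, sub_smul, Submodule.coe_sub]; abel
    have hinner : ⟪v, (((e.symm x - e.symm y : (ℝ ∙ v)ᗮ) : EuclideanSpace ℝ (Fin (q+1))))⟫ = 0 :=
      Submodule.mem_orthogonal_singleton_iff_inner_right.mp (Submodule.coe_mem _)
    have hnorm2 : ‖h x - h y‖^2 = (ψ ‖x‖ - ψ ‖y‖)^2 +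
        ‖(((e.symm x - e.symm y : (ℝ ∙ v)ᗮ) : EuclideanSpace ℝ (Fin (q+1))))‖^2 := by
      rw [hsub, norm_add_sq_real, real_inner_smul_left, hinner, norm_smul, hv]
      simp [Real.norm_eq_abs, sq_abs, mul_pow]
    have hn1 : ‖(((e.symm x - e.symm y : (ℝ ∙ v)ᗮ) : EuclideanSpace ℝ (Fin (q+1))))‖ = dist x y := by
      rw [show ‖(((e.symm x - e.symm y : (ℝ ∙ v)ᗮ) : EuclideanSpace ℝ (Fin (q+1))))‖
          = ‖(e.symm x - e.symm y : (ℝ ∙ v)ᗮ)‖ from rfl, ← map_sub, e.symm.norm_map,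
        ← dist_eq_norm]
    have hψlip : |ψ ‖x‖ - ψ ‖y‖| ≤ dist x y := by
      have h0x : 0 ≤ min ‖x‖ (1/2) := le_min (norm_nonneg _) (by norm_num)
      have h0y : 0 ≤ min ‖y‖ (1/2) := le_min (norm_nonneg _) (by norm_num)
      have h1 : |ψ ‖x‖ - ψ ‖y‖| ≤ |min ‖x‖ (1/2) - min ‖y‖ (1/2)| :=
        sqrt_lip h0x (min_le_right _ _) h0y (min_le_right _ _)
      have h2 : |min ‖x‖ (1/2) - min ‖y‖ (1/2)| ≤ |‖x‖ - ‖y‖| := min_lip _ _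
      have h3 : |‖x‖ - ‖y‖| ≤ dist x y := abs_norm_sub_norm_le x y
      linarith
    have hd0 : 0 ≤ dist x y := dist_nonneg
    have : dist (h x) (h y)^2 ≤ (2 * dist x y)^2 := by
      rw [dist_eq_norm, hnorm2, hn1]
      have := sq_abs (ψ ‖x‖ - ψ ‖y‖) ▸ pow_le_pow_left₀ (abs_nonneg _) hψlip 2
      nlinarith
    have hdn : 0 ≤ dist (h x) (h y) := dist_nonneg
    have h22 : ((2:ℝ≥0):ℝ) = 2 := by norm_num
    rw [h22]
    nlinarith [this]
  -- coverage
  have hcov : sphere (0 : EuclideanSpace ℝ (Fin (q+1))) 1 ∩ closedBall v t ⊆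
      h '' closedBall (0 : EuclideanSpace ℝ (Fin q)) t := by
    rintro z ⟨hz, hzt⟩
    rw [mem_sphere_zero_iff_norm] at hz
    rw [mem_closedBall, dist_eq_norm] at hzt
    obtain ⟨a, ha⟩ : ∃ a : ℝ, ⟪v, z⟫ = a := ⟨_, rfl⟩
    have ha2 : ⟪z, v⟫ = a := by rw [real_inner_comm]; exact ha
    have hdist2 : ‖z - v‖^2 = 2 - 2*a := by
      rw [norm_sub_sq_real, hz, hv, ha2]; ring
    have hage : 7/8 ≤ a := by
      have h1 : ‖z - v‖ ≤ 1/2 := le_trans hzt ht2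
      nlinarith [hdist2, norm_nonneg (z - v), h1]
    have hwmem : z - a • v ∈ (ℝ ∙ v)ᗮ := by
      rw [Submodule.mem_orthogonal_singleton_iff_inner_right, inner_sub_right,
        real_inner_smul_right, real_inner_self_eq_norm_sq, hv, ha]
      ring
    have hw2 : ‖z - a • v‖^2 = 1 - a^2 := by
      rw [norm_sub_sq_real, hz, norm_smul, real_inner_smul_right, ha2,
        Real.norm_eq_abs, mul_pow, sq_abs, hv]
      ring
    have hwpair : ‖z - a • v‖ ≤ 1/2 ∧ ‖z - a • v‖ ≤ t := by
      have h0 : (0:ℝ) ≤ ‖z - a • v‖ := norm_nonneg _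
      have h1 : (0:ℝ) ≤ ‖z - v‖ := norm_nonneg _
      generalize hr : ‖z - a • v‖ = r at hw2 h0 ⊢
      generalize hN : ‖z - v‖ = N at hdist2 hzt h1
      constructor
      · nlinarith
      · nlinarith [sq_nonneg (1 - a), ht.le]
    obtain ⟨hwle, hwt⟩ := hwpair
    refine ⟨e ⟨z - a • v, hwmem⟩, ?_, ?_⟩
    · rw [mem_closedBall, dist_zero_right, e.norm_map]
      exact hwt
    · show ψ ‖e ⟨z - a • v, hwmem⟩‖ • v + ((e.symm (e ⟨z - a • v, hwmem⟩) : (ℝ ∙ v)ᗮ)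
        : EuclideanSpace ℝ (Fin (q+1))) = z
      rw [e.symm_apply_apply, e.norm_map]
      have hco : ‖(⟨z - a • v, hwmem⟩ : (ℝ ∙ v)ᗮ)‖ = ‖z - a • v‖ := rfl
      have hψval : ψ ‖(⟨z - a • v, hwmem⟩ : (ℝ ∙ v)ᗮ)‖ = a := by
        rw [hco, hψdef]
        simp only [min_eq_left hwle]
        rw [show 1 - ‖z - a • v‖^2 = a^2 by rw [hw2]; ring, Real.sqrt_sq (by linarith)]
      rw [hψval]
      show a • v + (z - a • v) = z
      abel
  -- measure bound
  calc μH[(q:ℝ)] (sphere (0 : EuclideanSpace ℝ (Fin (q+1))) 1 ∩ closedBall v t)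
      ≤ μH[(q:ℝ)] (h '' closedBall (0 : EuclideanSpace ℝ (Fin q)) t) := measure_mono hcov
    _ ≤ ((2:ℝ≥0) : ℝ≥0∞)^((q:ℕ):ℝ) * μH[(q:ℝ)] (closedBall (0 : EuclideanSpace ℝ (Fin q)) t) :=
        hlip.hausdorffMeasure_image_le (by positivity) _
    _ = ((2:ℝ≥0) : ℝ≥0∞)^((q:ℕ):ℝ) * (ENNReal.ofReal (t^q) * m) := by rw [ballq t ht.le]
    _ ≤ ENNReal.ofReal (2^q * (m.toReal + 1) * t ^ q) := by
        rw [ENNReal.rpow_natCast]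
        have hm' : m = ENNReal.ofReal m.toReal := (ENNReal.ofReal_toReal hm.ne).symm
        nth_rewrite 1 [hm']
        rw [show ((2:ℝ≥0) : ℝ≥0∞) = ENNReal.ofReal (2:ℝ) by simp,
          ← ENNReal.ofReal_pow (by norm_num), ← ENNReal.ofReal_mul (by positivity),
          ← ENNReal.ofReal_mul (by positivity)]
        apply ENNReal.ofReal_le_ofReal
        have h1 : (0:ℝ) ≤ t^q := by positivity
        have h2 : (0:ℝ) ≤ m.toReal := ENNReal.toReal_nonneg
        have h3 : (0:ℝ) < 2^q := by positivity
        nlinarith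

private lemma sphere_finite (q : ℕ) (hq : 2 ≤ q) :
    μH[(q:ℝ)] (sphere (0 : EuclideanSpace ℝ (Fin (q+1))) 1) < ∞ := by
  obtain ⟨c, hc, hcap⟩ := cap_bound q hq
  obtain ⟨t, hts, htcov⟩ := (isCompact_sphere (0 : EuclideanSpace ℝ (Fin (q+1))) 1).elim_nhds_subcover
    (fun z => ball z (1/2)) (fun z _ => ball_mem_nhds z (by norm_num))
  calc μH[(q:ℝ)] (sphere (0 : EuclideanSpace ℝ (Fin (q+1))) 1)
      ≤ μH[(q:ℝ)] (⋃ z ∈ t, sphere (0 : EuclideanSpace ℝ (Fin (q+1))) 1 ∩ closedBall z (1/2)) := by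
        apply measure_mono
        intro x hx
        obtain ⟨z, hz, hxz⟩ := mem_iUnion₂.1 (htcov hx)
        exact mem_iUnion₂.2 ⟨z, hz, hx, ball_subset_closedBall hxz⟩
    _ ≤ ∑ z ∈ t, μH[(q:ℝ)] (sphere (0 : EuclideanSpace ℝ (Fin (q+1))) 1 ∩ closedBall z (1/2)) :=
        measure_biUnion_finset_le _ _
    _ < ∞ := by
        apply ENNReal.sum_lt_top.mpr
        intro z hz
        exact lt_of_le_of_lt
          (hcap z (mem_sphere_zero_iff_norm.mp (hts z hz)) (1/2) (by norm_num) le_rfl)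
          ENNReal.ofReal_lt_top

private lemma cap_bound2 (q : ℕ) (hq : 2 ≤ q) :
    ∃ c : ℝ, 0 < c ∧ ∀ v : EuclideanSpace ℝ (Fin (q+1)), ‖v‖ = 1 →
      ∀ t : ℝ, 0 < t →
      μH[(q:ℝ)] (sphere (0 : EuclideanSpace ℝ (Fin (q+1))) 1 ∩ closedBall v t)
        ≤ ENNReal.ofReal (c * t ^ 2) := by
  obtain ⟨c, hc, hcap⟩ := cap_bound q hq
  have hS := sphere_finite q hq
  set M := (μH[(q:ℝ)] (sphere (0 : EuclideanSpace ℝ (Fin (q+1))) 1)).toReal with hM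
  have hM0 : 0 ≤ M := ENNReal.toReal_nonneg
  refine ⟨c + 4*M + 1, by positivity, ?_⟩
  intro v hv t ht
  rcases le_or_gt t (1/2) with h12 | h12
  · refine le_trans (hcap v hv t ht h12) (ENNReal.ofReal_le_ofReal ?_)
    have h1 : t^q ≤ t^2 := pow_le_pow_of_le_one ht.le (by linarith) hq
    nlinarith [mul_le_mul_of_nonneg_left h1 hc.le, pow_nonneg ht.le 2]
  · calc μH[(q:ℝ)] (sphere (0 : EuclideanSpace ℝ (Fin (q+1))) 1 ∩ closedBall v t)
        ≤ μH[(q:ℝ)] (sphere (0 : EuclideanSpace ℝ (Fin (q+1))) 1) :=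
          measure_mono inter_subset_left
      _ = ENNReal.ofReal M := (ENNReal.ofReal_toReal hS.ne).symm
      _ ≤ ENNReal.ofReal ((c + 4*M + 1) * t^2) := by
          apply ENNReal.ofReal_le_ofReal
          nlinarith [mul_nonneg hM0 (show (0:ℝ) ≤ t^2 - 1/4 by nlinarith), hc.le, sq_nonneg t]

private lemma dist_le_arccos {q : ℕ} {z₁ z₂ : EuclideanSpace ℝ (Fin (q+1))}
    (h₁ : ‖z₁‖ = 1) (h₂ : ‖z₂‖ = 1) : dist z₁ z₂ ≤ Real.arccos ⟪z₁, z₂⟫ := by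
  obtain ⟨p, hp⟩ : ∃ p : ℝ, ⟪z₁, z₂⟫ = p := ⟨_, rfl⟩
  have hip : |p| ≤ 1 := by
    have := abs_real_inner_le_norm z₁ z₂
    rw [h₁, h₂, hp] at this; simpa using this
  rw [hp]
  have h1 := (abs_le.mp hip).1
  have h2 := (abs_le.mp hip).2
  have hθ0 : 0 ≤ Real.arccos p := Real.arccos_nonneg _
  have hcos : Real.cos (Real.arccos p) = p := Real.cos_arccos (by linarith) (by linarith)
  have hd2 : dist z₁ z₂^2 = 2 - 2*p := by
    rw [dist_eq_norm, norm_sub_sq_real, h₁, h₂, hp]; ring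
  have hcosb : 1 - (Real.arccos p)^2/2 ≤ Real.cos (Real.arccos p) :=
    Real.one_sub_sq_div_two_le_cos
  have hdn : 0 ≤ dist z₁ z₂ := dist_nonneg
  generalize hD : dist z₁ z₂ = D at hd2 hdn
  generalize hT : Real.arccos p = T at hθ0 hcos hcosb
  nlinarith

private lemma ann_integral (q : ℕ) (hq : 2 ≤ q) {s : ℝ} (hs : 2 < s) :
    ∃ c₂ : ℝ, 0 < c₂ ∧ ∀ R : ℝ, 1 ≤ R → ∀ z₁ : EuclideanSpace ℝ (Fin (q+1)), ‖z₁‖ = 1 →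
      ∫⁻ z₂ in sphere (0 : EuclideanSpace ℝ (Fin (q+1))) 1,
        ENNReal.ofReal (((1 + R * dist z₂ z₁) ^ s)⁻¹) ∂μH[(q:ℝ)]
      ≤ ENNReal.ofReal (c₂ * (R^2)⁻¹) := by
  obtain ⟨c, hc, hcap⟩ := cap_bound2 q hq
  set r : ℝ := (2:ℝ)^(2 - s) with hrdef
  have hr0 : 0 < r := Real.rpow_pos_of_pos two_pos _
  have hr1 : r < 1 := Real.rpow_lt_one_of_one_lt_of_neg one_lt_two (by linarith)
  have hinv : 0 < (1-r)⁻¹ := inv_pos.mpr (by linarith)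
  have h2s : (1:ℝ) ≤ (2:ℝ)^(s-2) := Real.one_le_rpow one_le_two (by linarith)
  have h2s0 : (0:ℝ) < (2:ℝ)^(s-2) := Real.rpow_pos_of_pos two_pos _
  refine ⟨4*c*(2:ℝ)^(s-2)*(1-r)⁻¹, by positivity, ?_⟩
  intro R hR z₁ hz₁
  have hR0 : (0:ℝ) < R := lt_of_lt_of_le one_pos hR
  set D : ℝ := 4*c*(2:ℝ)^(s-2)*(R^2)⁻¹ with hD
  have hD0 : 0 < D := by positivity
  set A : ℕ → Set (EuclideanSpace ℝ (Fin (q+1))) := fun k =>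
    Nat.casesOn k (closedBall z₁ (1/R))
      (fun m => closedBall z₁ (2^(m+1)/R) \ closedBall z₁ (2^m/R)) with hA
  set S := sphere (0 : EuclideanSpace ℝ (Fin (q+1))) 1 with hS
  set f : EuclideanSpace ℝ (Fin (q+1)) → ℝ≥0∞ :=
    fun z => ENNReal.ofReal (((1 + R * dist z z₁) ^ s)⁻¹) with hf
  -- coverage
  have hcoverS : S ⊆ ⋃ k, S ∩ A k := by
    intro z hz
    have hd0 : 0 ≤ dist z z₁ := dist_nonneg
    by_cases hcase : R * dist z z₁ ≤ 1
    · refine mem_iUnion.2 ⟨0, hz, ?_⟩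
      show z ∈ closedBall z₁ (1/R)
      rw [mem_closedBall]
      rw [le_div_iff₀ hR0]
      linarith [hcase, mul_comm (dist z z₁) R]
    · push_neg at hcase
      have hex : ∃ k : ℕ, R * dist z z₁ ≤ 2^k := by
        obtain ⟨k, hk⟩ := pow_unbounded_of_one_lt (R * dist z z₁) one_lt_two
        exact ⟨k, hk.le⟩
      have hk0 : R * dist z z₁ ≤ 2^(Nat.find hex) := Nat.find_spec hex
      have hk0pos : Nat.find hex ≠ 0 := by
        intro h; rw [h] at hk0; simp at hk0; linarith
      obtain ⟨m, hm⟩ := Nat.exists_eq_succ_of_ne_zero hk0pos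
      have hmlt : ¬ (R * dist z z₁ ≤ 2^m) := Nat.find_min hex (by omega)
      push_neg at hmlt
      refine mem_iUnion.2 ⟨m+1, hz, ?_⟩
      show z ∈ closedBall z₁ (2^(m+1)/R) \ closedBall z₁ (2^m/R)
      constructor
      · rw [mem_closedBall, le_div_iff₀ hR0]
        rw [hm, Nat.succ_eq_add_one] at hk0
        linarith [hk0, mul_comm (dist z z₁) R]
      · rw [mem_closedBall]
        push_neg
        rw [div_lt_iff₀ hR0]
        linarith [mul_comm (dist z z₁) R]
  -- per-piece bounds
  have key : ∀ k, ∫⁻ z in S ∩ A k, f z ∂μH[(q:ℝ)] ≤ ENNReal.ofReal (D * r^k) := by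
    intro k
    cases k with
    | zero =>
      calc ∫⁻ z in S ∩ A 0, f z ∂μH[(q:ℝ)]
          ≤ ∫⁻ _ in S ∩ A 0, 1 ∂μH[(q:ℝ)] := by
            apply setLIntegral_mono measurable_const
            intro z _
            simp only [hf]
            refine ENNReal.ofReal_le_one.mpr ?_
            have h1 : (1:ℝ) ≤ (1 + R * dist z z₁) ^ s :=
              Real.one_le_rpow (by nlinarith [dist_nonneg (x := z) (y := z₁)]) (by linarith)
            exact inv_le_one_of_one_le₀ h1
        _ = μH[(q:ℝ)] (S ∩ A 0) := by rw [setLIntegral_const, one_mul]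
        _ ≤ ENNReal.ofReal (c * (1/R)^2) := hcap z₁ hz₁ (1/R) (by positivity)
        _ ≤ ENNReal.ofReal (D * r^0) := by
            apply ENNReal.ofReal_le_ofReal
            rw [pow_zero, mul_one, hD, one_div, inv_pow]
            have hcle : c ≤ 4*c*(2:ℝ)^(s-2) := by nlinarith
            exact mul_le_mul_of_nonneg_right hcle (inv_nonneg.mpr (sq_nonneg R))
    | succ m =>
      have hpt : ∀ z ∈ S ∩ A (m+1), f z ≤ ENNReal.ofReal ((((2:ℝ)^m)^s)⁻¹) := by
        rintro z ⟨_, _, hz2⟩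
        rw [mem_closedBall] at hz2
        push_neg at hz2
        rw [div_lt_iff₀ hR0] at hz2
        simp only [hf]
        apply ENNReal.ofReal_le_ofReal
        have hbase : ((2:ℝ)^m) ≤ 1 + R * dist z z₁ := by
          nlinarith [mul_comm (dist z z₁) R]
        have h2 : ((2:ℝ)^m)^s ≤ (1 + R * dist z z₁)^s :=
          Real.rpow_le_rpow (by positivity) hbase (by linarith)
        exact inv_anti₀ (by positivity) h2
      calc ∫⁻ z in S ∩ A (m+1), f z ∂μH[(q:ℝ)]
          ≤ ∫⁻ _ in S ∩ A (m+1), ENNReal.ofReal ((((2:ℝ)^m)^s)⁻¹) ∂μH[(q:ℝ)] :=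
            setLIntegral_mono measurable_const hpt
        _ = ENNReal.ofReal ((((2:ℝ)^m)^s)⁻¹) * μH[(q:ℝ)] (S ∩ A (m+1)) := setLIntegral_const _ _
        _ ≤ ENNReal.ofReal ((((2:ℝ)^m)^s)⁻¹) * ENNReal.ofReal (c * ((2:ℝ)^(m+1)/R)^2) := by
            apply mul_le_mul_right
            refine le_trans (measure_mono ?_) (hcap z₁ hz₁ ((2:ℝ)^(m+1)/R) (by positivity))
            exact inter_subset_inter_right _ diff_subset
        _ = ENNReal.ofReal (D * r^(m+1)) := by
            rw [← ENNReal.ofReal_mul (by positivity)]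
            congr 1
            have e1 : ((2:ℝ)^m)^s = (2:ℝ)^((m:ℝ)*s) := by
              rw [← Real.rpow_natCast (2:ℝ) m, ← Real.rpow_mul (by norm_num)]
            have e2 : r^(m+1) = (2:ℝ)^((2-s)*((m:ℝ)+1)) := by
              rw [hrdef, ← Real.rpow_natCast ((2:ℝ)^(2-s)) (m+1), ← Real.rpow_mul (by norm_num)]
              push_cast; ring_nf
            have e3 : (((2:ℝ)^(m+1))^2 : ℝ) = (2:ℝ)^(2*((m:ℝ)+1)) := by
              rw [← pow_mul, ← Real.rpow_natCast (2:ℝ) ((m+1)*2)]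
              push_cast; ring_nf
            have e5 : (2:ℝ)^(2*((m:ℝ)+1))
                = 4 * ((2:ℝ)^(s-2) * ((2:ℝ)^((2-s)*((m:ℝ)+1)) * (2:ℝ)^((m:ℝ)*s))) := by
              rw [← Real.rpow_add two_pos, ← Real.rpow_add two_pos,
                show (4:ℝ) = (2:ℝ)^(2:ℝ) by
                  rw [show (2:ℝ) = ((2:ℕ):ℝ) from by norm_num, Real.rpow_natCast]; norm_num,
                ← Real.rpow_add two_pos]
              congr 1; ring
            rw [e1, e2, div_pow, e3, e5, hD]
            have h2 : (0:ℝ) < (2:ℝ)^((m:ℝ)*s) := Real.rpow_pos_of_pos two_pos _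
            field_simp
  -- assemble
  calc ∫⁻ z in S, f z ∂μH[(q:ℝ)]
      ≤ ∫⁻ z in ⋃ k, S ∩ A k, f z ∂μH[(q:ℝ)] :=
        lintegral_mono' (Measure.restrict_mono hcoverS le_rfl) le_rfl
    _ ≤ ∑' k, ∫⁻ z in S ∩ A k, f z ∂μH[(q:ℝ)] := lintegral_iUnion_le _ _
    _ ≤ ∑' k, ENNReal.ofReal (D * r^k) := ENNReal.tsum_le_tsum key
    _ = ENNReal.ofReal (D * (1-r)⁻¹) := by
        rw [← ENNReal.ofReal_tsum_of_nonneg (fun k => by positivity)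
          ((summable_geometric_of_lt_one hr0.le hr1).mul_left _)]
        rw [tsum_mul_left, tsum_geometric_of_lt_one hr0.le hr1]
    _ = ENNReal.ofReal ((4*c*(2:ℝ)^(s-2)*(1-r)⁻¹) * (R^2)⁻¹) := by
        congr 1
        rw [hD]; ring

/-- **Integral bound for powers of a localized kernel on the sphere.**
If a kernel `g` on `S^q × S^q` satisfies the needlet-type localization bound
`|g(z₁,z₂)| ≤ κ B^{qj/2} / (1 + B^{qj/2} d(z₁,z₂))^τ` with `τ > 2` (where
`d(z₁,z₂) = arccos ⟪z₁,z₂⟫` is the geodesic distance and the sphere carries its surface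
measure `μH[q]`), then `∬ |g(z₁,z₂)|^n dz₁ dz₂ ≤ C B^{qj(n/2-1)}` with `C` independent
of `j`. -/
theorem localized_kernel_power_integral_bound
    (q : ℕ) (hq : 2 ≤ q) (B τ κ : ℝ) (hB : 1 < B) (hτ : 2 < τ) (hκ : 0 < κ)
    (n : ℕ) (hn : 1 ≤ n) :
    ∃ C > (0 : ℝ), ∀ (j : ℕ)
      (g : EuclideanSpace ℝ (Fin (q + 1)) → EuclideanSpace ℝ (Fin (q + 1)) → ℝ),
      Measurable (Function.uncurry g) →
      (∀ z₁ ∈ Metric.sphere (0 : EuclideanSpace ℝ (Fin (q + 1))) 1,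
       ∀ z₂ ∈ Metric.sphere (0 : EuclideanSpace ℝ (Fin (q + 1))) 1,
        |g z₁ z₂| ≤ κ * B ^ ((q : ℝ) * j / 2) /
          (1 + B ^ ((q : ℝ) * j / 2) * Real.arccos ⟪z₁, z₂⟫) ^ τ) →
      ∫ z₁ in (Metric.sphere (0 : EuclideanSpace ℝ (Fin (q + 1))) 1 : Set _),
        (∫ z₂ in (Metric.sphere (0 : EuclideanSpace ℝ (Fin (q + 1))) 1 : Set _),
          |g z₁ z₂| ^ n ∂(μH[(q : ℝ)])) ∂(μH[(q : ℝ)])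
        ≤ C * B ^ ((q : ℝ) * j * ((n : ℝ) / 2 - 1)) := by
  have hn1 : (1:ℝ) ≤ (n:ℝ) := by exact_mod_cast hn
  have hτn : 2 < τ * (n:ℝ) := by nlinarith
  obtain ⟨c₂, hc₂, hJ⟩ := ann_integral q hq hτn
  have hSfin := sphere_finite q hq
  set S := (Metric.sphere (0 : EuclideanSpace ℝ (Fin (q + 1))) 1 : Set _) with hSdef
  have hSmeas : MeasurableSet S := isClosed_sphere.measurableSet
  set T : ℝ := (μH[(q:ℝ)] S).toReal with hT
  have hT0 : 0 ≤ T := ENNReal.toReal_nonneg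
  refine ⟨κ^n * c₂ * (T + 1), by positivity, ?_⟩
  intro j g hgm hgb
  have hB0 : (0:ℝ) < B := lt_trans one_pos hB
  set R : ℝ := B ^ ((q:ℝ) * j / 2) with hRdef
  have hR1 : 1 ≤ R := Real.one_le_rpow hB.le (by positivity)
  have hR0 : 0 < R := lt_of_lt_of_le one_pos hR1
  set M : ℝ := κ^n * c₂ * B ^ ((q:ℝ) * j * ((n:ℝ)/2 - 1)) with hM
  have hBe0 : (0:ℝ) < B ^ ((q:ℝ) * j * ((n:ℝ)/2 - 1)) := Real.rpow_pos_of_pos hB0 _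
  have hM0 : 0 ≤ M := by rw [hM]; positivity
  -- scalar identity
  have hRident : κ^n * R^n * (c₂ * (R^2)⁻¹) = M := by
    have h1 : R^(n:ℕ) = B ^ ((q:ℝ) * j / 2 * n) := by
      rw [hRdef, ← Real.rpow_natCast (B ^ ((q:ℝ) * j / 2)) n, ← Real.rpow_mul hB0.le]
    have h2 : R^(2:ℕ) = B ^ ((q:ℝ) * j / 2 * 2) := by
      rw [hRdef, ← Real.rpow_natCast (B ^ ((q:ℝ) * j / 2)) 2, ← Real.rpow_mul hB0.le]
      norm_num
    have e : B ^ ((q:ℝ) * j / 2 * n) * (B ^ ((q:ℝ) * j / 2 * 2))⁻¹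
        = B ^ ((q:ℝ) * j * ((n:ℝ)/2 - 1)) := by
      rw [← Real.rpow_neg hB0.le, ← Real.rpow_add hB0]
      congr 1; ring
    calc κ^n * R^n * (c₂ * (R^2)⁻¹)
        = κ^n * c₂ * (B ^ ((q:ℝ) * j / 2 * n) * (B ^ ((q:ℝ) * j / 2 * 2))⁻¹) := by
          rw [h1, h2]; ring
      _ = M := by rw [e, hM]
  -- inner integral bound
  have hinner : ∀ z₁ ∈ S, (∫ z₂ in S, |g z₁ z₂| ^ n ∂μH[(q:ℝ)]) ≤ M ∧
      0 ≤ ∫ z₂ in S, |g z₁ z₂| ^ n ∂μH[(q:ℝ)] := by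
    intro z₁ hz₁
    have hz₁n : ‖z₁‖ = 1 := mem_sphere_zero_iff_norm.mp hz₁
    have hmg : AEStronglyMeasurable (fun z₂ => |g z₁ z₂| ^ n) (μH[(q:ℝ)].restrict S) :=
      ((hgm.of_uncurry_left).abs.pow_const n).aestronglyMeasurable
    have hnn : 0 ≤ᵐ[μH[(q:ℝ)].restrict S] fun z₂ => |g z₁ z₂| ^ n :=
      Filter.Eventually.of_forall (fun z₂ => by positivity)
    rw [integral_eq_lintegral_of_nonneg_ae hnn hmg]
    refine ⟨ENNReal.toReal_le_of_le_ofReal hM0 ?_, ENNReal.toReal_nonneg⟩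
    have hmeasb : Measurable fun z₂ : EuclideanSpace ℝ (Fin (q+1)) =>
        ENNReal.ofReal (κ^n * R^n * ((1 + R * dist z₂ z₁) ^ (τ * (n:ℝ)))⁻¹) := by
      apply Measurable.ennreal_ofReal
      apply Measurable.const_mul
      apply Measurable.inv
      exact ((continuous_const.add (continuous_const.mul
        (continuous_id.dist continuous_const))).rpow_const
        (fun _ => Or.inr (by positivity))).measurable
    calc ∫⁻ z₂ in S, ENNReal.ofReal (|g z₁ z₂| ^ n) ∂μH[(q:ℝ)]
        ≤ ∫⁻ z₂ in S, ENNReal.ofReal (κ^n * R^n *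
            ((1 + R * dist z₂ z₁) ^ (τ * (n:ℝ)))⁻¹) ∂μH[(q:ℝ)] := by
          apply setLIntegral_mono hmeasb
          intro z₂ hz₂
          apply ENNReal.ofReal_le_ofReal
          have hz₂n : ‖z₂‖ = 1 := mem_sphere_zero_iff_norm.mp hz₂
          have hb := hgb z₁ hz₁ z₂ hz₂
          have harc0 : 0 ≤ Real.arccos ⟪z₁, z₂⟫ := Real.arccos_nonneg _
          have harc : dist z₂ z₁ ≤ Real.arccos ⟪z₁, z₂⟫ := by
            rw [dist_comm]; exact dist_le_arccos hz₁n hz₂n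
          have hd0 : (0:ℝ) ≤ dist z₂ z₁ := dist_nonneg
          have hbase0 : (0:ℝ) < 1 + R * dist z₂ z₁ := by nlinarith
          have h1 : (1 + R * dist z₂ z₁) ^ (τ * (n:ℝ)) ≤
              (1 + R * Real.arccos ⟪z₁, z₂⟫) ^ (τ * (n:ℝ)) :=
            Real.rpow_le_rpow hbase0.le (by nlinarith) (by positivity)
          have hpos1 : (0:ℝ) < (1 + R * dist z₂ z₁) ^ (τ * (n:ℝ)) :=
            Real.rpow_pos_of_pos hbase0 _
          have h2 : |g z₁ z₂|^n ≤ (κ * R / (1 + R * Real.arccos ⟪z₁, z₂⟫) ^ τ)^n :=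
            pow_le_pow_left₀ (abs_nonneg _) hb n
          have h4 : ((1 + R * Real.arccos ⟪z₁, z₂⟫) ^ τ)^(n:ℕ)
              = (1 + R * Real.arccos ⟪z₁, z₂⟫) ^ (τ * (n:ℝ)) := by
            rw [← Real.rpow_natCast ((1 + R * Real.arccos ⟪z₁, z₂⟫) ^ τ) n,
              ← Real.rpow_mul (by nlinarith)]
          have h3 : (κ * R / (1 + R * Real.arccos ⟪z₁, z₂⟫) ^ τ)^n
              = κ^n * R^n * ((1 + R * Real.arccos ⟪z₁, z₂⟫) ^ (τ * (n:ℝ)))⁻¹ := by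
            rw [div_pow, mul_pow, ← h4]; ring
          rw [h3] at h2
          refine le_trans h2 ?_
          exact mul_le_mul_of_nonneg_left (inv_anti₀ hpos1 h1) (by positivity)
      _ = ENNReal.ofReal (κ^n * R^n) *
          ∫⁻ z₂ in S, ENNReal.ofReal (((1 + R * dist z₂ z₁) ^ (τ * (n:ℝ)))⁻¹) ∂μH[(q:ℝ)] := by
          rw [← lintegral_const_mul' _ _ ENNReal.ofReal_ne_top]
          congr 1
          funext z₂
          rw [← ENNReal.ofReal_mul (by positivity)]
      _ ≤ ENNReal.ofReal (κ^n * R^n) * ENNReal.ofReal (c₂ * (R^2)⁻¹) :=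
          mul_le_mul_right (hJ R hR1 z₁ hz₁n) _
      _ ≤ ENNReal.ofReal M := by
          rw [← ENNReal.ofReal_mul (by positivity)]
          exact ENNReal.ofReal_le_ofReal (le_of_eq hRident)
  -- outer integral
  have houter : ‖∫ z₁ in S, (∫ z₂ in S, |g z₁ z₂| ^ n ∂μH[(q:ℝ)]) ∂μH[(q:ℝ)]‖
      ≤ M * T := by
    apply norm_setIntegral_le_of_norm_le_const_ae' hSfin
    apply Filter.Eventually.of_forall
    intro z₁ hz₁
    obtain ⟨hle, hge⟩ := hinner z₁ hz₁
    rw [Real.norm_eq_abs, abs_of_nonneg hge]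
    exact hle
  calc ∫ z₁ in S, (∫ z₂ in S, |g z₁ z₂| ^ n ∂μH[(q:ℝ)]) ∂μH[(q:ℝ)]
      ≤ ‖∫ z₁ in S, (∫ z₂ in S, |g z₁ z₂| ^ n ∂μH[(q:ℝ)]) ∂μH[(q:ℝ)]‖ := by
        rw [Real.norm_eq_abs]; exact le_abs_self _
    _ ≤ M * T := houter
    _ ≤ κ^n * c₂ * (T + 1) * B ^ ((q:ℝ) * j * ((n:ℝ)/2 - 1)) := by
        rw [hM]
        nlinarith [hBe0, hT0, hc₂, pow_pos hκ n]
end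

section
/- Let q ≥ 2 be an integer, let S^q denote the unit sphere in ℝ^{q+1} equipped with its surface measure dz and geodesic distance d(z_1, z_2) = arccos⟨z_1, z_2⟩. Fix B > 1, an integer j ≥ 0, real numbers κ > 0 and τ > 2, a real number p ≥ 1, and a point ξ ∈ S^q. Suppose ψ : S^q → ℝ is a measurable function satisfying |ψ(z)| ≤ κ B^{qj/2} / (1 + B^{qj/2} d(z, ξ))^τ for all z ∈ S^q. Then there exists a constant C_p > 0, depending only on q, τ, κ, p (not on j or ξ), such that ∫_{S^q} |ψ(z)|^p dz ≤ C_p · B^{jq(p/2 − 1)}. -/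
open MeasureTheory
open scoped RealInnerProductSpace

open Metric Set
open scoped ENNReal NNReal Pointwise

noncomputable section SphereNeedletAux


lemma aux_ineq {b nu nv gu gv d D : ℝ} (hb : 0 < b)
    (hgu2 : gu ^ 2 = 1 - nu ^ 2) (hgv2 : gv ^ 2 = 1 - nv ^ 2)
    (hgub : b ≤ gu) (hgvb : b ≤ gv)
    (hnu : nu ^ 2 ≤ 1 - b ^ 2) (hnv : nv ^ 2 ≤ 1 - b ^ 2)
    (hnu0 : 0 ≤ nu) (hnv0 : 0 ≤ nv)
    (habs : |nu - nv| ≤ d) (hd0 : 0 ≤ d)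
    (hD : D ^ 2 = d ^ 2 + (gu - gv) ^ 2) (hD0 : 0 ≤ D) :
    D ≤ b⁻¹ * d := by
  have h1 : (gu - gv) * (gu + gv) = nv ^ 2 - nu ^ 2 := by
    calc (gu - gv) * (gu + gv) = gu ^ 2 - gv ^ 2 := by ring
      _ = nv ^ 2 - nu ^ 2 := by rw [hgu2, hgv2]; ring
  have h2 : |nu ^ 2 - nv ^ 2| ≤ (nu + nv) * d := by
    have e : nu ^ 2 - nv ^ 2 = (nu + nv) * (nu - nv) := by ring
    rw [e, abs_mul, abs_of_nonneg (by linarith)]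
    exact mul_le_mul_of_nonneg_left habs (by linarith)
  have h3 : |gu - gv| * (2 * b) ≤ (nu + nv) * d := by
    have e1 : |gu - gv| * (gu + gv) = |nv ^ 2 - nu ^ 2| := by
      rw [← h1, abs_mul, abs_of_nonneg (by linarith : (0:ℝ) ≤ gu + gv)]
    have e2 : |nv ^ 2 - nu ^ 2| = |nu ^ 2 - nv ^ 2| := abs_sub_comm _ _
    have e3 : |gu - gv| * (2 * b) ≤ |gu - gv| * (gu + gv) :=
      mul_le_mul_of_nonneg_left (by linarith) (abs_nonneg _)
    rw [e1, e2] at e3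
    exact e3.trans h2
  have h4 : (gu - gv) ^ 2 * (4 * b ^ 2) ≤ ((nu + nv) * d) ^ 2 := by
    have := pow_le_pow_left₀ (by positivity) h3 2
    calc (gu - gv) ^ 2 * (4 * b ^ 2) = (|gu - gv| * (2 * b)) ^ 2 := by
          rw [mul_pow, sq_abs]; ring
      _ ≤ ((nu + nv) * d) ^ 2 := this
  have h5 : (nu + nv) ^ 2 ≤ 4 * (1 - b ^ 2) := by nlinarith [sq_nonneg (nu - nv)]
  have h6 : (gu - gv) ^ 2 * b ^ 2 ≤ (1 - b ^ 2) * d ^ 2 := by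
    have h5d : (nu + nv) ^ 2 * d ^ 2 ≤ 4 * (1 - b ^ 2) * d ^ 2 :=
      mul_le_mul_of_nonneg_right h5 (sq_nonneg d)
    nlinarith [h4, h5d]
  have h7 : (D * b) ^ 2 ≤ d ^ 2 := by
    have : D ^ 2 * b ^ 2 = d ^ 2 * b ^ 2 + (gu - gv) ^ 2 * b ^ 2 := by rw [hD]; ring
    nlinarith [h6, sq_nonneg b]
  have h8 : D * b ≤ d := by
    have := Real.sqrt_le_sqrt h7
    rwa [Real.sqrt_sq (by positivity), Real.sqrt_sq hd0] at this
  calc D = D * b * b⁻¹ := by field_simp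
    _ ≤ d * b⁻¹ := mul_le_mul_of_nonneg_right h8 (by positivity)
    _ = b⁻¹ * d := mul_comm _ _

noncomputable def sChart (q : ℕ) (u : EuclideanSpace ℝ (Fin q)) : EuclideanSpace ℝ (Fin (q + 1)) :=
  (WithLp.equiv 2 _).symm (Fin.snoc ((WithLp.equiv 2 _) u) (Real.sqrt (1 - ‖u‖ ^ 2)))

lemma sChart_apply_castSucc {q : ℕ} (u : EuclideanSpace ℝ (Fin q)) (i : Fin q) :
    sChart q u i.castSucc = u i := by
  simp [sChart, Fin.snoc_castSucc]

lemma sChart_apply_last {q : ℕ} (u : EuclideanSpace ℝ (Fin q)) :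
    sChart q u (Fin.last q) = Real.sqrt (1 - ‖u‖ ^ 2) := by
  simp [sChart]

lemma dist_sChart_sq {q : ℕ} (u v : EuclideanSpace ℝ (Fin q)) :
    dist (sChart q u) (sChart q v) ^ 2 =
      dist u v ^ 2 + (Real.sqrt (1 - ‖u‖ ^ 2) - Real.sqrt (1 - ‖v‖ ^ 2)) ^ 2 := by
  rw [EuclideanSpace.dist_eq, Real.sq_sqrt (by positivity), Fin.sum_univ_castSucc]
  congr 1
  · rw [EuclideanSpace.dist_eq, Real.sq_sqrt (by positivity)]
    exact Finset.sum_congr rfl fun i _ => by rw [sChart_apply_castSucc, sChart_apply_castSucc]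
  · rw [sChart_apply_last, sChart_apply_last, Real.dist_eq, sq_abs]

lemma sChart_lip {q : ℕ} {b : ℝ} (hb : 0 < b) (hb1 : b < 1) :
    ∀ u ∈ closedBall (0 : EuclideanSpace ℝ (Fin q)) (Real.sqrt (1 - b ^ 2)),
    ∀ v ∈ closedBall (0 : EuclideanSpace ℝ (Fin q)) (Real.sqrt (1 - b ^ 2)),
      dist (sChart q u) (sChart q v) ≤ b⁻¹ * dist u v := by
  intro u hu v hv
  rw [mem_closedBall, dist_zero_right] at hu hv
  have hb2 : (0:ℝ) ≤ 1 - b ^ 2 := by nlinarith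
  have hc2 : Real.sqrt (1 - b ^ 2) ^ 2 = 1 - b ^ 2 := Real.sq_sqrt hb2
  have hu2 : ‖u‖ ^ 2 ≤ 1 - b ^ 2 := by
    have := pow_le_pow_left₀ (norm_nonneg u) hu 2
    rwa [hc2] at this
  have hv2 : ‖v‖ ^ 2 ≤ 1 - b ^ 2 := by
    have := pow_le_pow_left₀ (norm_nonneg v) hv 2
    rwa [hc2] at this
  have hgu2 : Real.sqrt (1 - ‖u‖ ^ 2) ^ 2 = 1 - ‖u‖ ^ 2 := Real.sq_sqrt (by nlinarith)
  have hgv2 : Real.sqrt (1 - ‖v‖ ^ 2) ^ 2 = 1 - ‖v‖ ^ 2 := Real.sq_sqrt (by nlinarith)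
  have hgub : b ≤ Real.sqrt (1 - ‖u‖ ^ 2) := by
    rw [show b = Real.sqrt (b ^ 2) from (Real.sqrt_sq hb.le).symm]
    exact Real.sqrt_le_sqrt (by linarith)
  have hgvb : b ≤ Real.sqrt (1 - ‖v‖ ^ 2) := by
    rw [show b = Real.sqrt (b ^ 2) from (Real.sqrt_sq hb.le).symm]
    exact Real.sqrt_le_sqrt (by linarith)
  exact aux_ineq hb hgu2 hgv2 hgub hgvb hu2 hv2 (norm_nonneg u) (norm_nonneg v)
    (abs_norm_sub_norm_le u v) dist_nonneg (dist_sChart_sq u v) dist_nonneg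

lemma sChart_cover {q : ℕ} {a : ℝ} (ha0 : 0 ≤ a) {z : EuclideanSpace ℝ (Fin (q + 1))}
    (hz : ‖z‖ = 1) (hza : a < z (Fin.last q)) :
    z ∈ sChart q '' closedBall 0 (Real.sqrt (1 - a ^ 2)) := by
  set u : EuclideanSpace ℝ (Fin q) :=
    (WithLp.equiv 2 _).symm (fun i => z i.castSucc) with hu_def
  have hui : ∀ i : Fin q, u i = z i.castSucc := fun i => rfl
  have hzsum : ∑ i, z i ^ 2 = 1 := by
    have h1 : ‖z‖ = Real.sqrt (∑ i, z i ^ 2) := by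
      rw [EuclideanSpace.norm_eq]
      congr 1
      exact Finset.sum_congr rfl fun i _ => by rw [Real.norm_eq_abs, sq_abs]
    rw [h1] at hz
    nlinarith [Real.sq_sqrt (by positivity : (0:ℝ) ≤ ∑ i, z i ^ 2)]
  have hnu : ‖u‖ ^ 2 = 1 - z (Fin.last q) ^ 2 := by
    have h1 : ‖u‖ = Real.sqrt (∑ i, u i ^ 2) := by
      rw [EuclideanSpace.norm_eq]
      congr 1
      exact Finset.sum_congr rfl fun i _ => by rw [Real.norm_eq_abs, sq_abs]
    rw [h1, Real.sq_sqrt (by positivity)]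
    rw [Fin.sum_univ_castSucc] at hzsum
    have : ∑ i : Fin q, u i ^ 2 = ∑ i : Fin q, z i.castSucc ^ 2 :=
      Finset.sum_congr rfl fun i _ => by rw [hui]
    linarith [this]
  have hlast_pos : 0 < z (Fin.last q) := lt_of_le_of_lt ha0 hza
  refine ⟨u, ?_, ?_⟩
  · rw [mem_closedBall, dist_zero_right]
    have h2 : ‖u‖ ^ 2 ≤ 1 - a ^ 2 := by
      have : a ^ 2 ≤ z (Fin.last q) ^ 2 := by nlinarith
      linarith [hnu]
    calc ‖u‖ = Real.sqrt (‖u‖ ^ 2) := (Real.sqrt_sq (norm_nonneg u)).symm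
      _ ≤ Real.sqrt (1 - a ^ 2) := Real.sqrt_le_sqrt h2
  · ext i
    refine Fin.lastCases ?_ (fun i => ?_) i
    · rw [sChart_apply_last, hnu]
      have : 1 - (1 - z (Fin.last q) ^ 2) = z (Fin.last q) ^ 2 := by ring
      rw [this, Real.sqrt_sq hlast_pos.le]
    · rw [sChart_apply_castSucc, hui]



lemma ball_meas (q : ℕ) : ∃ V > (0 : ℝ), ∀ c : ℝ, 0 < c →
    μH[(q : ℝ)] (closedBall (0 : EuclideanSpace ℝ (Fin q)) c) ≤ ENNReal.ofReal (V * c ^ q) := by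
  have hfin : μH[(q : ℝ)] (closedBall (0 : EuclideanSpace ℝ (Fin q)) 1) < ⊤ := by
    have h : ((Module.finrank ℝ (EuclideanSpace ℝ (Fin q))) : ℝ) = (q : ℝ) := by simp
    rw [← h]
    exact (isCompact_closedBall _ _).measure_lt_top
  set V0 : ℝ := (μH[(q : ℝ)] (closedBall (0 : EuclideanSpace ℝ (Fin q)) 1)).toReal with hV0
  refine ⟨V0 + 1, by positivity, fun c hc => ?_⟩
  have h1 : closedBall (0 : EuclideanSpace ℝ (Fin q)) c =
      c • closedBall (0 : EuclideanSpace ℝ (Fin q)) 1 := by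
    rw [_root_.smul_closedBall c (0 : EuclideanSpace ℝ (Fin q)) zero_le_one]
    simp [Real.norm_eq_abs, abs_of_pos hc]
  rw [h1, Measure.hausdorffMeasure_smul₀ (by positivity : (0:ℝ) ≤ (q:ℝ)) (ne_of_gt hc)]
  have h2 : ((‖c‖₊ ^ (q : ℝ) : ℝ≥0) : ℝ≥0∞) = ENNReal.ofReal (c ^ q) := by
    have hcnn : ‖c‖₊ = c.toNNReal := by
      ext; simp [Real.coe_toNNReal _ hc.le, abs_of_pos hc]
    rw [hcnn, ENNReal.ofReal, Real.toNNReal_pow hc.le]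
    congr 1
    rw [← NNReal.rpow_natCast]
  have h3 : μH[(q : ℝ)] (closedBall (0 : EuclideanSpace ℝ (Fin q)) 1) ≤ ENNReal.ofReal (V0 + 1) := by
    rw [← ENNReal.ofReal_toReal hfin.ne]
    exact ENNReal.ofReal_le_ofReal (by linarith)
  calc (‖c‖₊ ^ (q : ℝ) : ℝ≥0) • μH[(q : ℝ)] (closedBall (0 : EuclideanSpace ℝ (Fin q)) 1)
      = ENNReal.ofReal (c ^ q) * μH[(q : ℝ)] (closedBall (0 : EuclideanSpace ℝ (Fin q)) 1) := by
        rw [ENNReal.smul_def, smul_eq_mul, h2]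
    _ ≤ ENNReal.ofReal (c ^ q) * ENNReal.ofReal (V0 + 1) := by
        exact mul_le_mul_right h3 _
    _ = ENNReal.ofReal ((V0 + 1) * c ^ q) := by
        rw [← ENNReal.ofReal_mul (by positivity), mul_comm]

lemma cap_transport {q : ℕ} (ξ : EuclideanSpace ℝ (Fin (q + 1))) (hξ : ‖ξ‖ = 1) (a : ℝ) :
    μH[((q : ℕ) : ℝ)] {z : EuclideanSpace ℝ (Fin (q + 1)) | ‖z‖ = 1 ∧ a < ⟪z, ξ⟫} =
      μH[((q : ℕ) : ℝ)] {z : EuclideanSpace ℝ (Fin (q + 1)) | ‖z‖ = 1 ∧ a < z (Fin.last q)} := by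
  set ξ₀ : EuclideanSpace ℝ (Fin (q + 1)) := EuclideanSpace.single (Fin.last q) 1 with hξ₀
  have hξ₀n : ‖ξ₀‖ = 1 := by simp [hξ₀]
  have hinner₀ : ∀ z : EuclideanSpace ℝ (Fin (q + 1)), ⟪z, ξ₀⟫ = z (Fin.last q) := by
    intro z
    rw [hξ₀, EuclideanSpace.inner_single_right]
    simp
  set R := Submodule.reflection (ℝ ∙ (ξ₀ - ξ))ᗮ with hR
  have hRξ₀ : R ξ₀ = ξ := Submodule.reflection_sub (by rw [hξ₀n, hξ])
  have hset : {z : EuclideanSpace ℝ (Fin (q + 1)) | ‖z‖ = 1 ∧ a < ⟪z, ξ⟫} =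
      R '' {z : EuclideanSpace ℝ (Fin (q + 1)) | ‖z‖ = 1 ∧ a < z (Fin.last q)} := by
    ext z
    simp only [mem_image, mem_setOf_eq]
    constructor
    · intro ⟨hz1, hz2⟩
      refine ⟨R z, ⟨?_, ?_⟩, ?_⟩
      · rw [R.norm_map]; exact hz1
      · have hRξ : R ξ = ξ₀ := by rw [← hRξ₀]; exact Submodule.reflection_reflection _ _
        rw [← hinner₀ (R z), show ⟪R z, ξ₀⟫ = ⟪z, ξ⟫ from by rw [← hRξ, R.inner_map_map]]
        exact hz2
      · exact Submodule.reflection_reflection _ z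
    · rintro ⟨w, ⟨hw1, hw2⟩, rfl⟩
      constructor
      · rw [R.norm_map]; exact hw1
      · rw [← hRξ₀, R.inner_map_map, hinner₀]; exact hw2
  rw [hset]
  exact R.isometry.hausdorffMeasure_image (Or.inl (by positivity)) _

lemma cap_std {q : ℕ} {b a : ℝ} (hb : 0 < b) (hb1 : b < 1) (hba : b ≤ a) (ha1 : a < 1) :
    μH[((q : ℕ) : ℝ)] {z : EuclideanSpace ℝ (Fin (q + 1)) | ‖z‖ = 1 ∧ a < z (Fin.last q)} ≤
      (ENNReal.ofReal b⁻¹) ^ (q : ℝ) *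
        μH[(q : ℝ)] (closedBall (0 : EuclideanSpace ℝ (Fin q)) (Real.sqrt (1 - a ^ 2))) := by
  have ha0 : 0 ≤ a := le_trans hb.le hba
  have hsub : {z : EuclideanSpace ℝ (Fin (q + 1)) | ‖z‖ = 1 ∧ a < z (Fin.last q)} ⊆
      sChart q '' closedBall 0 (Real.sqrt (1 - a ^ 2)) := by
    rintro z ⟨hz1, hz2⟩
    exact sChart_cover ha0 hz1 hz2
  have hsub2 : sChart q '' closedBall 0 (Real.sqrt (1 - a ^ 2)) ⊆
      sChart q '' closedBall 0 (Real.sqrt (1 - b ^ 2)) := by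
    apply image_mono
    apply closedBall_subset_closedBall
    apply Real.sqrt_le_sqrt
    nlinarith
  have hlip : LipschitzOnWith (b⁻¹).toNNReal (sChart q)
      (closedBall (0 : EuclideanSpace ℝ (Fin q)) (Real.sqrt (1 - b ^ 2))) := by
    rw [lipschitzOnWith_iff_dist_le_mul]
    intro u hu v hv
    rw [Real.coe_toNNReal _ (by positivity)]
    exact sChart_lip hb hb1 u hu v hv
  calc μH[((q:ℕ) : ℝ)] {z : EuclideanSpace ℝ (Fin (q + 1)) | ‖z‖ = 1 ∧ a < z (Fin.last q)}
      ≤ μH[((q:ℕ) : ℝ)] (sChart q '' closedBall 0 (Real.sqrt (1 - a ^ 2))) := measure_mono hsub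
    _ ≤ ((b⁻¹).toNNReal : ℝ≥0∞) ^ (q : ℝ) *
          μH[(q : ℝ)] (closedBall (0 : EuclideanSpace ℝ (Fin q)) (Real.sqrt (1 - a ^ 2))) := by
        apply LipschitzOnWith.hausdorffMeasure_image_le _ (by positivity)
        exact hlip.mono (closedBall_subset_closedBall (Real.sqrt_le_sqrt (by nlinarith)))
    _ = (ENNReal.ofReal b⁻¹) ^ (q : ℝ) *
          μH[(q : ℝ)] (closedBall (0 : EuclideanSpace ℝ (Fin q)) (Real.sqrt (1 - a ^ 2))) := rfl

lemma cap_general (q : ℕ) (hq : 2 ≤ q) : ∃ A > (0 : ℝ),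
    ∀ ξ : EuclideanSpace ℝ (Fin (q + 1)), ‖ξ‖ = 1 → ∀ r : ℝ, 0 < r →
      μH[(q : ℝ)] {z : EuclideanSpace ℝ (Fin (q + 1)) | ‖z‖ = 1 ∧ Real.arccos ⟪z, ξ⟫ < r} ≤
        ENNReal.ofReal (A * r ^ 2) := by
  obtain ⟨V, hV, hVb⟩ := ball_meas q
  have hcos1 : 0 < Real.cos 1 :=
    Real.cos_pos_of_mem_Ioo ⟨by nlinarith [Real.pi_gt_three], by nlinarith [Real.pi_gt_three]⟩
  have hsq1_pos : 0 < (Real.sqrt ((q : ℝ) + 1))⁻¹ := by positivity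
  set b : ℝ := min (Real.cos 1) (Real.sqrt ((q : ℝ) + 1))⁻¹ / 2 with hbdef
  have hb : 0 < b := by
    have := lt_min hcos1 hsq1_pos
    positivity
  have hb1 : b < 1 := by
    have h1 : Real.cos 1 ≤ 1 := Real.cos_le_one 1
    have h2 : min (Real.cos 1) (Real.sqrt ((q : ℝ) + 1))⁻¹ ≤ Real.cos 1 := min_le_left _ _
    rw [hbdef]; linarith
  -- a uniform bound for caps in terms of the inner-product threshold
  have capstd : ∀ a : ℝ, b ≤ a → a < 1 →
      ∀ ξ : EuclideanSpace ℝ (Fin (q + 1)), ‖ξ‖ = 1 →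
      μH[(q : ℝ)] {z : EuclideanSpace ℝ (Fin (q + 1)) | ‖z‖ = 1 ∧ a < ⟪z, ξ⟫} ≤
        ENNReal.ofReal (b⁻¹ ^ q * (V * Real.sqrt (1 - a ^ 2) ^ q)) := by
    intro a hba ha1 ξ hξ
    have ha0 : 0 ≤ a := le_trans hb.le hba
    have hc_pos : 0 < Real.sqrt (1 - a ^ 2) := Real.sqrt_pos.mpr (by nlinarith)
    calc μH[(q : ℝ)] {z : EuclideanSpace ℝ (Fin (q + 1)) | ‖z‖ = 1 ∧ a < ⟪z, ξ⟫}
        = μH[(q : ℝ)] {z : EuclideanSpace ℝ (Fin (q + 1)) | ‖z‖ = 1 ∧ a < z (Fin.last q)} :=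
          cap_transport ξ hξ a
      _ ≤ (ENNReal.ofReal b⁻¹) ^ (q : ℝ) *
            μH[(q : ℝ)] (closedBall (0 : EuclideanSpace ℝ (Fin q)) (Real.sqrt (1 - a ^ 2))) :=
          cap_std hb hb1 hba ha1
      _ ≤ (ENNReal.ofReal b⁻¹) ^ (q : ℝ) * ENNReal.ofReal (V * Real.sqrt (1 - a ^ 2) ^ q) :=
          mul_le_mul_right (hVb _ hc_pos) _
      _ = ENNReal.ofReal (b⁻¹ ^ q * (V * Real.sqrt (1 - a ^ 2) ^ q)) := by
          rw [ENNReal.rpow_natCast, ← ENNReal.ofReal_pow (by positivity),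
            ← ENNReal.ofReal_mul (by positivity)]
  -- the sphere has finite measure
  set Cb : ℝ := b⁻¹ ^ q * (V * Real.sqrt (1 - b ^ 2) ^ q) with hCbdef
  have hCb : 0 < Cb := by
    have h1 : 0 < Real.sqrt (1 - b ^ 2) := Real.sqrt_pos.mpr (by nlinarith)
    positivity
  have hsph : μH[(q : ℝ)] {z : EuclideanSpace ℝ (Fin (q + 1)) | ‖z‖ = 1} ≤
      ENNReal.ofReal ((2 * (q + 1)) * Cb) := by
    set e : Fin (q + 1) × Bool → EuclideanSpace ℝ (Fin (q + 1)) :=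
      fun x => EuclideanSpace.single x.1 (if x.2 then 1 else -1) with hedef
    have hen : ∀ x, ‖e x‖ = 1 := by
      rintro ⟨i, _ | _⟩ <;> simp [hedef]
    have hcover : {z : EuclideanSpace ℝ (Fin (q + 1)) | ‖z‖ = 1} ⊆
        ⋃ x ∈ (Finset.univ : Finset (Fin (q + 1) × Bool)),
          {z : EuclideanSpace ℝ (Fin (q + 1)) | ‖z‖ = 1 ∧ b < ⟪z, e x⟫} := by
      intro z hz
      simp only [mem_setOf_eq] at hz
      have hzsum : ∑ i, z i ^ 2 = 1 := by
        have h1 : ‖z‖ = Real.sqrt (∑ i, z i ^ 2) := by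
          rw [EuclideanSpace.norm_eq]
          congr 1
          exact Finset.sum_congr rfl fun i _ => by rw [Real.norm_eq_abs, sq_abs]
        rw [h1] at hz
        nlinarith [Real.sq_sqrt (by positivity : (0:ℝ) ≤ ∑ i, z i ^ 2)]
      have hex : ∃ i : Fin (q + 1), ((q : ℝ) + 1)⁻¹ ≤ z i ^ 2 := by
        by_contra hcon
        push_neg at hcon
        have hlt : ∑ i, z i ^ 2 < ∑ _i : Fin (q + 1), ((q : ℝ) + 1)⁻¹ :=
          Finset.sum_lt_sum_of_nonempty ⟨⟨0, by omega⟩, Finset.mem_univ _⟩ fun i _ => hcon i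
        rw [Finset.sum_const, Finset.card_univ, Fintype.card_fin] at hlt
        rw [hzsum] at hlt
        have : ((q : ℝ) + 1) ≠ 0 := by positivity
        rw [nsmul_eq_mul] at hlt
        push_cast at hlt
        rw [mul_inv_cancel₀ this] at hlt
        exact lt_irrefl _ hlt
      obtain ⟨i, hi⟩ := hex
      have habs : (Real.sqrt ((q : ℝ) + 1))⁻¹ ≤ |z i| := by
        rw [← Real.sqrt_inv, ← Real.sqrt_sq_eq_abs]
        exact Real.sqrt_le_sqrt hi
      have hbi : b < |z i| := by
        have : b < (Real.sqrt ((q : ℝ) + 1))⁻¹ := by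
          rw [hbdef]
          have := min_le_right (Real.cos 1) (Real.sqrt ((q : ℝ) + 1))⁻¹
          linarith
        linarith
      have hinner_single : ∀ (c : ℝ), ⟪z, EuclideanSpace.single i c⟫ = c * z i := by
        intro c
        rw [EuclideanSpace.inner_single_right]
        simp
      rcases le_or_gt 0 (z i) with h | h
      · refine mem_biUnion (Finset.mem_univ (i, true)) ⟨hz, ?_⟩
        have he : e (i, true) = EuclideanSpace.single i 1 := by simp [hedef]
        rw [he, hinner_single]
        rw [abs_of_nonneg h] at hbi
        linarith
      · refine mem_biUnion (Finset.mem_univ (i, false)) ⟨hz, ?_⟩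
        have he : e (i, false) = EuclideanSpace.single i (-1) := by simp [hedef]
        rw [he, hinner_single]
        rw [abs_of_neg h] at hbi
        linarith
    calc μH[(q : ℝ)] {z : EuclideanSpace ℝ (Fin (q + 1)) | ‖z‖ = 1}
        ≤ μH[(q : ℝ)] (⋃ x ∈ (Finset.univ : Finset (Fin (q + 1) × Bool)),
            {z : EuclideanSpace ℝ (Fin (q + 1)) | ‖z‖ = 1 ∧ b < ⟪z, e x⟫}) :=
          measure_mono hcover
      _ ≤ ∑ x ∈ (Finset.univ : Finset (Fin (q + 1) × Bool)),
            μH[(q : ℝ)] {z : EuclideanSpace ℝ (Fin (q + 1)) | ‖z‖ = 1 ∧ b < ⟪z, e x⟫} :=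
          measure_biUnion_finset_le _ _
      _ ≤ ∑ _x ∈ (Finset.univ : Finset (Fin (q + 1) × Bool)), ENNReal.ofReal Cb :=
          Finset.sum_le_sum fun x _ => capstd b le_rfl hb1 (e x) (hen x)
      _ = ((2 * (q + 1) : ℕ) : ℝ≥0∞) * ENNReal.ofReal Cb := by
          rw [Finset.sum_const, Finset.card_univ]
          simp [Fintype.card_prod, nsmul_eq_mul, mul_comm]
      _ = ENNReal.ofReal ((2 * (q + 1)) * Cb) := by
          rw [← ENNReal.ofReal_natCast (2 * (q + 1)), ← ENNReal.ofReal_mul (by positivity)]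
          congr 1
          push_cast
          ring
  -- combine the two regimes
  refine ⟨b⁻¹ ^ q * V + (2 * (q + 1)) * Cb, by positivity, fun ξ hξ r hr => ?_⟩
  rcases le_or_gt r 1 with hr1 | hr1
  · -- small radius : use the chart bound
    have hrπ : r ≤ Real.pi := by nlinarith [Real.pi_gt_three]
    have hcosr1 : Real.cos r < 1 := by
      have := Real.cos_lt_cos_of_nonneg_of_le_pi le_rfl hrπ hr
      simpa using this
    have hbcosr : b ≤ Real.cos r := by
      have h1 : Real.cos 1 ≤ Real.cos r := Real.cos_le_cos_of_nonneg_of_le_pi hr.le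
        (by nlinarith [Real.pi_gt_three]) hr1
      have h2 : b ≤ Real.cos 1 := by
        rw [hbdef]
        have := min_le_left (Real.cos 1) (Real.sqrt ((q : ℝ) + 1))⁻¹
        linarith
      linarith
    have hsubset : {z : EuclideanSpace ℝ (Fin (q + 1)) | ‖z‖ = 1 ∧ Real.arccos ⟪z, ξ⟫ < r} ⊆
        {z : EuclideanSpace ℝ (Fin (q + 1)) | ‖z‖ = 1 ∧ Real.cos r < ⟪z, ξ⟫} := by
      rintro z ⟨hz1, hz2⟩
      refine ⟨hz1, ?_⟩
      have hzin : |⟪z, ξ⟫| ≤ 1 := by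
        have := abs_real_inner_le_norm z ξ
        rw [hz1, hξ] at this
        simpa using this
      have h1 : Real.cos r < Real.cos (Real.arccos ⟪z, ξ⟫) :=
        Real.cos_lt_cos_of_nonneg_of_le_pi (Real.arccos_nonneg _) hrπ hz2
      rwa [Real.cos_arccos (by linarith [abs_le.mp hzin]) (by linarith [abs_le.mp hzin])] at h1
    have hsin : Real.sqrt (1 - Real.cos r ^ 2) = Real.sin r := by
      rw [show 1 - Real.cos r ^ 2 = Real.sin r ^ 2 by nlinarith [Real.sin_sq_add_cos_sq r]]
      exact Real.sqrt_sq (Real.sin_nonneg_of_nonneg_of_le_pi hr.le hrπ)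
    have hsinq : Real.sin r ^ q ≤ r ^ 2 := by
      have h1 : Real.sin r ≤ r := (Real.sin_lt hr).le
      have h2 : Real.sin r ^ q ≤ Real.sin r ^ 2 :=
        pow_le_pow_of_le_one (Real.sin_nonneg_of_nonneg_of_le_pi hr.le hrπ) (Real.sin_le_one r) hq
      have h3 : Real.sin r ^ 2 ≤ r ^ 2 :=
        pow_le_pow_left₀ (Real.sin_nonneg_of_nonneg_of_le_pi hr.le hrπ) h1 2
      linarith
    calc μH[(q : ℝ)] {z : EuclideanSpace ℝ (Fin (q + 1)) | ‖z‖ = 1 ∧ Real.arccos ⟪z, ξ⟫ < r}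
        ≤ μH[(q : ℝ)] {z : EuclideanSpace ℝ (Fin (q + 1)) | ‖z‖ = 1 ∧ Real.cos r < ⟪z, ξ⟫} :=
          measure_mono hsubset
      _ ≤ ENNReal.ofReal (b⁻¹ ^ q * (V * Real.sqrt (1 - Real.cos r ^ 2) ^ q)) :=
          capstd _ hbcosr hcosr1 ξ hξ
      _ ≤ ENNReal.ofReal ((b⁻¹ ^ q * V + (2 * (q + 1)) * Cb) * r ^ 2) := by
          apply ENNReal.ofReal_le_ofReal
          rw [hsin]
          have h4 : b⁻¹ ^ q * (V * Real.sin r ^ q) ≤ b⁻¹ ^ q * V * r ^ 2 := by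
            rw [mul_assoc (b⁻¹ ^ q) V (r ^ 2)]
            apply mul_le_mul_of_nonneg_left _ (by positivity)
            exact mul_le_mul_of_nonneg_left hsinq hV.le
          have h5 : 0 ≤ (2 * ((q : ℝ) + 1)) * Cb * r ^ 2 := by positivity
          have h6 : (b⁻¹ ^ q * V + (2 * ((q : ℝ) + 1)) * Cb) * r ^ 2 =
              b⁻¹ ^ q * V * r ^ 2 + (2 * ((q : ℝ) + 1)) * Cb * r ^ 2 := by ring
          linarith [h4, h5, h6]
  · -- large radius : the whole sphere
    calc μH[(q : ℝ)] {z : EuclideanSpace ℝ (Fin (q + 1)) | ‖z‖ = 1 ∧ Real.arccos ⟪z, ξ⟫ < r}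
        ≤ μH[(q : ℝ)] {z : EuclideanSpace ℝ (Fin (q + 1)) | ‖z‖ = 1} :=
          measure_mono fun z hz => hz.1
      _ ≤ ENNReal.ofReal ((2 * (q + 1)) * Cb) := hsph
      _ ≤ ENNReal.ofReal ((b⁻¹ ^ q * V + (2 * (q + 1)) * Cb) * r ^ 2) := by
          apply ENNReal.ofReal_le_ofReal
          have h1 : (1 : ℝ) ≤ r ^ 2 := one_le_pow₀ hr1.le
          have h2 : (0 : ℝ) ≤ b⁻¹ ^ q * V := by positivity
          have h3 : (2 * ((q : ℝ) + 1)) * Cb ≤ b⁻¹ ^ q * V + (2 * ((q : ℝ) + 1)) * Cb := by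
            linarith
          calc (2 * ((q : ℝ) + 1)) * Cb = (2 * ((q : ℝ) + 1)) * Cb * 1 := (mul_one _).symm
            _ ≤ (b⁻¹ ^ q * V + (2 * ((q : ℝ) + 1)) * Cb) * r ^ 2 :=
                mul_le_mul h3 h1 zero_le_one (by positivity)

lemma decay_integral (q : ℕ) (hq : 2 ≤ q) {s : ℝ} (hs : 2 < s) :
    ∃ D > (0 : ℝ), ∀ N : ℝ, 1 ≤ N → ∀ ξ : EuclideanSpace ℝ (Fin (q + 1)), ‖ξ‖ = 1 →
      ∫⁻ z in (sphere (0 : EuclideanSpace ℝ (Fin (q + 1))) 1 : Set _),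
          ENNReal.ofReal ((1 + N * Real.arccos ⟪z, ξ⟫) ^ (-s)) ∂μH[(q : ℝ)]
        ≤ ENNReal.ofReal (D / N ^ 2) := by
  obtain ⟨A, hA, hAb⟩ := cap_general q hq
  -- the one-dimensional integral
  set J : ℝ≥0∞ := ∫⁻ t in Ioc (0 : ℝ) 1, ENNReal.ofReal (t ^ (-(2 / s))) with hJdef
  have hint : IntegrableOn (fun t : ℝ => t ^ (-(2 / s))) (Ioc (0:ℝ) 1) := by
    have h1 : (-1 : ℝ) < -(2 / s) := by
      rw [neg_lt_neg_iff]
      rw [div_lt_one (by linarith)]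
      linarith
    have := intervalIntegral.intervalIntegrable_rpow' (a := 0) (b := 1) h1
    rwa [intervalIntegrable_iff_integrableOn_Ioc_of_le (by norm_num)] at this
  have hJfin : J ≠ ⊤ := by
    have h2 : J = ∫⁻ t in Ioc (0 : ℝ) 1, ‖(fun t : ℝ => t ^ (-(2 / s))) t‖₊ ∂volume := by
      rw [hJdef]
      apply lintegral_congr_ae
      filter_upwards [ae_restrict_mem measurableSet_Ioc] with t ht
      rw [← Real.enorm_eq_ofReal (Real.rpow_nonneg ht.1.le _), enorm_eq_nnnorm]
    rw [h2]
    exact hint.2.ne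
  refine ⟨A * (J.toReal + 1), by positivity, fun N hN ξ hξ => ?_⟩
  have hN0 : (0 : ℝ) < N := lt_of_lt_of_le one_pos hN
  set f : EuclideanSpace ℝ (Fin (q + 1)) → ℝ :=
    fun z => (1 + N * Real.arccos ⟪z, ξ⟫) ^ (-s) with hfdef
  have hbase : ∀ z : EuclideanSpace ℝ (Fin (q + 1)), 1 ≤ 1 + N * Real.arccos ⟪z, ξ⟫ := by
    intro z
    nlinarith [Real.arccos_nonneg (⟪z, ξ⟫ : ℝ), hN0.le, mul_nonneg hN0.le (Real.arccos_nonneg (⟪z, ξ⟫ : ℝ))]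
  have hfmeas : Measurable f := by
    have h1 : Measurable fun z : EuclideanSpace ℝ (Fin (q + 1)) =>
        1 + N * Real.arccos ⟪z, ξ⟫ :=
      (continuous_const.add (continuous_const.mul
        (Real.continuous_arccos.comp ((continuous_id.inner continuous_const))))).measurable
    exact h1.pow_const (-s)
  have hf1 : ∀ z, f z ≤ 1 := fun z =>
    Real.rpow_le_one_of_one_le_of_nonpos (hbase z) (by linarith)
  have hμ' := lintegral_eq_lintegral_meas_lt (μH[(q : ℝ)].restrict (sphere (0 : EuclideanSpace ℝ (Fin (q + 1))) 1))
      (ae_of_all _ fun z => Real.rpow_nonneg (by linarith [hbase z]) _) hfmeas.aemeasurable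
  rw [hμ']
  -- bound the distribution function
  have hkey : ∀ t ∈ Ioi (0 : ℝ),
      (μH[(q : ℝ)].restrict (sphere (0 : EuclideanSpace ℝ (Fin (q + 1))) 1)) {a | t < f a} ≤
        (Ioc (0:ℝ) 1).indicator
          (fun t => ENNReal.ofReal (A / N ^ 2) * ENNReal.ofReal (t ^ (-(2 / s)))) t := by
    intro t ht
    have htpos : 0 < t := ht
    have hmeas_set : MeasurableSet {a : EuclideanSpace ℝ (Fin (q + 1)) | t < f a} :=
      measurableSet_lt measurable_const hfmeas
    rcases le_or_gt t 1 with ht1 | ht1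
    · rw [indicator_of_mem (mem_Ioc.mpr ⟨htpos, ht1⟩)]
      rw [Measure.restrict_apply hmeas_set]
      set r : ℝ := (t ^ (-(1 / s)) - 1) / N with hrdef
      have hX1 : 1 ≤ t ^ (-(1 / s)) :=
        Real.one_le_rpow_of_pos_of_le_one_of_nonpos htpos ht1
          (neg_nonpos.mpr (by positivity))
      have hsub : {a : EuclideanSpace ℝ (Fin (q + 1)) | t < f a} ∩
          sphere (0 : EuclideanSpace ℝ (Fin (q + 1))) 1 ⊆
          {z : EuclideanSpace ℝ (Fin (q + 1)) | ‖z‖ = 1 ∧ Real.arccos ⟪z, ξ⟫ < r} := by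
        rintro z ⟨hzf, hzs⟩
        have hz1 : ‖z‖ = 1 := mem_sphere_zero_iff_norm.mp hzs
        refine ⟨hz1, ?_⟩
        have hzf' : t < (1 + N * Real.arccos ⟪z, ξ⟫) ^ (-s) := hzf
        set x : ℝ := 1 + N * Real.arccos ⟪z, ξ⟫ with hxdef
        have hx1 : 1 ≤ x := hbase z
        have hx0 : 0 < x := by linarith
        have h3 : t < (x ^ s)⁻¹ := by
          rwa [Real.rpow_neg hx0.le] at hzf'
        have hxs_pos : 0 < x ^ s := Real.rpow_pos_of_pos hx0 s
        have h4 : x ^ s < t⁻¹ := by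
          have := inv_strictAnti₀ htpos h3
          rwa [inv_inv] at this
        have h5 : x < t ^ (-(1 / s)) := by
          have h6 : (x ^ s) ^ (1 / s) < (t⁻¹) ^ (1 / s) :=
            Real.rpow_lt_rpow hxs_pos.le h4 (by positivity)
          rw [← Real.rpow_mul hx0.le, mul_one_div, div_self (by linarith : s ≠ 0),
            Real.rpow_one] at h6
          rwa [← Real.rpow_neg_one, ← Real.rpow_mul htpos.le, neg_one_mul] at h6
        have h7 : Real.arccos ⟪z, ξ⟫ < (t ^ (-(1 / s)) - 1) / N := by
          rw [lt_div_iff₀ hN0]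
          have : N * Real.arccos ⟪z, ξ⟫ < t ^ (-(1 / s)) - 1 := by
            rw [hxdef] at h5
            linarith
          linarith [this, mul_comm N (Real.arccos ⟪z, ξ⟫)]
        exact h7
      rcases lt_or_ge 0 r with hr0 | hr0
      · calc μH[(q : ℝ)] ({a : EuclideanSpace ℝ (Fin (q + 1)) | t < f a} ∩
              sphere (0 : EuclideanSpace ℝ (Fin (q + 1))) 1)
            ≤ μH[(q : ℝ)] {z : EuclideanSpace ℝ (Fin (q + 1)) | ‖z‖ = 1 ∧ Real.arccos ⟪z, ξ⟫ < r} :=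
              measure_mono hsub
          _ ≤ ENNReal.ofReal (A * r ^ 2) := hAb ξ hξ r hr0
          _ ≤ ENNReal.ofReal (A / N ^ 2) * ENNReal.ofReal (t ^ (-(2 / s))) := by
              rw [← ENNReal.ofReal_mul (by positivity)]
              apply ENNReal.ofReal_le_ofReal
              have h8 : r ^ 2 = (t ^ (-(1 / s)) - 1) ^ 2 / N ^ 2 := by
                rw [hrdef, div_pow]
              have h9 : (t ^ (-(1 / s)) - 1) ^ 2 ≤ t ^ (-(2 / s)) := by
                have h10 : (t ^ (-(1 / s)) - 1) ^ 2 ≤ (t ^ (-(1 / s))) ^ 2 :=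
                  pow_le_pow_left₀ (by linarith) (by linarith) 2
                have h11 : (t ^ (-(1 / s))) ^ 2 = t ^ (-(2 / s)) := by
                  rw [← Real.rpow_natCast (t ^ (-(1 / s))) 2, ← Real.rpow_mul htpos.le]
                  congr 1
                  push_cast
                  ring
                linarith
              rw [h8]
              have h12 : A / N ^ 2 * t ^ (-(2 / s)) = A * (t ^ (-(2 / s)) / N ^ 2) := by
                ring
              rw [h12]
              have h13 : (t ^ (-(1 / s)) - 1) ^ 2 / N ^ 2 ≤ t ^ (-(2 / s)) / N ^ 2 := by
                gcongr
              exact mul_le_mul_of_nonneg_left h13 hA.le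
      · have hempty : {a : EuclideanSpace ℝ (Fin (q + 1)) | t < f a} ∩
            sphere (0 : EuclideanSpace ℝ (Fin (q + 1))) 1 = ∅ := by
          rw [eq_empty_iff_forall_notMem]
          intro z hz
          have := hsub hz
          linarith [this.2, Real.arccos_nonneg (⟪z, ξ⟫ : ℝ)]
        rw [hempty, measure_empty]
        exact zero_le
    · rw [indicator_of_notMem (fun hmem => ht1.not_ge (mem_Ioc.mp hmem).2)]
      have hempty : {a : EuclideanSpace ℝ (Fin (q + 1)) | t < f a} = ∅ := by
        rw [eq_empty_iff_forall_notMem]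
        intro z hz
        exact (not_lt.mpr ((hf1 z).trans ht1.le)) (hz : t < f z)
      rw [hempty]
      simp
  calc ∫⁻ t in Ioi (0:ℝ),
        (μH[(q : ℝ)].restrict (sphere (0 : EuclideanSpace ℝ (Fin (q + 1))) 1)) {a | t < f a}
      ≤ ∫⁻ t in Ioi (0:ℝ), (Ioc (0:ℝ) 1).indicator
          (fun t => ENNReal.ofReal (A / N ^ 2) * ENNReal.ofReal (t ^ (-(2 / s)))) t :=
        setLIntegral_mono' measurableSet_Ioi hkey
    _ = ∫⁻ t in Ioc (0:ℝ) 1, ENNReal.ofReal (A / N ^ 2) * ENNReal.ofReal (t ^ (-(2 / s))) := by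
        rw [lintegral_indicator measurableSet_Ioc, Measure.restrict_restrict measurableSet_Ioc,
          inter_eq_left.mpr Ioc_subset_Ioi_self]
    _ = ENNReal.ofReal (A / N ^ 2) * J := by
        rw [hJdef]
        exact lintegral_const_mul' _ _ ENNReal.ofReal_ne_top
    _ ≤ ENNReal.ofReal (A / N ^ 2) * ENNReal.ofReal (J.toReal + 1) := by
        apply mul_le_mul_right
        conv_lhs => rw [← ENNReal.ofReal_toReal hJfin]
        exact ENNReal.ofReal_le_ofReal (by linarith)
    _ = ENNReal.ofReal (A * (J.toReal + 1) / N ^ 2) := by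
        rw [← ENNReal.ofReal_mul (by positivity), div_mul_eq_mul_div]

end SphereNeedletAux

/-- **`L^p` bound for localized functions on the sphere.**
If `ψ` satisfies the needlet-type localization bound
`|ψ(z)| ≤ κ B^{qj/2} / (1 + B^{qj/2} d(z,ξ))^τ` with `τ > 2` (where
`d(z,ξ) = arccos ⟪z,ξ⟫` is the geodesic distance and the sphere carries its surface
measure `μH[q]`), then for any real `p ≥ 1`,
`∫ |ψ(z)|^p dz ≤ C_p B^{jq(p/2-1)}` with `C_p` independent of `j` and `ξ`. -/
theorem localized_function_Lp_bound
    (q : ℕ) (hq : 2 ≤ q) (B τ κ p : ℝ) (hB : 1 < B) (hτ : 2 < τ) (hκ : 0 < κ)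
    (hp : 1 ≤ p) :
    ∃ C > (0 : ℝ), ∀ (j : ℕ) (ξ : EuclideanSpace ℝ (Fin (q + 1))),
      ξ ∈ Metric.sphere (0 : EuclideanSpace ℝ (Fin (q + 1))) 1 →
      ∀ ψ : EuclideanSpace ℝ (Fin (q + 1)) → ℝ, Measurable ψ →
      (∀ z ∈ Metric.sphere (0 : EuclideanSpace ℝ (Fin (q + 1))) 1,
        |ψ z| ≤ κ * B ^ ((q : ℝ) * j / 2) /
          (1 + B ^ ((q : ℝ) * j / 2) * Real.arccos ⟪z, ξ⟫) ^ τ) →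
      ∫ z in (Metric.sphere (0 : EuclideanSpace ℝ (Fin (q + 1))) 1 : Set _),
          |ψ z| ^ p ∂(μH[(q : ℝ)])
        ≤ C * B ^ ((j : ℝ) * q * (p / 2 - 1)) := by
  have hB0 : (0 : ℝ) < B := lt_trans one_pos hB
  have hs : 2 < τ * p := by nlinarith
  obtain ⟨D, hD, hDb⟩ := decay_integral q hq hs
  refine ⟨κ ^ p * D, by positivity, fun j ξ hξ ψ hψ hbound => ?_⟩
  set N : ℝ := B ^ ((q : ℝ) * j / 2) with hNdef
  have hN1 : 1 ≤ N := Real.one_le_rpow hB.le (by positivity)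
  have hN0 : 0 < N := lt_of_lt_of_le one_pos hN1
  have hξn : ‖ξ‖ = 1 := by rwa [mem_sphere_zero_iff_norm] at hξ
  have hxpos : ∀ z : EuclideanSpace ℝ (Fin (q + 1)), 0 < 1 + N * Real.arccos ⟪z, ξ⟫ := by
    intro z
    have h0 := Real.arccos_nonneg (⟪z, ξ⟫ : ℝ)
    nlinarith
  have hpt : ∀ z ∈ (sphere (0 : EuclideanSpace ℝ (Fin (q + 1))) 1 : Set _),
      ENNReal.ofReal (|ψ z| ^ p) ≤ ENNReal.ofReal ((κ * N) ^ p) *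
        ENNReal.ofReal ((1 + N * Real.arccos ⟪z, ξ⟫) ^ (-(τ * p))) := by
    intro z hz
    have hb := hbound z hz
    have hx0 := hxpos z
    have h1 : |ψ z| ^ p ≤ (κ * N / (1 + N * Real.arccos ⟪z, ξ⟫) ^ τ) ^ p :=
      Real.rpow_le_rpow (abs_nonneg _) hb (by linarith)
    have h2 : (κ * N / (1 + N * Real.arccos ⟪z, ξ⟫) ^ τ) ^ p =
        (κ * N) ^ p * (1 + N * Real.arccos ⟪z, ξ⟫) ^ (-(τ * p)) := by
      rw [Real.div_rpow (by positivity) (Real.rpow_nonneg hx0.le _)]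
      rw [← Real.rpow_mul hx0.le]
      rw [Real.rpow_neg hx0.le, div_eq_mul_inv]
    calc ENNReal.ofReal (|ψ z| ^ p)
        ≤ ENNReal.ofReal ((κ * N) ^ p * (1 + N * Real.arccos ⟪z, ξ⟫) ^ (-(τ * p))) :=
          ENNReal.ofReal_le_ofReal (h1.trans_eq h2)
      _ = ENNReal.ofReal ((κ * N) ^ p) *
            ENNReal.ofReal ((1 + N * Real.arccos ⟪z, ξ⟫) ^ (-(τ * p))) :=
          ENNReal.ofReal_mul (by positivity)
  have hmeas_int : AEStronglyMeasurable (fun z => |ψ z| ^ p)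
      (μH[(q : ℝ)].restrict (sphere (0 : EuclideanSpace ℝ (Fin (q + 1))) 1)) :=
    ((hψ.abs).pow_const p).aestronglyMeasurable
  rw [MeasureTheory.integral_eq_lintegral_of_nonneg_ae
    (ae_of_all _ fun z => Real.rpow_nonneg (abs_nonneg _) p) hmeas_int]
  have hchain : ∫⁻ z in (sphere (0 : EuclideanSpace ℝ (Fin (q + 1))) 1 : Set _),
      ENNReal.ofReal (|ψ z| ^ p) ∂μH[(q : ℝ)]
      ≤ ENNReal.ofReal (κ ^ p * D * B ^ ((j : ℝ) * q * (p / 2 - 1))) := by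
    calc ∫⁻ z in (sphere (0 : EuclideanSpace ℝ (Fin (q + 1))) 1 : Set _),
        ENNReal.ofReal (|ψ z| ^ p) ∂μH[(q : ℝ)]
        ≤ ∫⁻ z in (sphere (0 : EuclideanSpace ℝ (Fin (q + 1))) 1 : Set _),
            ENNReal.ofReal ((κ * N) ^ p) *
              ENNReal.ofReal ((1 + N * Real.arccos ⟪z, ξ⟫) ^ (-(τ * p))) ∂μH[(q : ℝ)] :=
          setLIntegral_mono' (isClosed_sphere.measurableSet) hpt
      _ = ENNReal.ofReal ((κ * N) ^ p) *
            ∫⁻ z in (sphere (0 : EuclideanSpace ℝ (Fin (q + 1))) 1 : Set _),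
              ENNReal.ofReal ((1 + N * Real.arccos ⟪z, ξ⟫) ^ (-(τ * p))) ∂μH[(q : ℝ)] :=
          lintegral_const_mul' _ _ ENNReal.ofReal_ne_top
      _ ≤ ENNReal.ofReal ((κ * N) ^ p) * ENNReal.ofReal (D / N ^ 2) :=
          mul_le_mul_right (hDb N hN1 ξ hξn) _
      _ = ENNReal.ofReal ((κ * N) ^ p * (D / N ^ 2)) :=
          (ENNReal.ofReal_mul (by positivity)).symm
      _ = ENNReal.ofReal (κ ^ p * D * B ^ ((j : ℝ) * q * (p / 2 - 1))) := by
          congr 1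
          have hNp2 : N ^ p / N ^ (2 : ℕ) = B ^ ((j : ℝ) * q * (p / 2 - 1)) := by
            rw [hNdef, ← Real.rpow_natCast (B ^ ((q : ℝ) * j / 2)) 2,
              ← Real.rpow_mul hB0.le, ← Real.rpow_mul hB0.le,
              ← Real.rpow_sub hB0]
            congr 1
            push_cast
            ring
          calc (κ * N) ^ p * (D / N ^ 2)
              = κ ^ p * D * (N ^ p / N ^ (2 : ℕ)) := by
                rw [Real.mul_rpow hκ.le hN0.le]
                push_cast
                ring
            _ = κ ^ p * D * B ^ ((j : ℝ) * q * (p / 2 - 1)) := by rw [hNp2]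
  exact ENNReal.toReal_le_of_le_ofReal (by positivity) hchain
end
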